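/- arXiv:1301.2192 — 12 statements merged into one kernel-verified Lean document; each statement's English description precedes it below -/
import Mathlib

section
/- Let (X, Φ) be a finite-dimensional nondegenerate bilinear space over a field F of characteristic not 2, with Φ symmetric or antisymmetric, and let γ be a semisimple isometry of X. Then the fixed point space X^γ = {x ∈ X : γx = x} is nondegenerate with respect to Φ. -/
/-- Let `(X, Φ)` be a finite-dimensional nondegenerate bilinear space over a field `F` of
characteristic not 2, with `Φ` symmetric or antisymmetric, and let `γ` be a semisimple
isometry of `X` (semisimple meaning the minimal polynomial of `γ` is squarefree).  Then the
fixed point space `X^γ = ker (γ - 1)` is nondegenerate with respect to `Φ`. -/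
theorem fixed_space_nondegenerate
    (F : Type*) [Field F] (hchar : (2 : F) ≠ 0)
    (X : Type*) [AddCommGroup X] [Module F X] [FiniteDimensional F X]
    (Φ : X →ₗ[F] X →ₗ[F] F)
    (hΦnd : ∀ x : X, (∀ y : X, Φ x y = 0) → x = 0)
    (hΦsym : (∀ x y : X, Φ x y = Φ y x) ∨ (∀ x y : X, Φ x y = - Φ y x))
    (γ : X →ₗ[F] X)
    (hγbij : Function.Bijective γ)
    (hγiso : ∀ x y : X, Φ (γ x) (γ y) = Φ x y)
    (hγss : Squarefree (minpoly F γ)) :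
    ∀ x ∈ LinearMap.ker (γ - LinearMap.id),
      (∀ y ∈ LinearMap.ker (γ - LinearMap.id), Φ x y = 0) → x = 0 := by
  intro x hx hperp
  have hxfix : γ x = x := by
    rw [LinearMap.mem_ker, LinearMap.sub_apply, LinearMap.id_apply, sub_eq_zero] at hx
    exact hx
  -- x is orthogonal to the range of γ - 1
  have horth : ∀ w : X, Φ x (γ w - w) = 0 := by
    intro w
    have h1 : Φ x (γ w) = Φ x w := by
      calc Φ x (γ w) = Φ (γ x) (γ w) := by rw [hxfix]
        _ = Φ x w := hγiso x w
    simp [map_sub, h1]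
  -- every vector decomposes as fixed + (γ w - w)
  have hdecomp : ∀ z : X, ∃ k w : X, γ k = k ∧ z = k + (γ w - w) := by
    have haev : Polynomial.aeval γ (minpoly F γ) = 0 := minpoly.aeval F γ
    have hirr : Irreducible (Polynomial.X - Polynomial.C (1 : F)) :=
      Polynomial.irreducible_X_sub_C 1
    have hXC : Polynomial.aeval γ (Polynomial.X - Polynomial.C (1 : F)) = γ - 1 := by
      simp [map_sub]
    by_cases hdvd : (Polynomial.X - Polynomial.C (1 : F)) ∣ minpoly F γ
    · obtain ⟨q, hq⟩ := hdvd
      have hnd : ¬ (Polynomial.X - Polynomial.C (1 : F)) ∣ q := by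
        intro h
        obtain ⟨r, hr⟩ := h
        refine hirr.not_isUnit (hγss _ ⟨r, ?_⟩)
        rw [hq, hr]; ring
      have hcop : IsCoprime (Polynomial.X - Polynomial.C (1 : F)) q :=
        hirr.coprime_iff_not_dvd.mpr hnd
      obtain ⟨a, b, hab⟩ := hcop
      intro z
      refine ⟨Polynomial.aeval γ (b * q) z, Polynomial.aeval γ a z, ?_, ?_⟩
      · have h0 : (γ - 1) * Polynomial.aeval γ (b * q) = 0 := by
          rw [← hXC, ← map_mul]
          have : (Polynomial.X - Polynomial.C (1 : F)) * (b * q) = b * minpoly F γ := by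
            rw [hq]; ring
          rw [this, map_mul, haev, mul_zero]
        have := congrArg (fun f : X →ₗ[F] X => f z) h0
        simp only [Module.End.mul_apply, LinearMap.zero_apply, LinearMap.sub_apply,
          Module.End.one_apply, sub_eq_zero] at this
        exact this
      · have h1 : Polynomial.aeval γ (b * q) + (γ - 1) * Polynomial.aeval γ a = 1 := by
          have hpoly : b * q + (Polynomial.X - Polynomial.C (1 : F)) * a = 1 := by
            linear_combination hab
          rw [← hXC, ← map_mul, ← map_add, hpoly, map_one]
        have := congrArg (fun f : X →ₗ[F] X => f z) h1
        simp only [LinearMap.add_apply, Module.End.mul_apply, LinearMap.sub_apply,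
          Module.End.one_apply] at this
        exact this.symm
    · have hcop : IsCoprime (Polynomial.X - Polynomial.C (1 : F)) (minpoly F γ) :=
        hirr.coprime_iff_not_dvd.mpr hdvd
      obtain ⟨a, b, hab⟩ := hcop
      intro z
      refine ⟨0, Polynomial.aeval γ a z, by simp, ?_⟩
      have h1 : (γ - 1) * Polynomial.aeval γ a = 1 := by
        have : (γ - 1) * Polynomial.aeval γ a + Polynomial.aeval γ b * Polynomial.aeval γ (minpoly F γ) = 1 := by
          have hpoly : (Polynomial.X - Polynomial.C (1 : F)) * a + b * minpoly F γ = 1 := by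
            linear_combination hab
          rw [← hXC, ← map_mul, ← map_mul, ← map_add, hpoly, map_one]
        rwa [haev, mul_zero, add_zero] at this
      have := congrArg (fun f : X →ₗ[F] X => f z) h1
      simp only [Module.End.mul_apply, LinearMap.sub_apply, Module.End.one_apply] at this
      rw [zero_add]; exact this.symm
  apply hΦnd
  intro y
  obtain ⟨k, w, hk, rfl⟩ := hdecomp y
  have hkmem : k ∈ LinearMap.ker (γ - LinearMap.id) := by
    rw [LinearMap.mem_ker, LinearMap.sub_apply, LinearMap.id_apply, sub_eq_zero]
    exact hk
  have hk' : Φ x k = 0 := hperp k hkmem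
  simp [map_add, hk', horth w]
end

section
/- Let (X, Φ) be a finite-dimensional nondegenerate bilinear space (symmetric or antisymmetric) over a field F of characteristic not 2, and let S be a set of semisimple isometries of X that pairwise commute (e.g. a torus of the isometry group). Then the common fixed point space X^S = {x ∈ X : sx = x for all s ∈ S} is nondegenerate. -/
open Polynomial

/-- An invariant submodule is invariant under any polynomial in `t`. -/
lemma aux_aeval_mem {F M : Type*} [Field F] [AddCommGroup M] [Module F M]
    (t : M →ₗ[F] M) (V : Submodule F M) (hV : ∀ v ∈ V, t v ∈ V)
    (c : F[X]) (x : M) (hx : x ∈ V) : aeval t c x ∈ V := by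
  induction c using Polynomial.induction_on' with
  | add p q hp hq => rw [map_add, LinearMap.add_apply]; exact V.add_mem hp hq
  | monomial n a =>
      rw [Polynomial.aeval_monomial, Module.End.mul_apply, Module.algebraMap_end_apply]
      refine V.smul_mem _ ?_
      induction n with
      | zero => simpa using hx
      | succ m ih => rw [pow_succ', Module.End.mul_apply]; exact hV _ ih

/-- Key decomposition for a single semisimple operator on an invariant subspace:
every `x ∈ V` is `(t y - y) + z` with `y ∈ V`, `t z = z`. -/
lemma aux_decomp {F M : Type*} [Field F] [AddCommGroup M] [Module F M]
    (t : M →ₗ[F] M) (hss : Squarefree (minpoly F t))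
    (V : Submodule F M) (hV : ∀ v ∈ V, t v ∈ V)
    (x : M) (hx : x ∈ V) :
    ∃ y z : M, y ∈ V ∧ x = (t y - y) + z ∧ t z = z := by
  set μ := minpoly F t with hμ
  have hp : Prime (X - C (1 : F)) := Polynomial.prime_X_sub_C 1
  -- find q coprime to X - 1 with μ ∣ (X - 1) * q
  obtain ⟨q, hdvd, hcop⟩ :
      ∃ q : F[X], μ ∣ (X - C 1) * q ∧ IsCoprime (X - C (1 : F)) q := by
    by_cases hdvd : (X - C (1 : F)) ∣ μ
    · obtain ⟨q, hq⟩ := hdvd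
      refine ⟨q, hq ▸ dvd_refl _, hp.coprime_iff_not_dvd.2 ?_⟩
      intro hqq
      exact hp.not_unit (hss _ (by rw [hq]; exact mul_dvd_mul_left _ hqq))
    · exact ⟨μ, Dvd.intro_left _ rfl, hp.coprime_iff_not_dvd.2 hdvd⟩
  obtain ⟨a, b, hab⟩ := hcop
  refine ⟨aeval t a x, aeval t (b * q) x, aux_aeval_mem t V hV a x hx, ?_, ?_⟩
  · have h1 : aeval t (a * (X - C 1) + b * q) x = x := by
      rw [hab]; simp
    have h2 : aeval t (a * (X - C 1)) x = t (aeval t a x) - aeval t a x := by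
      rw [mul_comm, map_mul, Module.End.mul_apply]
      simp [LinearMap.sub_apply]
    rw [map_add, LinearMap.add_apply, h2] at h1
    exact h1.symm
  · have h3 : aeval t ((X - C 1) * (b * q)) x = 0 := by
      have : (X - C (1 : F)) * (b * q) = b * ((X - C 1) * q) := by ring
      rw [this, map_mul, Module.End.mul_apply]
      obtain ⟨c, hc⟩ := hdvd
      rw [hc, map_mul, Module.End.mul_apply, minpoly.aeval]
      simp
    rw [map_mul, Module.End.mul_apply] at h3
    rw [map_mul, Module.End.mul_apply]
    exact sub_eq_zero.mp (by simpa [LinearMap.sub_apply] using h3)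

/-- Let `(X, Φ)` be a finite-dimensional nondegenerate bilinear space (symmetric or
antisymmetric) over a field `F` of characteristic not 2, and let `S` be a set of semisimple
isometries of `X` that pairwise commute.  Then the common fixed point space
`X^S = {x | ∀ s ∈ S, s x = x}` is nondegenerate. -/
theorem common_fixed_space_nondegenerate
    (F : Type*) [Field F] (hchar : (2 : F) ≠ 0)
    (X : Type*) [AddCommGroup X] [Module F X] [FiniteDimensional F X]
    (Φ : X →ₗ[F] X →ₗ[F] F)
    (hΦnd : ∀ x : X, (∀ y : X, Φ x y = 0) → x = 0)
    (hΦsym : (∀ x y : X, Φ x y = Φ y x) ∨ (∀ x y : X, Φ x y = - Φ y x))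
    (S : Set (X →ₗ[F] X))
    (hcomm : ∀ s ∈ S, ∀ t ∈ S, s ∘ₗ t = t ∘ₗ s)
    (hbij : ∀ s ∈ S, Function.Bijective s)
    (hiso : ∀ s ∈ S, ∀ x y : X, Φ (s x) (s y) = Φ x y)
    (hss : ∀ s ∈ S, Squarefree (minpoly F s)) :
    ∀ x ∈ {x : X | ∀ s ∈ S, s x = x},
      (∀ y ∈ {x : X | ∀ s ∈ S, s x = x}, Φ x y = 0) → x = 0 := by
  intro x hxW hxorth
  classical
  set U : Submodule F X := ⨆ s ∈ S, LinearMap.range (s - LinearMap.id) with hU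
  -- orthogonality: fixed vectors are orthogonal to U
  have horth : ∀ w : X, (∀ s ∈ S, s w = w) → ∀ u ∈ U, Φ w u = 0 := by
    intro w hw u hu
    have hle : U ≤ LinearMap.ker (Φ w) := by
      refine iSup₂_le fun s hs => ?_
      rintro _ ⟨y, rfl⟩
      have h1 := hiso s hs w y
      rw [hw s hs] at h1
      simp [LinearMap.sub_apply, LinearMap.id_apply, LinearMap.mem_ker, map_sub, h1]
    exact hle hu
  -- decomposition: every z is (fixed by Γ) + (element of U)
  have hstep : ∀ Γ : Finset (X →ₗ[F] X), ↑Γ ⊆ S →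
      ∀ z : X, ∃ w u : X, w + u = z ∧ u ∈ U ∧ ∀ s ∈ Γ, s w = w := by
    intro Γ
    induction Γ using Finset.induction_on with
    | empty => exact fun _ z => ⟨z, 0, by simp, U.zero_mem, by simp⟩
    | @insert t Γ ht ih =>
      intro hΓS z
      have htS : t ∈ S := hΓS (Finset.mem_insert_self t Γ)
      have hΓS' : ↑Γ ⊆ S := fun s hs => hΓS (Finset.mem_insert_of_mem hs)
      obtain ⟨w, u, hwu, hu, hwfix⟩ := ih hΓS' z
      set V : Submodule F X := ⨅ s ∈ Γ, LinearMap.ker (s - LinearMap.id) with hV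
      have hmemV : ∀ v : X, v ∈ V ↔ ∀ s ∈ Γ, s v = v := by
        intro v
        simp [hV, Submodule.mem_iInf, LinearMap.mem_ker, LinearMap.sub_apply,
          sub_eq_zero]
      have hVinv : ∀ v ∈ V, t v ∈ V := by
        intro v hv
        rw [hmemV] at hv ⊢
        intro s hs
        have hc : s (t v) = t (s v) := DFunLike.congr_fun (hcomm s (hΓS' hs) t htS) v
        rw [hc, hv s hs]
      obtain ⟨y, zf, hyV, hdec, hzfix⟩ :=
        aux_decomp t (hss t htS) V hVinv w ((hmemV w).2 hwfix)
      have htyU : t y - y ∈ U := by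
        have hr : LinearMap.range (t - LinearMap.id) ≤ U := by
          rw [hU]
          exact le_iSup₂ (f := fun s (_ : s ∈ S) => LinearMap.range (s - LinearMap.id)) t htS
        exact hr ⟨y, by simp [LinearMap.sub_apply]⟩
      have hzfV : zf ∈ V := by
        have h2 : zf = w - (t y - y) := by rw [hdec]; abel
        rw [h2]
        exact V.sub_mem ((hmemV w).2 hwfix) (V.sub_mem (hVinv y hyV) hyV)
      refine ⟨zf, (t y - y) + u, ?_, U.add_mem htyU hu, ?_⟩
      · rw [← hwu, hdec]; abel
      · intro s hs
        rcases Finset.mem_insert.mp hs with h | h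
        · rw [h]; exact hzfix
        · exact (hmemV zf).1 hzfV s h
  -- a minimal finite intersection captures the full fixed space
  have hwf : WellFoundedLT (Submodule F X) := inferInstance
  set C : Set (Submodule F X) := {V | ∃ Γ : Finset (X →ₗ[F] X), ↑Γ ⊆ S ∧
      V = ⨅ s ∈ Γ, LinearMap.ker (s - LinearMap.id)} with hC
  obtain ⟨V₀, ⟨Γ₀, hΓ₀S, hV₀⟩, hmin⟩ :=
    hwf.wf.has_min C ⟨⊤, (∅ : Finset (X →ₗ[F] X)), by simp, by simp⟩
  have hV₀fix : ∀ v ∈ V₀, ∀ s ∈ S, s v = v := by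
    intro v hv s hs
    have hle : V₀ ≤ LinearMap.ker (s - LinearMap.id) := by
      by_contra hle
      set V' : Submodule F X := ⨅ u ∈ insert s Γ₀, LinearMap.ker (u - LinearMap.id) with hV'
      have hmem : V' ∈ C := ⟨insert s Γ₀, by
        rw [Finset.coe_insert]
        exact Set.insert_subset hs hΓ₀S, rfl⟩
      have hVeq : V' = LinearMap.ker (s - LinearMap.id) ⊓ V₀ := by
        rw [hV', hV₀, Finset.iInf_insert]
      have hlt : V' < V₀ := by
        rw [hVeq]
        refine lt_of_le_of_ne inf_le_right fun h => hle ?_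
        rw [← h]
        exact inf_le_left
      exact hmin V' hmem hlt
    have := hle hv
    rw [LinearMap.mem_ker, LinearMap.sub_apply, LinearMap.id_apply, sub_eq_zero] at this
    exact this
  -- conclude
  apply hΦnd
  intro z
  obtain ⟨w, u, hwu, hu, hwfix⟩ := hstep Γ₀ hΓ₀S z
  have hwV₀ : w ∈ V₀ := by
    rw [hV₀, Submodule.mem_iInf]
    intro s
    rw [Submodule.mem_iInf]
    intro hs
    rw [LinearMap.mem_ker, LinearMap.sub_apply, LinearMap.id_apply, sub_eq_zero, hwfix s hs]
  have hwfixS : ∀ s ∈ S, s w = w := hV₀fix w hwV₀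
  rw [← hwu, map_add]
  rw [hxorth w hwfixS, horth x hxW u hu, add_zero]
end

section
/- With notation as above, let n(ξ₁, η₁) and n(ξ₂, η₂) be elements of the unipotent radical (i.e., pairs satisfying η_i + η_i* + ξ_i ξ_i* = 0) with η₁, η₂ invertible, and suppose m = m(g,h) ∈ G × H acts by (ξ, η) ↦ (gξh^{-1}, gηg*). Then Norm(gξh^{-1}, gηg*) = h · Norm(ξ, η) · h^{-1}. In particular, Norm intertwines the adjoint action of M on N' with conjugation on H. -/
/-- Norm equivariance: with `m(g,h) ∈ M ≅ GL(W) × H` acting on pairs by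
`(ξ, η) ↦ (g ξ h⁻¹, g η g*)` (where `g* : W' → W'` is the adjoint of `g` via the pairing
`Bp` between `W'` and `W`, and `h` is an isometry of `(X, Φ)`), we have
`Norm(g ξ h⁻¹, g η g*) = h ∘ Norm(ξ, η) ∘ h⁻¹`, where `Norm(ξ₀,η₀) = 1 + ξ₀* η₀⁻¹ ξ₀`.
Here `ξ1s` is the adjoint of `ξ₁ = g ξ h⁻¹` and `η₁` is the (invertible) map `g η g*`. -/
theorem norm_equivariance
    (F : Type*) [Field F] (hchar : (2 : F) ≠ 0)
    (W W' X : Type*)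
    [AddCommGroup W] [Module F W] [FiniteDimensional F W]
    [AddCommGroup W'] [Module F W'] [FiniteDimensional F W']
    [AddCommGroup X] [Module F X] [FiniteDimensional F X]
    (ε : F) (hε : ε = 1 ∨ ε = -1)
    (Bp : W' →ₗ[F] W →ₗ[F] F)
    (hBp1 : ∀ w' : W', (∀ w : W, Bp w' w = 0) → w' = 0)
    (hBp2 : ∀ w : W, (∀ w' : W', Bp w' w = 0) → w = 0)
    (Φ : X →ₗ[F] X →ₗ[F] F)
    (hΦnd : ∀ x : X, (∀ y : X, Φ x y = 0) → x = 0)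
    (hΦε : ∀ x y : X, Φ x y = ε * Φ y x)
    (ξ : X →ₗ[F] W) (ξs : W' →ₗ[F] X)
    (hξs : ∀ (w' : W') (x : X), Φ (ξs w') x = Bp w' (ξ x))
    (η : W' ≃ₗ[F] W) (ηs : W' →ₗ[F] W)
    (hηs : ∀ w₁' w₂' : W', ε * Bp w₂' (ηs w₁') = Bp w₁' (η w₂'))
    (hrel : ∀ w' : W', η w' + ηs w' + ξ (ξs w') = 0)
    -- the element m(g, h) of the Levi M ≅ G × H :
    (g : W ≃ₗ[F] W) (gs : W' →ₗ[F] W')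
    (hgs : ∀ (w' : W') (w : W), Bp (gs w') w = Bp w' (g w))
    (h : X ≃ₗ[F] X) (hiso : ∀ x y : X, Φ (h x) (h y) = Φ x y)
    -- the transported pair (ξ₁, η₁) = (g ξ h⁻¹, g η g*) together with the adjoint of ξ₁ :
    (ξ1s : W' →ₗ[F] X)
    (hξ1s : ∀ (w' : W') (x : X), Φ (ξ1s w') x = Bp w' (g (ξ (h.symm x))))
    (η1 : W' ≃ₗ[F] W)
    (hη1 : ∀ w' : W', η1 w' = g (η (gs w'))) :
    ∀ x : X, x + ξ1s (η1.symm (g (ξ (h.symm x)))) =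
      h (h.symm x + ξs (η.symm (ξ (h.symm x)))) := by
  have key : ∀ a b : X, (∀ z : X, Φ a z = Φ b z) → a = b := by
    intro a b hab
    have h0 : a - b = 0 := hΦnd (a - b) (fun z => by
      simp only [map_sub, LinearMap.sub_apply, hab z, sub_self])
    exact sub_eq_zero.mp h0
  intro x
  set y := h.symm x with hy
  set w' := η1.symm (g (ξ y)) with hw'
  have hgw : gs w' = η.symm (ξ y) := by
    have h2 : g (η (gs w')) = g (ξ y) := by rw [← hη1]; simp [hw']
    have h3 : η (gs w') = ξ y := g.injective h2
    rw [← h3, η.symm_apply_apply]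
  have hmain : ξ1s w' = h (ξs (η.symm (ξ y))) := by
    rw [← hgw]
    apply key
    intro z
    have h1 : Φ (h (ξs (gs w'))) z = Φ (ξs (gs w')) (h.symm z) := by
      conv_lhs => rw [show z = h (h.symm z) by simp, hiso]
    rw [h1, hξs, hgs, hξ1s]
  rw [map_add, hmain, h.apply_symm_apply]
end

section
/- (Shahidi's Lemma) Let V, W, W', X be as above and ξ : X → W a linear map. If g ∈ GL(X) satisfies ξξ* = (ξg)(ξg)*, then there exists an isometry h ∈ H = Isom(X, Φ|_X) such that ξg = ξh. -/
open LinearMap (BilinForm)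
open Module Submodule

namespace ShahidiWitt

variable {F : Type*} [Field F] {X : Type*} [AddCommGroup X] [Module F X]

/-- Reflection in an anisotropic vector, for a symmetric form. -/
lemma reflection_exists (Φ : BilinForm F X) (hsymm : ∀ x y, Φ x y = Φ y x)
    (z : X) (hz : Φ z z ≠ 0) :
    ∃ ρ : X ≃ₗ[F] X, (∀ x y, Φ (ρ x) (ρ y) = Φ x y) ∧
      ∀ x, ρ x = x - ((2 * Φ z x) / Φ z z) • z := by
  set r : X →ₗ[F] X := LinearMap.id - LinearMap.smulRight ((2 / Φ z z) • (Φ z)) z with hr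
  have hrx : ∀ x, r x = x - ((2 * Φ z x) / Φ z z) • z := by
    intro x
    simp [hr, LinearMap.sub_apply, LinearMap.smulRight_apply, LinearMap.smul_apply]
    ring_nf
  have hinv : Function.Involutive r := by
    intro x
    rw [hrx, hrx]
    rw [map_sub, map_smul, smul_eq_mul, sub_sub, ← add_smul]
    have hc : 2 * Φ z x / Φ z z +
        2 * (Φ z x - 2 * Φ z x / Φ z z * Φ z z) / Φ z z = 0 := by
      field_simp
      ring
    rw [hc, zero_smul, sub_zero]
  refine ⟨LinearEquiv.ofInvolutive r hinv, ?_, fun x => hrx x⟩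
  intro x y
  show Φ (r x) (r y) = Φ x y
  rw [hrx, hrx]
  simp only [map_sub, map_smul, LinearMap.sub_apply, LinearMap.smul_apply, smul_eq_mul]
  rw [hsymm x z]
  field_simp
  ring

/-- Symplectic transvection for an alternating form. -/
lemma transvection_exists (Φ : BilinForm F X) (halt : ∀ x, Φ x x = 0)
    (hskew : ∀ x y, Φ x y = - Φ y x) (a : X) (c : F) :
    ∃ ρ : X ≃ₗ[F] X, (∀ x y, Φ (ρ x) (ρ y) = Φ x y) ∧ ∀ x, ρ x = x + (c * Φ a x) • a := by
  set t : X →ₗ[F] X := LinearMap.id + LinearMap.smulRight (c • (Φ a)) a with ht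
  set t' : X →ₗ[F] X := LinearMap.id + LinearMap.smulRight ((-c) • (Φ a)) a with ht'
  have htx : ∀ x, t x = x + (c * Φ a x) • a := by
    intro x; simp [ht, LinearMap.add_apply, LinearMap.smulRight_apply, LinearMap.smul_apply,
      smul_eq_mul]
  have ht'x : ∀ x, t' x = x + (-c * Φ a x) • a := by
    intro x; simp [ht', LinearMap.add_apply, LinearMap.smulRight_apply, LinearMap.smul_apply,
      smul_eq_mul]
  have key : ∀ x, Φ a (x + (c * Φ a x) • a) = Φ a x := by
    intro x; simp [map_add, map_smul, halt a, smul_eq_mul]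
  have h1 : t' ∘ₗ t = LinearMap.id := by
    ext x
    simp only [LinearMap.comp_apply, LinearMap.id_apply]
    rw [htx, ht'x, key, add_assoc, ← add_smul]
    have : c * Φ a x + -c * Φ a x = 0 := by ring
    rw [this, zero_smul, add_zero]
  have h2 : t ∘ₗ t' = LinearMap.id := by
    ext x
    simp only [LinearMap.comp_apply, LinearMap.id_apply]
    have key' : Φ a (x + (-c * Φ a x) • a) = Φ a x := by
      simp [map_add, map_smul, halt a, smul_eq_mul]
    rw [ht'x, htx, key', add_assoc, ← add_smul]
    have : -c * Φ a x + c * Φ a x = 0 := by ring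
    rw [this, zero_smul, add_zero]
  refine ⟨LinearEquiv.ofLinear t t' h2 h1, ?_, fun x => htx x⟩
  intro x y
  show Φ (t x) (t y) = Φ x y
  rw [htx, htx]
  simp only [map_add, map_smul, LinearMap.add_apply, LinearMap.smul_apply, smul_eq_mul]
  rw [halt a, hskew x a]
  ring

section Symplectic
variable (Φ : BilinForm F X) (hnd : Φ.Nondegenerate) (halt : ∀ x, Φ x x = 0)
  (hskew : ∀ x y, Φ x y = - Φ y x)

include halt hskew in
lemma symp_move0 (u w : X) (h : Φ u w ≠ 0) :
    ∃ ρ : X ≃ₗ[F] X, (∀ x y, Φ (ρ x) (ρ y) = Φ x y) ∧ ρ u = w := by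
  obtain ⟨ρ, hiso, hρ⟩ := transvection_exists Φ halt hskew (w - u) (-(Φ u w)⁻¹)
  refine ⟨ρ, hiso, ?_⟩
  rw [hρ]
  have h1 : Φ (w - u) u = -(Φ u w) := by
    rw [map_sub, LinearMap.sub_apply, halt u, sub_zero, hskew u w]; ring
  rw [h1]
  have h2 : -(Φ u w)⁻¹ * -(Φ u w) = 1 := by field_simp
  rw [h2, one_smul]
  abel

include hnd halt hskew in
lemma symp_move (u w : X) (hu : u ≠ 0) (hw : w ≠ 0) :
    ∃ ρ : X ≃ₗ[F] X, (∀ x y, Φ (ρ x) (ρ y) = Φ x y) ∧ ρ u = w := by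
  by_cases h : Φ u w ≠ 0
  · exact symp_move0 Φ halt hskew u w h
  push_neg at h
  have hz1 : ∃ z, Φ u z ≠ 0 := by
    by_contra hc; push_neg at hc; exact hu (hnd.1 u hc)
  have hz2 : ∃ z, Φ w z ≠ 0 := by
    by_contra hc; push_neg at hc; exact hw (hnd.1 w hc)
  obtain ⟨z1, hz1⟩ := hz1
  obtain ⟨z2, hz2⟩ := hz2
  have hz2' : Φ z2 w ≠ 0 := by rw [hskew]; simpa using hz2
  have hstep : ∃ z, Φ u z ≠ 0 ∧ Φ z w ≠ 0 := by
    by_cases ha : Φ u z2 ≠ 0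
    · exact ⟨z2, ha, hz2'⟩
    push_neg at ha
    by_cases hb : Φ z1 w ≠ 0
    · exact ⟨z1, hz1, hb⟩
    push_neg at hb
    refine ⟨z1 + z2, ?_, ?_⟩
    · rw [map_add]; rw [ha]; simpa using hz1
    · rw [map_add, LinearMap.add_apply, hb, zero_add]; exact hz2'
  obtain ⟨z, hza, hzb⟩ := hstep
  obtain ⟨ρ1, hiso1, hρ1⟩ := symp_move0 Φ halt hskew u z hza
  obtain ⟨ρ2, hiso2, hρ2⟩ := symp_move0 Φ halt hskew z w hzb
  refine ⟨ρ1.trans ρ2, fun x y => ?_, ?_⟩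
  · simp only [LinearEquiv.trans_apply]; rw [hiso2, hiso1]
  · simp only [LinearEquiv.trans_apply, hρ1, hρ2]

include halt hskew in
lemma symp_fix_move1 (u v v'' : X) (huv : Φ u v'' = Φ u v) (hvv : Φ v v'' ≠ 0) :
    ∃ ρ : X ≃ₗ[F] X, (∀ x y, Φ (ρ x) (ρ y) = Φ x y) ∧ ρ u = u ∧ ρ v = v'' := by
  obtain ⟨ρ, hiso, hρ⟩ := transvection_exists Φ halt hskew (v'' - v) (-(Φ v v'')⁻¹)
  refine ⟨ρ, hiso, ?_, ?_⟩
  · rw [hρ]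
    have h1 : Φ (v'' - v) u = 0 := by
      rw [hskew, map_sub, huv]; ring
    rw [h1, mul_zero, zero_smul, add_zero]
  · rw [hρ]
    have h1 : Φ (v'' - v) v = -(Φ v v'') := by
      rw [map_sub, LinearMap.sub_apply, halt v, sub_zero, hskew v v'']; ring
    rw [h1]
    have h2 : -(Φ v v'')⁻¹ * -(Φ v v'') = 1 := by field_simp
    rw [h2, one_smul]
    abel

include halt hskew in
lemma symp_fix_move (u v v'' : X) (h1 : Φ u v = 1) (h2 : Φ u v'' = 1) :
    ∃ ρ : X ≃ₗ[F] X, (∀ x y, Φ (ρ x) (ρ y) = Φ x y) ∧ ρ u = u ∧ ρ v = v'' := by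
  by_cases hvv : Φ v v'' ≠ 0
  · exact symp_fix_move1 Φ halt hskew u v v'' (by rw [h1, h2]) hvv
  push_neg at hvv
  have hm1 : Φ u (u + v) = Φ u v := by rw [map_add, halt u, zero_add]
  have hm2 : Φ v (u + v) ≠ 0 := by
    rw [map_add, halt v, add_zero, hskew v u, h1]
    simp
  obtain ⟨ρ1, hiso1, hρ1u, hρ1v⟩ := symp_fix_move1 Φ halt hskew u v (u + v) hm1 hm2
  have hm3 : Φ u (u + v) = Φ u v'' := by rw [map_add, halt u, zero_add, h1, h2]
  have hm4 : Φ (u + v) v'' ≠ 0 := by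
    rw [LinearMap.map_add₂, hvv, add_zero, h2]
    exact one_ne_zero
  obtain ⟨ρ2, hiso2, hρ2u, hρ2v⟩ := symp_fix_move1 Φ halt hskew u (u + v) v'' hm3.symm hm4
  refine ⟨ρ1.trans ρ2, fun x y => ?_, ?_, ?_⟩
  · simp only [LinearEquiv.trans_apply]; rw [hiso2, hiso1]
  · simp only [LinearEquiv.trans_apply, hρ1u, hρ2u]
  · simp only [LinearEquiv.trans_apply, hρ1v, hρ2v]

include hnd halt hskew in
lemma symp_pair_move (u v u' v' : X) (hu : u ≠ 0) (hu' : u' ≠ 0)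
    (h1 : Φ u v = 1) (h2 : Φ u' v' = 1) :
    ∃ ρ : X ≃ₗ[F] X, (∀ x y, Φ (ρ x) (ρ y) = Φ x y) ∧ ρ u' = u ∧ ρ v' = v := by
  obtain ⟨ρ1, hiso1, hρ1⟩ := symp_move Φ hnd halt hskew u' u hu' hu
  have hv1 : Φ u (ρ1 v') = 1 := by rw [← hρ1, hiso1, h2]
  obtain ⟨ρ2, hiso2, hρ2u, hρ2v⟩ := symp_fix_move Φ halt hskew u (ρ1 v') v hv1 h1
  refine ⟨ρ1.trans ρ2, fun x y => ?_, ?_, ?_⟩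
  · simp only [LinearEquiv.trans_apply]; rw [hiso2, hiso1]
  · simp only [LinearEquiv.trans_apply, hρ1, hρ2u]
  · simp only [LinearEquiv.trans_apply, hρ2v]

end Symplectic

universe u

variable (F) in
/-- The statement of Witt's extension theorem at dimension at most `n`. -/
def WittStmt (ε : F) (n : ℕ) : Prop :=
  ∀ (X : Type u) [AddCommGroup X] [Module F X] [FiniteDimensional F X]
    (Φ : BilinForm F X), (∀ x y : X, Φ x y = ε * Φ y x) → Φ.Nondegenerate →
    finrank F X ≤ n →
    ∀ (U : Submodule F X) (σ : X →ₗ[F] X),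
      (∀ u ∈ U, σ u = 0 → u = 0) →
      (∀ u ∈ U, ∀ v ∈ U, Φ (σ u) (σ v) = Φ u v) →
      ∃ τ : X ≃ₗ[F] X, (∀ x y : X, Φ (τ x) (τ y) = Φ x y) ∧ ∀ u ∈ U, τ u = σ u

lemma descend {X : Type u} [AddCommGroup X] [Module F X] [FiniteDimensional F X]
    {ε : F} (hε2 : ε * ε = 1)
    (Φ : BilinForm F X) (hsym : ∀ x y : X, Φ x y = ε * Φ y x) (hnd : Φ.Nondegenerate)
    {n : ℕ} (prev : WittStmt.{u} F ε n) (hrank : finrank F X ≤ n + 1)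
    (U : Submodule F X) (σ1 : X →ₗ[F] X)
    (hinj : ∀ u ∈ U, σ1 u = 0 → u = 0)
    (hiso : ∀ u ∈ U, ∀ v ∈ U, Φ (σ1 u) (σ1 v) = Φ u v)
    (P : Submodule F X) (hPU : P ≤ U) (hPne : P ≠ ⊥)
    (hPnd : (Φ.restrict P).Nondegenerate)
    (hfix : ∀ p ∈ P, σ1 p = p) :
    ∃ τ : X ≃ₗ[F] X, (∀ x y : X, Φ (τ x) (τ y) = Φ x y) ∧ ∀ u ∈ U, τ u = σ1 u := by
  have hrefl : Φ.IsRefl := fun x y h => by rw [hsym y x, h, mul_zero]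
  set X' : Submodule F X := Φ.orthogonal P with hX'
  have hcompl : IsCompl P X' :=
    LinearMap.BilinForm.isCompl_orthogonal_of_restrict_nondegenerate hrefl hPnd
  have horth1 : ∀ (p : P) (q : X'), Φ (p : X) (q : X) = 0 := fun p q =>
    (LinearMap.BilinForm.mem_orthogonal_iff.mp q.2) p p.2
  have horth2 : ∀ (p : P) (q : X'), Φ (q : X) (p : X) = 0 := fun p q => by
    rw [hsym, horth1, mul_zero]
  have hX'nd : (Φ.restrict X').Nondegenerate := by
    rw [LinearMap.BilinForm.restrict_nondegenerate_iff_isCompl_orthogonal hrefl,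
      LinearMap.BilinForm.orthogonal_orthogonal hnd hrefl P]
    exact hcompl.symm
  have hres : ∀ a b : X', (Φ.restrict X') a b = Φ (a : X) (b : X) := fun a b => rfl
  have hsym' : ∀ a b : X', (Φ.restrict X') a b = ε * (Φ.restrict X') b a := fun a b => by
    rw [hres, hres]; exact hsym _ _
  have hle : finrank F X' ≤ n := by
    have h1 : finrank F X' = finrank F X - finrank F P :=
      LinearMap.BilinForm.finrank_orthogonal hnd P
    have h2 : 1 ≤ finrank F P := Submodule.one_le_finrank_iff.mpr hPne
    have h3 : finrank F P ≤ finrank F X := Submodule.finrank_le P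
    omega
  set π : X →ₗ[F] X' := X'.linearProjOfIsCompl P hcompl.symm with hπ
  set σ2 : X' →ₗ[F] X' := π ∘ₗ σ1 ∘ₗ X'.subtype with hσ2
  have hmem : ∀ x : X', (x : X) ∈ U → σ1 (x : X) ∈ X' := by
    intro x hx
    show σ1 (x : X) ∈ Φ.orthogonal P
    rw [LinearMap.BilinForm.mem_orthogonal_iff]
    intro p hp
    show Φ p (σ1 (x : X)) = 0
    rw [← hfix p hp, hiso p (hPU hp) (x : X) hx, horth1 ⟨p, hp⟩ x]
  have hkey : ∀ (x : X') (hx : (x : X) ∈ U), ((σ2 x : X') : X) = σ1 (x : X) := by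
    intro x hx
    have h0 := Submodule.linearProjOfIsCompl_apply_left hcompl.symm
      (⟨σ1 (x : X), hmem x hx⟩ : X')
    have : σ2 x = ⟨σ1 (x : X), hmem x hx⟩ := h0
    rw [this]
  have hinj2 : ∀ a ∈ U.comap X'.subtype, σ2 a = 0 → a = 0 := by
    intro a ha h0
    have : σ1 (a : X) = 0 := by rw [← hkey a ha, h0]; rfl
    exact Subtype.ext (hinj (a : X) ha this)
  have hiso2 : ∀ a ∈ U.comap X'.subtype, ∀ b ∈ U.comap X'.subtype,
      (Φ.restrict X') (σ2 a) (σ2 b) = (Φ.restrict X') a b := by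
    intro a ha b hb
    rw [hres, hres, hkey a ha, hkey b hb]
    exact hiso (a : X) ha (b : X) hb
  obtain ⟨τ', hiso', hagr'⟩ := prev X' (Φ.restrict X') hsym' hX'nd hle
    (U.comap X'.subtype) σ2 hinj2 hiso2
  set e := Submodule.prodEquivOfIsCompl P X' hcompl with he
  set τ : X ≃ₗ[F] X := e.symm.trans (((LinearEquiv.refl F P).prodCongr τ').trans e) with hτ
  have hτP : ∀ p : P, τ (p : X) = (p : X) := by
    intro p
    simp [hτ, he, LinearEquiv.trans_apply, Submodule.prodEquivOfIsCompl_symm_apply_left,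
      LinearEquiv.prodCongr_apply]
  have hτX' : ∀ q : X', τ (q : X) = (τ' q : X) := by
    intro q
    simp [hτ, he, LinearEquiv.trans_apply, Submodule.prodEquivOfIsCompl_symm_apply_right,
      LinearEquiv.prodCongr_apply]
  have hdecomp : ∀ x : X, ((P.linearProjOfIsCompl X' hcompl x : P) : X) + ((π x : X') : X) = x :=
    fun x => Submodule.projection_add_projection_eq_self hcompl x
  have hτx : ∀ x : X, τ x = ((P.linearProjOfIsCompl X' hcompl x : P) : X) + ((τ' (π x) : X') : X) := by
    intro x
    conv_lhs => rw [← hdecomp x]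
    rw [map_add, hτP, hτX']
  have hΦexpand : ∀ (p p' : P) (q q' : X'),
      Φ ((p : X) + (q : X)) ((p' : X) + (q' : X)) = Φ (p : X) (p' : X) + Φ (q : X) (q' : X) := by
    intro p p' q q'
    simp only [map_add, LinearMap.add_apply]
    rw [horth1 p q', horth2 p' q]
    ring
  refine ⟨τ, ?_, ?_⟩
  · intro x y
    rw [hτx x, hτx y, hΦexpand]
    conv_rhs => rw [← hdecomp x, ← hdecomp y]
    rw [hΦexpand]
    congr 1
    rw [← hres, ← hres, hiso']
  · intro u hu
    have hpu : ((P.linearProjOfIsCompl X' hcompl u : P) : X) ∈ U :=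
      hPU (P.linearProjOfIsCompl X' hcompl u).2
    have hqu : ((π u : X') : X) ∈ U := by
      have := hdecomp u
      have h2 : ((π u : X') : X) = u - ((P.linearProjOfIsCompl X' hcompl u : P) : X) := by
        rw [eq_sub_iff_add_eq, add_comm]; exact this
      rw [h2]
      exact Submodule.sub_mem U hu hpu
    have hqu' : (π u : X') ∈ U.comap X'.subtype := hqu
    rw [hτx u, hagr' (π u) hqu', hkey (π u) hqu]
    conv_rhs => rw [← hdecomp u, map_add, hfix _ (P.linearProjOfIsCompl X' hcompl u).2]

/-- Reflection-based move for symmetric forms. -/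
lemma sym_move (Φ : BilinForm F X) (hchar : (2:F) ≠ 0) (hsymm : ∀ x y : X, Φ x y = Φ y x)
    (u w : X) (hu : Φ u u ≠ 0) (heq : Φ w w = Φ u u) :
    ∃ ρ : X ≃ₗ[F] X, (∀ x y, Φ (ρ x) (ρ y) = Φ x y) ∧ ρ w = u := by
  by_cases ha : Φ (u - w) (u - w) ≠ 0
  · obtain ⟨ρ, hiso, hρ⟩ := reflection_exists Φ hsymm (u - w) ha
    refine ⟨ρ, hiso, ?_⟩
    rw [hρ]
    have hzw : Φ (u - w) w = Φ u w - Φ u u := by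
      rw [map_sub, LinearMap.sub_apply, heq]
    have hzz : Φ (u - w) (u - w) = -2 * (Φ u w - Φ u u) := by
      simp only [map_sub, LinearMap.sub_apply]
      rw [heq, hsymm w u]; ring
    have hne : Φ u w - Φ u u ≠ 0 := by
      intro h0; apply ha; rw [hzz, h0, mul_zero]
    rw [hzw, hzz]
    have : 2 * (Φ u w - Φ u u) / (-2 * (Φ u w - Φ u u)) = -1 := by
      field_simp
    rw [this]
    simp
  · push_neg at ha
    have hb : Φ (u + w) (u + w) ≠ 0 := by
      intro hb0
      have hsum : Φ (u - w) (u - w) + Φ (u + w) (u + w) = 2 * (2 * Φ u u) := by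
        simp only [map_sub, map_add, LinearMap.sub_apply, LinearMap.add_apply]
        rw [heq, hsymm w u]; ring
      rw [ha, hb0, add_zero] at hsum
      exact hu (by
        have h2 : (2:F) * (2 * Φ u u) = 0 := hsum.symm
        rcases mul_eq_zero.mp h2 with h | h
        · exact absurd h hchar
        · rcases mul_eq_zero.mp h with h' | h'
          · exact absurd h' hchar
          · exact h')
    obtain ⟨ρ1, hiso1, hρ1⟩ := reflection_exists Φ hsymm (u + w) hb
    obtain ⟨ρ2, hiso2, hρ2⟩ := reflection_exists Φ hsymm u hu
    have hmove1 : ρ1 w = -u := by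
      rw [hρ1]
      have hzw : Φ (u + w) w = Φ u w + Φ u u := by
        rw [map_add, LinearMap.add_apply, heq]
      have hzz : Φ (u + w) (u + w) = 2 * (Φ u w + Φ u u) := by
        simp only [map_add, LinearMap.add_apply]
        rw [heq, hsymm w u]; ring
      have hne : Φ u w + Φ u u ≠ 0 := by
        intro h0; apply hb; rw [hzz, h0, mul_zero]
      rw [hzw, hzz]
      have : 2 * (Φ u w + Φ u u) / (2 * (Φ u w + Φ u u)) = 1 := by field_simp
      rw [this, one_smul]
      abel
    have hmove2 : ρ2 (-u) = u := by
      rw [hρ2]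
      rw [map_neg]
      have : 2 * (-(Φ u u)) / Φ u u = -2 := by field_simp
      rw [this]
      simp only [neg_smul]
      abel_nf
      module
    refine ⟨ρ1.trans ρ2, fun x y => ?_, ?_⟩
    · simp only [LinearEquiv.trans_apply]; rw [hiso2, hiso1]
    · simp only [LinearEquiv.trans_apply, hmove1, hmove2]

theorem witt (hchar : (2:F) ≠ 0) (ε : F) (hε : ε = 1 ∨ ε = -1) :
    ∀ n : ℕ, WittStmt.{u} F ε n := by
  intro n
  induction n with
  | zero =>
    intro X _ _ _ Φ hsym hnd hrank U σ hinj hiso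
    have hss : Subsingleton X := Module.finrank_zero_iff.mp (Nat.le_zero.mp hrank)
    exact ⟨LinearEquiv.refl F X, fun x y => rfl, fun u hu => Subsingleton.elim _ _⟩
  | succ n IH =>
    intro X _ _ _ Φ hsym hnd hrank U σ hinj hiso
    have hε2 : ε * ε = 1 := by rcases hε with h | h <;> rw [h] <;> ring
    have top_case : ∀ (U : Submodule F X) (σ : X →ₗ[F] X), (∀ u ∈ U, σ u = 0 → u = 0) →
        (∀ u ∈ U, ∀ v ∈ U, Φ (σ u) (σ v) = Φ u v) → U = ⊤ →
        ∃ τ : X ≃ₗ[F] X, (∀ x y, Φ (τ x) (τ y) = Φ x y) ∧ ∀ u ∈ U, τ u = σ u := by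
      intro U σ hinj hiso htop
      subst htop
      have hinj' : Function.Injective σ := by
        rw [← LinearMap.ker_eq_bot, LinearMap.ker_eq_bot']
        intro m hm
        exact hinj m trivial hm
      exact ⟨LinearEquiv.ofBijective σ ⟨hinj', LinearMap.injective_iff_surjective.mp hinj'⟩,
        fun x y => hiso x trivial y trivial, fun u _ => rfl⟩
    suffices H : ∀ (k : ℕ) (U : Submodule F X) (σ : X →ₗ[F] X),
        (∀ u ∈ U, σ u = 0 → u = 0) →
        (∀ u ∈ U, ∀ v ∈ U, Φ (σ u) (σ v) = Φ u v) →
        finrank F X - finrank F U ≤ k →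
        ∃ τ : X ≃ₗ[F] X, (∀ x y : X, Φ (τ x) (τ y) = Φ x y) ∧ ∀ u ∈ U, τ u = σ u by
      exact H (finrank F X) U σ hinj hiso (by omega)
    intro k
    induction k with
    | zero =>
      intro U σ hinj hiso hk
      apply top_case U σ hinj hiso
      have h1 : finrank F U ≤ finrank F X := Submodule.finrank_le U
      exact Submodule.eq_top_of_finrank_eq (by omega)
    | succ k IHk =>
      intro U σ hinj hiso hk
      by_cases htop : U = ⊤
      · exact top_case U σ hinj hiso htop
      by_cases hrad : ∃ u, u ∈ U ∧ u ≠ 0 ∧ ∀ p ∈ U, Φ u p = 0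
      · -- radical case: enlarge `U` by a hyperbolic partner of `u`
        obtain ⟨u, huU, hune, hurad⟩ := hrad
        have hΦpu : ∀ p ∈ U, Φ p u = 0 := fun p hp => by
          rw [hsym, hurad p hp, mul_zero]
        have huu : Φ u u = 0 := hurad u huU
        obtain ⟨y, hy⟩ : ∃ y, Φ u y ≠ 0 := by
          by_contra hc; push_neg at hc; exact hune (hnd.1 u hc)
        obtain ⟨v0, hv0def⟩ : ∃ _x : X, _x = (Φ u y)⁻¹ • y := ⟨_, rfl⟩
        have hv0 : Φ u v0 = 1 := by
          rw [hv0def, map_smul, smul_eq_mul, inv_mul_cancel₀ hy]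
        obtain ⟨v, hvdef⟩ : ∃ _x : X, _x = v0 - (Φ v0 v0 / 2) • u := ⟨_, rfl⟩
        have hΦuv : Φ u v = 1 := by
          rw [hvdef, map_sub, map_smul, hv0, huu, smul_eq_mul, mul_zero, sub_zero]
        have hΦpv : ∀ p ∈ U, Φ p v = Φ p v0 := fun p hp => by
          rw [hvdef, map_sub, map_smul, hΦpu p hp, smul_eq_mul, mul_zero, sub_zero]
        have hΦv0u : Φ v0 u = ε := by rw [hsym, hv0, mul_one]
        have hΦvv : Φ v v = 0 := by
          rw [hvdef]
          simp only [map_sub, map_smul, LinearMap.sub_apply, LinearMap.smul_apply, smul_eq_mul]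
          rw [hv0, hΦv0u, huu]
          rcases hε with h1 | h1
          · rw [h1]; field_simp; ring
          · have h0 : Φ v0 v0 = 0 := by
              have h5 := hsym v0 v0
              rw [h1] at h5
              have h2 : (2:F) * Φ v0 v0 = 0 := by linear_combination h5
              exact (mul_eq_zero.mp h2).resolve_left hchar
            rw [h0, h1]; ring
        -- find `w` matching `v` on the image side
        set ψ : U →ₗ[F] X := σ ∘ₗ U.subtype with hψdef
        have hψinj : Function.Injective ψ := by
          rw [← LinearMap.ker_eq_bot, LinearMap.ker_eq_bot']
          intro m hm
          exact Subtype.ext (hinj (m : X) m.2 hm)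
        set E := LinearEquiv.ofInjective ψ hψinj with hEdef
        set f0 : LinearMap.range ψ →ₗ[F] F :=
          ((Φ.flip v).comp U.subtype) ∘ₗ E.symm.toLinearMap with hf0def
        obtain ⟨f, hf⟩ := LinearMap.exists_extend f0
        obtain ⟨x0, hx0def⟩ : ∃ _x : X, _x = (Φ.toDual hnd).symm f := ⟨_, rfl⟩
        have hx0 : ∀ t, Φ x0 t = f t := fun t => by
          rw [hx0def]; exact LinearMap.BilinForm.apply_toDual_symm_apply f t
        obtain ⟨w1, hw1def⟩ : ∃ _x : X, _x = ε • x0 := ⟨_, rfl⟩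
        have hmatch : ∀ p ∈ U, Φ (σ p) w1 = Φ p v := by
          intro p hp
          have hpr : σ p ∈ LinearMap.range ψ := ⟨⟨p, hp⟩, rfl⟩
          have h4 : f (σ p) = f0 ⟨σ p, hpr⟩ := by
            have h5 := congrArg (fun (m : LinearMap.range ψ →ₗ[F] F) => m ⟨σ p, hpr⟩) hf
            simpa using h5
          have h3 : (⟨σ p, hpr⟩ : LinearMap.range ψ) = E ⟨p, hp⟩ := by
            apply Subtype.ext
            rw [LinearEquiv.ofInjective_apply]
            rfl
          have h2 : f (σ p) = Φ p v := by
            rw [h4, h3, hf0def]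
            simp only [LinearMap.comp_apply, LinearEquiv.coe_toLinearMap,
              LinearEquiv.symm_apply_apply, LinearMap.flip_apply]
            rfl
          calc Φ (σ p) w1 = ε * Φ w1 (σ p) := hsym _ _
          _ = ε * (ε * Φ x0 (σ p)) := by
              rw [hw1def, map_smul, LinearMap.smul_apply, smul_eq_mul]
          _ = f (σ p) := by rw [hx0, ← mul_assoc, hε2, one_mul]
          _ = Φ p v := h2
        have hσuu : Φ (σ u) (σ u) = 0 := by rw [hiso u huU u huU, huu]
        have hΦσuw1 : Φ (σ u) w1 = 1 := (hmatch u huU).trans hΦuv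
        obtain ⟨w, hwdef⟩ : ∃ _x : X, _x = w1 - (Φ w1 w1 / 2) • σ u := ⟨_, rfl⟩
        have hΦσpw : ∀ p ∈ U, Φ (σ p) w = Φ p v := by
          intro p hp
          rw [hwdef, map_sub, map_smul, smul_eq_mul, hmatch p hp,
            hiso p hp u huU, hΦpu p hp, mul_zero, sub_zero]
        have hΦuw : Φ (σ u) w = 1 := (hΦσpw u huU).trans hΦuv
        have hΦw1σu : Φ w1 (σ u) = ε := by rw [hsym, hΦσuw1, mul_one]
        have hΦww : Φ w w = 0 := by
          rw [hwdef]
          simp only [map_sub, map_smul, LinearMap.sub_apply, LinearMap.smul_apply, smul_eq_mul]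
          rw [hΦσuw1, hΦw1σu, hσuu]
          rcases hε with h1 | h1
          · rw [h1]; field_simp; ring
          · have h0 : Φ w1 w1 = 0 := by
              have h5 := hsym w1 w1
              rw [h1] at h5
              have h2 : (2:F) * Φ w1 w1 = 0 := by linear_combination h5
              exact (mul_eq_zero.mp h2).resolve_left hchar
            rw [h0, h1]; ring
        -- the extended map
        obtain ⟨σ', hσ'def⟩ : ∃ _x : X →ₗ[F] X, _x = σ + LinearMap.smulRight (Φ u) (w - σ v) := ⟨_, rfl⟩
        have hσ'p : ∀ p ∈ U, σ' p = σ p := by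
          intro p hp
          rw [hσ'def]
          simp only [LinearMap.add_apply, LinearMap.smulRight_apply]
          rw [hurad p hp, zero_smul, add_zero]
        have hσ'v : σ' v = w := by
          rw [hσ'def]
          simp only [LinearMap.add_apply, LinearMap.smulRight_apply]
          rw [hΦuv, one_smul]
          abel
        have hval : ∀ p ∈ U, ∀ t : F, σ' (p + t • v) = σ p + t • w := by
          intro p hp t
          rw [map_add, map_smul, hσ'p p hp, hσ'v]
        obtain ⟨U', hU'def⟩ : ∃ _x : Submodule F X, _x = U ⊔ (Submodule.span F {v}) := ⟨_, rfl⟩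
        have hmem' : ∀ x ∈ U', ∃ p ∈ U, ∃ t : F, x = p + t • v := by
          intro x hx
          rw [hU'def] at hx
          obtain ⟨p, hp, z, hz, hpz⟩ := Submodule.mem_sup.mp hx
          obtain ⟨t, ht⟩ := Submodule.mem_span_singleton.mp hz
          exact ⟨p, hp, t, by rw [← hpz, ← ht]⟩
        have hvnotU : v ∉ U := by
          intro hc
          have h5 := hurad v hc
          rw [hΦuv] at h5
          exact one_ne_zero h5
        have hinj' : ∀ x ∈ U', σ' x = 0 → x = 0 := by
          intro x hx h0
          obtain ⟨p, hp, t, rfl⟩ := hmem' x hx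
          rw [hval p hp t] at h0
          have ht0 : Φ (σ u) (σ p + t • w) = t := by
            rw [map_add, map_smul, hiso u huU p hp, hurad p hp, smul_eq_mul, hΦuw,
              mul_one, zero_add]
          have ht : t = 0 := by rw [h0] at ht0; simpa using ht0.symm
          subst ht
          rw [zero_smul, add_zero] at h0 ⊢
          exact hinj p hp h0
        have hiso' : ∀ x ∈ U', ∀ y' ∈ U', Φ (σ' x) (σ' y') = Φ x y' := by
          intro x hx y' hy'
          obtain ⟨p, hp, s, rfl⟩ := hmem' x hx
          obtain ⟨q, hq, t, rfl⟩ := hmem' y' hy'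
          rw [hval p hp s, hval q hq t]
          have hwq : Φ w (σ q) = Φ v q := by
            rw [hsym w (σ q), hΦσpw q hq]
            exact (hsym v q).symm
          have hvq : Φ v q = Φ v q := rfl
          simp only [map_add, map_smul, LinearMap.add_apply, LinearMap.smul_apply, smul_eq_mul]
          rw [hiso p hp q hq, hΦww, hΦvv, hΦσpw p hp, hwq]
          try ring
        have hvU' : v ∈ U' := by
          rw [hU'def]
          exact Submodule.mem_sup_right (Submodule.mem_span_singleton_self v)
        have hUne : U ≠ U' := fun hc => hvnotU (hc ▸ hvU')
        have hlt : finrank F U < finrank F U' :=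
          Submodule.finrank_lt_finrank_of_lt
            (lt_of_le_of_ne (hU'def ▸ le_sup_left) hUne)
        have hk' : finrank F X - finrank F U' ≤ k := by
          have h6 := Submodule.finrank_le U'
          omega
        obtain ⟨τ, hτiso, hτagr⟩ := IHk U' σ' hinj' hiso' hk'
        exact ⟨τ, hτiso, fun p hp => by
          have hp' : p ∈ U' := by rw [hU'def]; exact Submodule.mem_sup_left hp
          rw [hτagr p hp', hσ'p p hp]⟩
      · -- `U` is nondegenerate
        push_neg at hrad
        by_cases hbot : U = ⊥
        · subst hbot
          refine ⟨LinearEquiv.refl F X, fun x y => rfl, fun p hp => ?_⟩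
          have : p = 0 := Submodule.mem_bot F |>.mp hp
          subst this
          simp
        obtain ⟨u0, hu0U, hu0ne⟩ := Submodule.ne_bot_iff U |>.mp hbot
        rcases hε with h1 | h1
        · -- symmetric case
          have hsymm : ∀ x y : X, Φ x y = Φ y x := fun x y => by rw [hsym, h1, one_mul]
          have hani : ∃ u ∈ U, Φ u u ≠ 0 := by
            by_contra hc
            push_neg at hc
            obtain ⟨p, hpU, hΦp⟩ := hrad u0 hu0U hu0ne
            have h5 := hc (u0 + p) (Submodule.add_mem U hu0U hpU)
            simp only [map_add, LinearMap.add_apply] at h5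
            rw [hc u0 hu0U, hc p hpU, hsymm p u0] at h5
            have h6 : (2:F) * Φ u0 p = 0 := by linear_combination h5
            exact hΦp ((mul_eq_zero.mp h6).resolve_left hchar)
          obtain ⟨u, huU, huani⟩ := hani
          have hune : u ≠ 0 := fun hc => huani (by rw [hc]; simp)
          have hσu : Φ (σ u) (σ u) = Φ u u := hiso u huU u huU
          obtain ⟨ρ, hρiso, hρw⟩ := sym_move Φ hchar hsymm u (σ u) huani hσu
          obtain ⟨σ1, hσ1def⟩ : ∃ _x : X →ₗ[F] X, _x = ρ.toLinearMap ∘ₗ σ := ⟨_, rfl⟩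
          have hσ1 : ∀ x, σ1 x = ρ (σ x) := fun x => by rw [hσ1def]; rfl
          obtain ⟨P, hPdef⟩ : ∃ _x : Submodule F X, _x = Submodule.span F {u} := ⟨_, rfl⟩
          have hPU : P ≤ U := by
            rw [hPdef]
            exact Submodule.span_le.mpr (Set.singleton_subset_iff.mpr huU)
          have hPne : P ≠ ⊥ := by
            rw [hPdef, Ne, Submodule.span_singleton_eq_bot]
            exact hune
          have hPmem' : ∀ x : X, x ∈ P ↔ ∃ c : F, c • u = x := by
            intro x; rw [hPdef]; exact Submodule.mem_span_singleton
          have huP : u ∈ P := (hPmem' u).mpr ⟨1, one_smul F u⟩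
          have hPnd : (Φ.restrict P).Nondegenerate := by
            refine LinearMap.BilinForm.Nondegenerate.ofSeparatingLeft ?_
            intro m hm
            obtain ⟨c, hc⟩ := (hPmem' (m : X)).mp m.2
            have h5 : Φ (m : X) u = 0 := hm ⟨u, huP⟩
            rw [← hc, map_smul, LinearMap.smul_apply, smul_eq_mul] at h5
            have hc0 : c = 0 := by
              rcases mul_eq_zero.mp h5 with h | h
              · exact h
              · exact absurd h huani
            apply Subtype.ext
            rw [← hc, hc0, zero_smul]
            rfl
          have hfix : ∀ p ∈ P, σ1 p = p := by
            intro p hp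
            obtain ⟨c, hc⟩ := (hPmem' p).mp hp
            rw [← hc, map_smul, hσ1, hρw]
          have hinj1 : ∀ p ∈ U, σ1 p = 0 → p = 0 := by
            intro p hp h0
            rw [hσ1] at h0
            exact hinj p hp (by simpa using h0)
          have hiso1 : ∀ p ∈ U, ∀ q ∈ U, Φ (σ1 p) (σ1 q) = Φ p q := by
            intro p hp q hq
            rw [hσ1, hσ1, hρiso, hiso p hp q hq]
          obtain ⟨τ1, hτ1iso, hτ1agr⟩ := descend hε2 Φ hsym hnd IH hrank U σ1
            hinj1 hiso1 P hPU hPne hPnd hfix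
          refine ⟨τ1.trans ρ.symm, fun x y => ?_, fun p hp => ?_⟩
          · calc Φ (ρ.symm (τ1 x)) (ρ.symm (τ1 y))
                = Φ (ρ (ρ.symm (τ1 x))) (ρ (ρ.symm (τ1 y))) := (hρiso _ _).symm
            _ = Φ (τ1 x) (τ1 y) := by rw [LinearEquiv.apply_symm_apply,
                LinearEquiv.apply_symm_apply]
            _ = Φ x y := hτ1iso x y
          · show ρ.symm (τ1 p) = σ p
            rw [hτ1agr p hp, hσ1, LinearEquiv.symm_apply_apply]
        · -- alternating case
          have halt : ∀ x : X, Φ x x = 0 := by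
            intro x
            have h5 := hsym x x
            rw [h1] at h5
            have h2 : (2:F) * Φ x x = 0 := by linear_combination h5
            exact (mul_eq_zero.mp h2).resolve_left hchar
          have hskew : ∀ x y : X, Φ x y = - Φ y x := fun x y => by
            rw [hsym, h1, neg_one_mul]
          obtain ⟨p0, hp0U, hΦp0⟩ := hrad u0 hu0U hu0ne
          obtain ⟨v, hvdef⟩ : ∃ _x : X, _x = (Φ u0 p0)⁻¹ • p0 := ⟨_, rfl⟩
          have hvU : v ∈ U := by
            rw [hvdef]
            exact Submodule.smul_mem U _ hp0U
          have hΦu0v : Φ u0 v = 1 := by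
            rw [hvdef, map_smul, smul_eq_mul, inv_mul_cancel₀ hΦp0]
          have hu'ne : σ u0 ≠ 0 := fun hc => hu0ne (hinj u0 hu0U hc)
          have hΦu'v' : Φ (σ u0) (σ v) = 1 := by rw [hiso u0 hu0U v hvU, hΦu0v]
          obtain ⟨ρ, hρiso, hρu, hρv⟩ := symp_pair_move Φ hnd halt hskew u0 v
            (σ u0) (σ v) hu0ne hu'ne hΦu0v hΦu'v'
          obtain ⟨σ1, hσ1def⟩ : ∃ _x : X →ₗ[F] X, _x = ρ.toLinearMap ∘ₗ σ := ⟨_, rfl⟩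
          have hσ1 : ∀ x, σ1 x = ρ (σ x) := fun x => by rw [hσ1def]; rfl
          obtain ⟨P, hPdef⟩ : ∃ _x : Submodule F X, _x = Submodule.span F {u0} ⊔ Submodule.span F {v} := ⟨_, rfl⟩
          have hPmem : ∀ x ∈ P, ∃ a b : F, x = a • u0 + b • v := by
            intro x hx
            rw [hPdef] at hx
            obtain ⟨p, hp, z, hz, hpz⟩ := Submodule.mem_sup.mp hx
            obtain ⟨a, ha⟩ := Submodule.mem_span_singleton.mp hp
            obtain ⟨b, hb⟩ := Submodule.mem_span_singleton.mp hz
            exact ⟨a, b, by rw [← hpz, ← ha, ← hb]⟩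
          have hu0P : u0 ∈ P := by
            rw [hPdef]
            exact Submodule.mem_sup_left (Submodule.mem_span_singleton_self u0)
          have hvP : v ∈ P := by
            rw [hPdef]
            exact Submodule.mem_sup_right (Submodule.mem_span_singleton_self v)
          have hPU : P ≤ U := by
            rw [hPdef, sup_le_iff]
            constructor <;> rw [Submodule.span_le, Set.singleton_subset_iff]
            · exact hu0U
            · exact hvU
          have hPne : P ≠ ⊥ := by
            intro hc
            rw [hc] at hu0P
            exact hu0ne (Submodule.mem_bot F |>.mp hu0P)
          have hΦvu0 : Φ v u0 = -1 := by rw [hskew, hΦu0v]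
          have hPnd : (Φ.restrict P).Nondegenerate := by
            refine LinearMap.BilinForm.Nondegenerate.ofSeparatingLeft ?_
            intro m hm
            obtain ⟨a, b, hab⟩ := hPmem (m : X) m.2
            have h5 : Φ (m : X) u0 = 0 := hm ⟨u0, hu0P⟩
            have h6 : Φ (m : X) v = 0 := hm ⟨v, hvP⟩
            rw [hab] at h5 h6
            simp only [map_add, map_smul, LinearMap.add_apply, LinearMap.smul_apply,
              smul_eq_mul] at h5 h6
            rw [halt u0, hΦvu0] at h5
            rw [halt v, hΦu0v] at h6
            have hb0 : b = 0 := by linear_combination -h5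
            have ha0 : a = 0 := by linear_combination h6
            apply Subtype.ext
            show (m : X) = 0
            rw [hab, ha0, hb0, zero_smul, zero_smul, add_zero]
          have hfix : ∀ p ∈ P, σ1 p = p := by
            intro p hp
            obtain ⟨a, b, hab⟩ := hPmem p hp
            rw [hab, map_add, map_smul, map_smul, hσ1, hσ1, hρu, hρv]
          have hinj1 : ∀ p ∈ U, σ1 p = 0 → p = 0 := by
            intro p hp h0
            rw [hσ1] at h0
            exact hinj p hp (by simpa using h0)
          have hiso1 : ∀ p ∈ U, ∀ q ∈ U, Φ (σ1 p) (σ1 q) = Φ p q := by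
            intro p hp q hq
            rw [hσ1, hσ1, hρiso, hiso p hp q hq]
          obtain ⟨τ1, hτ1iso, hτ1agr⟩ := descend hε2 Φ hsym hnd IH hrank U σ1
            hinj1 hiso1 P hPU hPne hPnd hfix
          refine ⟨τ1.trans ρ.symm, fun x y => ?_, fun p hp => ?_⟩
          · calc Φ (ρ.symm (τ1 x)) (ρ.symm (τ1 y))
                = Φ (ρ (ρ.symm (τ1 x))) (ρ (ρ.symm (τ1 y))) := (hρiso _ _).symm
            _ = Φ (τ1 x) (τ1 y) := by rw [LinearEquiv.apply_symm_apply,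
                LinearEquiv.apply_symm_apply]
            _ = Φ x y := hτ1iso x y
          · show ρ.symm (τ1 p) = σ p
            rw [hτ1agr p hp, hσ1, LinearEquiv.symm_apply_apply]

end ShahidiWitt

/-- Shahidi's Lemma: if `g ∈ GL(X)` satisfies `ξ ξ* = (ξ g)(ξ g)*`, then there exists an
isometry `h ∈ H = Isom(X, Φ)` with `ξ g = ξ h`.  Here `ξs = ξ*` is the adjoint of `ξ` and
`ξgs = (ξ g)*` is the adjoint of `ξ ∘ g`, both with respect to the pairing `Bp` between
`W'` and `W` and the nondegenerate form `Φ` on `X`. -/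
theorem shahidi_lemma
    (F : Type*) [Field F] (hchar : (2 : F) ≠ 0)
    (W W' X : Type*)
    [AddCommGroup W] [Module F W] [FiniteDimensional F W]
    [AddCommGroup W'] [Module F W'] [FiniteDimensional F W']
    [AddCommGroup X] [Module F X] [FiniteDimensional F X]
    (ε : F) (hε : ε = 1 ∨ ε = -1)
    (Bp : W' →ₗ[F] W →ₗ[F] F)
    (hBp1 : ∀ w' : W', (∀ w : W, Bp w' w = 0) → w' = 0)
    (hBp2 : ∀ w : W, (∀ w' : W', Bp w' w = 0) → w = 0)
    (Φ : X →ₗ[F] X →ₗ[F] F)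
    (hΦnd : ∀ x : X, (∀ y : X, Φ x y = 0) → x = 0)
    (hΦε : ∀ x y : X, Φ x y = ε * Φ y x)
    (ξ : X →ₗ[F] W) (ξs : W' →ₗ[F] X)
    (hξs : ∀ (w' : W') (x : X), Φ (ξs w') x = Bp w' (ξ x))
    (g : X ≃ₗ[F] X)
    (ξgs : W' →ₗ[F] X)
    (hξgs : ∀ (w' : W') (x : X), Φ (ξgs w') x = Bp w' (ξ (g x)))
    (hyp : ∀ w' : W', ξ (ξs w') = ξ (g (ξgs w'))) :
    ∃ h : X ≃ₗ[F] X, (∀ x y : X, Φ (h x) (h y) = Φ x y) ∧ ∀ x : X, ξ (g x) = ξ (h x) := by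
  classical
  have hnd : LinearMap.BilinForm.Nondegenerate Φ :=
    LinearMap.BilinForm.Nondegenerate.ofSeparatingLeft hΦnd
  obtain ⟨gstar, hgstar⟩ : ∃ gs : X →ₗ[F] X, ∀ y x, Φ (gs y) x = Φ y (g x) := by
    refine ⟨((LinearMap.BilinForm.toDual Φ hnd).symm.toLinearMap ∘ₗ g.toLinearMap.dualMap) ∘ₗ
      (LinearMap.BilinForm.toDual Φ hnd).toLinearMap, ?_⟩
    intro y x
    simp only [LinearMap.comp_apply, LinearEquiv.coe_toLinearMap]
    rw [LinearMap.BilinForm.apply_toDual_symm_apply]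
    rfl
  have hgs_xs : ∀ w' : W', gstar (ξs w') = ξgs w' := by
    intro w'
    have hz : ∀ x, Φ (gstar (ξs w') - ξgs w') x = 0 := by
      intro x
      rw [map_sub, LinearMap.sub_apply, hgstar, hξs, hξgs, sub_self]
    exact sub_eq_zero.mp (hΦnd _ hz)
  have hinj : ∀ u ∈ LinearMap.range ξs, gstar u = 0 → u = 0 := by
    rintro u ⟨w', rfl⟩ h0
    rw [hgs_xs] at h0
    apply hΦnd
    intro x
    rw [hξs]
    have h5 := hξgs w' (g.symm x)
    rw [h0] at h5
    simp only [map_zero, LinearMap.zero_apply, LinearEquiv.apply_symm_apply] at h5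
    exact h5.symm
  have hiso : ∀ u ∈ LinearMap.range ξs, ∀ v ∈ LinearMap.range ξs,
      Φ (gstar u) (gstar v) = Φ u v := by
    rintro u ⟨w1, rfl⟩ v ⟨w2, rfl⟩
    rw [hgs_xs, hgs_xs, hξgs w1 (ξgs w2), ← hyp w2, ← hξs w1 (ξs w2)]
  obtain ⟨τ0, hτiso, hτagr⟩ := ShahidiWitt.witt hchar ε hε (Module.finrank F X) X Φ
    hΦε hnd le_rfl (LinearMap.range ξs) gstar hinj hiso
  refine ⟨τ0.symm, fun x y => ?_, fun x => ?_⟩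
  · calc Φ (τ0.symm x) (τ0.symm y) = Φ (τ0 (τ0.symm x)) (τ0 (τ0.symm y)) := (hτiso _ _).symm
    _ = Φ x y := by rw [τ0.apply_symm_apply, τ0.apply_symm_apply]
  · have hkey : ∀ w' : W', Bp w' (ξ (g x)) = Bp w' (ξ (τ0.symm x)) := by
      intro w'
      rw [← hξgs w' x, ← hξs w' (τ0.symm x), ← hgs_xs w',
        ← hτagr (ξs w') (LinearMap.mem_range_self ξs w')]
      conv_lhs => rw [← τ0.apply_symm_apply x]
      rw [hτiso]
    have h0 : ∀ w' : W', Bp w' (ξ (g x) - ξ (τ0.symm x)) = 0 := fun w' => by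
      rw [map_sub, hkey, sub_self]
    exact sub_eq_zero.mp (hBp2 _ h0)
end

section
/- With notation as above, suppose ξ₁, ξ₂ : X → W are surjective linear maps such that both pairs (ξ₁, η) and (ξ₂, η) satisfy the relation η + η* + ξ_iξ_i* = 0, with η invertible. Then there exists h ∈ H with Norm(ξ₁, η) = h^{-1} · Norm(ξ₂, η) · h; i.e., the two norms are conjugate in H. -/
open LinearMap Finset

set_option linter.unusedSectionVars false
set_option linter.unusedVariables false
set_option maxHeartbeats 1000000



section Witt

variable {F : Type*} [Field F] {V : Type*} [AddCommGroup V] [Module F V]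

theorem isometry_bijective [FiniteDimensional F V] (Φ : V →ₗ[F] V →ₗ[F] F)
    (hnd : ∀ x, (∀ y, Φ x y = 0) → x = 0) (T : V →ₗ[F] V)
    (hT : ∀ x y, Φ (T x) (T y) = Φ x y) : Function.Bijective T := by
  have hinj : Function.Injective T := by
    rw [← LinearMap.ker_eq_bot]
    refine (Submodule.eq_bot_iff _).2 fun x hx => hnd x fun y => ?_
    have h := hT x y
    rw [LinearMap.mem_ker.1 hx] at h
    simpa using h.symm
  exact ⟨hinj, LinearMap.injective_iff_surjective.1 hinj⟩

/-- Build an isometry equivalence from an isometric linear endomorphism. -/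
theorem mk_isometry [FiniteDimensional F V] (Φ : V →ₗ[F] V →ₗ[F] F)
    (hnd : ∀ x, (∀ y, Φ x y = 0) → x = 0) (T : V →ₗ[F] V)
    (hT : ∀ x y, Φ (T x) (T y) = Φ x y) :
    ∃ E : V ≃ₗ[F] V, (∀ x y, Φ (E x) (E y) = Φ x y) ∧ ∀ x, E x = T x :=
  ⟨LinearEquiv.ofBijective T (isometry_bijective Φ hnd T hT), fun x y => hT x y, fun _ => rfl⟩

theorem symm_isometry (Φ : V →ₗ[F] V →ₗ[F] F) (E : V ≃ₗ[F] V)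
    (hE : ∀ x y, Φ (E x) (E y) = Φ x y) : ∀ x y, Φ (E.symm x) (E.symm y) = Φ x y := by
  intro x y
  calc Φ (E.symm x) (E.symm y) = Φ (E (E.symm x)) (E (E.symm y)) := (hE _ _).symm
    _ = Φ x y := by rw [E.apply_symm_apply, E.apply_symm_apply]

end Witt


section Witt

variable {F : Type*} [Field F] {V : Type*} [AddCommGroup V] [Module F V]
variable [FiniteDimensional F V]

theorem eps_one (Φ : V →ₗ[F] V →ₗ[F] F) (h2 : (2:F) ≠ 0) {ε : F} (hε : ε = 1 ∨ ε = -1)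
    (hsym : ∀ x y, Φ x y = ε * Φ y x) {a : V} (ha : Φ a a ≠ 0) : ε = 1 := by
  rcases hε with h | h
  · exact h
  · exfalso
    have := hsym a a
    rw [h] at this
    have h2' : (2:F) * Φ a a = 0 := by linear_combination this
    rcases mul_eq_zero.1 h2' with h' | h'
    · exact h2 h'
    · exact ha h'

theorem alt_of_neg (Φ : V →ₗ[F] V →ₗ[F] F) (h2 : (2:F) ≠ 0) {ε : F}
    (hsym : ∀ x y, Φ x y = ε * Φ y x) (hneg : ε = -1) (x : V) : Φ x x = 0 := by
  have := hsym x x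
  rw [hneg] at this
  have h2' : (2:F) * Φ x x = 0 := by linear_combination this
  rcases mul_eq_zero.1 h2' with h | h
  · exact absurd h h2
  · exact h

theorem wtReflection (Φ : V →ₗ[F] V →ₗ[F] F) (h2 : (2:F) ≠ 0) {ε : F} (hε : ε = 1 ∨ ε = -1)
    (hsym : ∀ x y, Φ x y = ε * Φ y x) (hnd : ∀ x, (∀ y, Φ x y = 0) → x = 0)
    (a : V) (ha : Φ a a ≠ 0) :
    ∃ R : V ≃ₗ[F] V, (∀ x y, Φ (R x) (R y) = Φ x y) ∧
      ∀ z, R z = z - (2 * Φ a z / Φ a a) • a := by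
  have hε1 : ε = 1 := eps_one Φ h2 hε hsym ha
  set T : V →ₗ[F] V := LinearMap.id - ((2 / Φ a a) • (Φ a)).smulRight a with hTdef
  have hT : ∀ z, T z = z - (2 * Φ a z / Φ a a) • a := by
    intro z
    simp only [hTdef, LinearMap.sub_apply, LinearMap.id_apply, LinearMap.smulRight_apply,
      LinearMap.smul_apply, smul_eq_mul]
    ring_nf
  have hiso : ∀ x y, Φ (T x) (T y) = Φ x y := by
    intro x y
    rw [hT, hT]
    have hxa : Φ x a = Φ a x := by rw [hsym x a, hε1, one_mul]
    have hya : Φ y a = Φ a y := by rw [hsym y a, hε1, one_mul]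
    simp only [map_sub, map_smul, LinearMap.sub_apply, LinearMap.smul_apply, smul_eq_mul]
    rw [hxa]
    field_simp
    ring
  obtain ⟨E, hE1, hE2⟩ := mk_isometry Φ hnd T hiso
  exact ⟨E, hE1, fun z => by rw [hE2, hT]⟩

theorem two_reflections (Φ : V →ₗ[F] V →ₗ[F] F) (h2 : (2:F) ≠ 0) {ε : F} (hε : ε = 1 ∨ ε = -1)
    (hsym : ∀ x y, Φ x y = ε * Φ y x) (hnd : ∀ x, (∀ y, Φ x y = 0) → x = 0)
    (x y : V) (hxx : Φ x x ≠ 0) (hxy : Φ x x = Φ y y) :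
    ∃ ρ : V ≃ₗ[F] V, (∀ a b, Φ (ρ a) (ρ b) = Φ a b) ∧ ρ x = y := by
  have hε1 : ε = 1 := eps_one Φ h2 hε hsym hxx
  have hflip : ∀ a b, Φ a b = Φ b a := fun a b => by rw [hsym a b, hε1, one_mul]
  by_cases hd : Φ (x - y) (x - y) ≠ 0
  · obtain ⟨R, hR1, hR2⟩ := wtReflection Φ h2 hε hsym hnd (x - y) hd
    refine ⟨R, hR1, ?_⟩
    rw [hR2]
    have key : 2 * Φ (x - y) x = Φ (x - y) (x - y) := by
      simp only [map_sub, LinearMap.sub_apply]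
      rw [hflip y x, hxy]
      ring
    rw [key, div_self hd, one_smul]
    abel
  · push_neg at hd
    have hsum : Φ (x + y) (x + y) ≠ 0 := by
      have e1 : Φ (x - y) (x - y) + Φ (x + y) (x + y) = (2 * 2) * Φ x x := by
        simp only [map_sub, map_add, LinearMap.sub_apply, LinearMap.add_apply]
        rw [hflip y x, hxy]
        ring
      intro h0
      rw [hd, h0] at e1
      exact hxx (by
        have : (2:F) * 2 ≠ 0 := mul_ne_zero h2 h2
        field_simp at e1
        have e2 : (2:F) ^ 2 * Φ x x = 0 := by linear_combination -e1
        exact (mul_eq_zero.1 e2).resolve_left (pow_ne_zero 2 h2))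
    obtain ⟨R1, hR11, hR12⟩ := wtReflection Φ h2 hε hsym hnd (x + y) hsum
    have hyy : Φ y y ≠ 0 := by rw [← hxy]; exact hxx
    obtain ⟨R2, hR21, hR22⟩ := wtReflection Φ h2 hε hsym hnd y hyy
    refine ⟨R1.trans R2, fun a b => by
      simp only [LinearEquiv.trans_apply]; rw [hR21, hR11], ?_⟩
    have hR1x : R1 x = -y := by
      rw [hR12]
      have key : 2 * Φ (x + y) x = Φ (x + y) (x + y) := by
        simp only [map_add, LinearMap.add_apply]
        rw [hflip y x, hxy]
        ring
      rw [key, div_self hsum, one_smul]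
      abel
    have : R2 (-y) = y := by
      rw [hR22]
      have hc : 2 * Φ y (-y) / Φ y y = -2 := by
        rw [map_neg]
        field_simp
      rw [hc]
      module
    simp only [LinearEquiv.trans_apply, hR1x, this]

end Witt
section Witt2

variable {F : Type*} [Field F] {V : Type*} [AddCommGroup V] [Module F V]
variable [FiniteDimensional F V]

/-- Eichler transformation attached to an isotropic vector `u` and `t ⊥ u`. -/
theorem eichler (Φ : V →ₗ[F] V →ₗ[F] F) (h2 : (2:F) ≠ 0) {ε : F} (hε : ε = 1 ∨ ε = -1)
    (hsym : ∀ x y, Φ x y = ε * Φ y x) (hnd : ∀ x, (∀ y, Φ x y = 0) → x = 0)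
    (u t : V) (huu : Φ u u = 0) (hut : Φ u t = 0) (htu : Φ t u = 0) :
    ∃ E : V ≃ₗ[F] V, (∀ x y, Φ (E x) (E y) = Φ x y) ∧
      ∀ z, E z = z + (Φ u z) • t + (-(ε * Φ t z) + (-(Φ t t)/2) * Φ u z) • u := by
  set g : V →ₗ[F] F := -(ε • (Φ t)) + (-(Φ t t)/2) • (Φ u) with hgdef
  set T : V →ₗ[F] V := LinearMap.id + (Φ u).smulRight t + g.smulRight u with hTdef
  have hT : ∀ z, T z = z + (Φ u z) • t + (-(ε * Φ t z) + (-(Φ t t)/2) * Φ u z) • u := by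
    intro z
    simp only [hTdef, hgdef, LinearMap.add_apply, LinearMap.id_apply, LinearMap.smulRight_apply,
      LinearMap.neg_apply, LinearMap.smul_apply, smul_eq_mul]
  have hiso : ∀ x y, Φ (T x) (T y) = Φ x y := by
    intro x y
    rw [hT, hT]
    simp only [map_add, map_smul, LinearMap.add_apply, LinearMap.smul_apply, smul_eq_mul]
    rw [hsym x t, hsym x u]
    rcases hε with h1 | h1
    · rw [h1]
      simp only [huu, hut, htu]
      field_simp
      ring
    · have htt : Φ t t = 0 := alt_of_neg Φ h2 hsym h1 t
      rw [h1]
      simp only [huu, hut, htu, htt]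
      field_simp
      ring
  obtain ⟨E, hE1, hE2⟩ := mk_isometry Φ hnd T hiso
  exact ⟨E, hE1, fun z => by rw [hE2, hT]⟩

/-- The isometry exchanging a hyperbolic pair: `p ↦ q`, `q ↦ ε • p`. -/
theorem swap_pair (Φ : V →ₗ[F] V →ₗ[F] F) (h2 : (2:F) ≠ 0) {ε : F} (hε : ε = 1 ∨ ε = -1)
    (hsym : ∀ x y, Φ x y = ε * Φ y x) (hnd : ∀ x, (∀ y, Φ x y = 0) → x = 0)
    (p q : V) (hpp : Φ p p = 0) (hqq : Φ q q = 0) (hpq : Φ p q = 1) :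
    ∃ E : V ≃ₗ[F] V, (∀ x y, Φ (E x) (E y) = Φ x y) ∧ E p = q ∧ E q = ε • p := by
  have hqp : Φ q p = ε := by rw [hsym q p, hpq, mul_one]
  set T : V →ₗ[F] V := LinearMap.id + (ε • (Φ p - Φ q)).smulRight p
      + ((ε • Φ q) - Φ p).smulRight q with hTdef
  have hT : ∀ z, T z = z + (ε * (Φ p z - Φ q z)) • p + (ε * Φ q z - Φ p z) • q := by
    intro z
    simp only [hTdef, LinearMap.add_apply, LinearMap.id_apply, LinearMap.smulRight_apply,
      LinearMap.sub_apply, LinearMap.smul_apply, smul_eq_mul]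
  have hiso : ∀ x y, Φ (T x) (T y) = Φ x y := by
    intro x y
    rw [hT, hT]
    simp only [map_add, map_sub, map_smul, LinearMap.add_apply, LinearMap.sub_apply,
      LinearMap.smul_apply, smul_eq_mul]
    rw [hsym x p, hsym x q]
    rcases hε with h1 | h1 <;>
      · rw [h1]
        simp only [hpp, hqq, hpq, hqp, h1]
        try ring
  obtain ⟨E, hE1, hE2⟩ := mk_isometry Φ hnd T hiso
  refine ⟨E, hE1, ?_, ?_⟩
  · rw [hE2, hT, hpp, hqp]
    rcases hε with h1 | h1 <;> rw [h1] <;> module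
  · rw [hE2, hT, hqq, hpq]
    module

/-- The isometry rescaling a hyperbolic pair: `p ↦ s • p`, `q ↦ s⁻¹ • q`. -/
theorem scale_pair (Φ : V →ₗ[F] V →ₗ[F] F) (h2 : (2:F) ≠ 0) {ε : F} (hε : ε = 1 ∨ ε = -1)
    (hsym : ∀ x y, Φ x y = ε * Φ y x) (hnd : ∀ x, (∀ y, Φ x y = 0) → x = 0)
    (p q : V) (hpp : Φ p p = 0) (hqq : Φ q q = 0) (hpq : Φ p q = 1)
    (s : F) (hs : s ≠ 0) :
    ∃ E : V ≃ₗ[F] V, (∀ x y, Φ (E x) (E y) = Φ x y) ∧ E p = s • p ∧ E q = s⁻¹ • q := by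
  have hqp : Φ q p = ε := by rw [hsym q p, hpq, mul_one]
  set T : V →ₗ[F] V := LinearMap.id + ((ε * (s-1)) • (Φ q)).smulRight p
      + ((s⁻¹ - 1) • (Φ p)).smulRight q with hTdef
  have hT : ∀ z, T z = z + (ε * (s-1) * Φ q z) • p + ((s⁻¹-1) * Φ p z) • q := by
    intro z
    simp only [hTdef, LinearMap.add_apply, LinearMap.id_apply, LinearMap.smulRight_apply,
      LinearMap.smul_apply, smul_eq_mul]
  have hiso : ∀ x y, Φ (T x) (T y) = Φ x y := by
    intro x y
    rw [hT, hT]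
    simp only [map_add, map_smul, LinearMap.add_apply, LinearMap.smul_apply, smul_eq_mul]
    rw [hsym x p, hsym x q]
    rcases hε with h1 | h1 <;>
      · rw [h1]
        simp only [hpp, hqq, hpq, hqp, h1]
        field_simp
        try ring
  obtain ⟨E, hE1, hE2⟩ := mk_isometry Φ hnd T hiso
  refine ⟨E, hE1, ?_, ?_⟩
  · rw [hE2, hT, hpp, hqp]
    have : ε * (s - 1) * ε = s - 1 := by rcases hε with h1 | h1 <;> rw [h1] <;> ring
    rw [this]
    module
  · rw [hE2, hT, hqq, hpq]
    module

end Witt2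
section Witt3

variable {F : Type*} [Field F] {V : Type*} [AddCommGroup V] [Module F V]
variable [FiniteDimensional F V]

theorem share_first (Φ : V →ₗ[F] V →ₗ[F] F) (h2 : (2:F) ≠ 0) {ε : F} (hε : ε = 1 ∨ ε = -1)
    (hsym : ∀ x y, Φ x y = ε * Φ y x) (hnd : ∀ x, (∀ y, Φ x y = 0) → x = 0)
    (a b b' : V) (haa : Φ a a = 0) (hbb : Φ b b = 0) (hbb' : Φ b' b' = 0)
    (hab : Φ a b = 1) (hab' : Φ a b' = 1) :
    ∃ E : V ≃ₗ[F] V, (∀ x y, Φ (E x) (E y) = Φ x y) ∧ E a = a ∧ E b = b' := by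
  set d : V := b' - b with hd
  have had : Φ a d = 0 := by
    simp only [hd, map_sub, hab, hab']
    ring
  have hda : Φ d a = 0 := by rw [hsym d a, had, mul_zero]
  obtain ⟨μ, hμ⟩ : ∃ μ : F, μ * (1 - ε) + ε * Φ d b + Φ d d / 2 = 0 := by
    have hdb : Φ d b = ε * Φ b b' := by
      simp only [hd, map_sub, LinearMap.sub_apply, hbb]
      rw [hsym b' b]
      ring
    have hdd : Φ d d = -(ε * Φ b b') - Φ b b' := by
      simp only [hd, map_sub, LinearMap.sub_apply, hbb, hbb']
      rw [hsym b' b]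
      ring
    rcases hε with h1 | h1
    · refine ⟨0, ?_⟩
      rw [h1, hdb, hdd, h1]
      field_simp
      ring
    · refine ⟨(Φ d b - Φ d d / 2) / 2, ?_⟩
      rw [h1]
      field_simp
      ring
  set t : V := d - μ • a with ht
  have hat : Φ a t = 0 := by simp only [ht, map_sub, map_smul, smul_eq_mul, had, haa]; ring
  have hta : Φ t a = 0 := by
    simp only [ht, map_sub, LinearMap.sub_apply, map_smul, LinearMap.smul_apply,
      smul_eq_mul, hda, haa]
    ring
  obtain ⟨E, hE1, hE2⟩ := eichler Φ h2 hε hsym hnd a t haa hat hta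
  have hEa : E a = a := by
    rw [hE2, haa, hta]
    simp
  have hΦtb : Φ t b = Φ d b - μ := by
    simp only [ht, map_sub, LinearMap.sub_apply, map_smul, LinearMap.smul_apply,
      smul_eq_mul, hab]
    ring
  have hΦtt : Φ t t = Φ d d := by
    simp only [ht, map_sub, LinearMap.sub_apply, map_smul, LinearMap.smul_apply,
      smul_eq_mul, had, hda, haa]
    ring
  have hEb : E b = b' := by
    rw [hE2, hab, hΦtb, hΦtt, one_smul]
    have hcoef : -(ε * (Φ d b - μ)) + -(Φ d d) / 2 * 1 = μ := by linear_combination -hμ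
    rw [hcoef, ht, hd]
    module
  exact ⟨E, hE1, hEa, hEb⟩

theorem share_second (Φ : V →ₗ[F] V →ₗ[F] F) (h2 : (2:F) ≠ 0) {ε : F} (hε : ε = 1 ∨ ε = -1)
    (hsym : ∀ x y, Φ x y = ε * Φ y x) (hnd : ∀ x, (∀ y, Φ x y = 0) → x = 0)
    (p p' q : V) (hpp : Φ p p = 0) (hp'p' : Φ p' p' = 0) (hqq : Φ q q = 0)
    (hpq : Φ p q = 1) (hp'q : Φ p' q = 1) :
    ∃ E : V ≃ₗ[F] V, (∀ x y, Φ (E x) (E y) = Φ x y) ∧ E q = q ∧ E p = p' := by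
  have hε2 : ε * ε = 1 := by rcases hε with h | h <;> rw [h] <;> ring
  have hεne : ε ≠ 0 := by rcases hε with h | h <;> rw [h] <;> norm_num
  have h1 : Φ (ε • p) (ε • p) = 0 := by
    simp only [map_smul, LinearMap.smul_apply, smul_eq_mul, hpp]; ring
  have h2' : Φ (ε • p') (ε • p') = 0 := by
    simp only [map_smul, LinearMap.smul_apply, smul_eq_mul, hp'p']; ring
  have h3 : Φ q (ε • p) = 1 := by
    rw [map_smul, smul_eq_mul, hsym q p, hpq]
    rw [mul_one] at *
    linear_combination hε2
  have h4 : Φ q (ε • p') = 1 := by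
    rw [map_smul, smul_eq_mul, hsym q p', hp'q]
    rw [mul_one] at *
    linear_combination hε2
  obtain ⟨E, hE1, hEq, hEp⟩ := share_first Φ h2 hε hsym hnd q (ε • p) (ε • p') hqq h1 h2' h3 h4
  refine ⟨E, hE1, hEq, ?_⟩
  have := hEp
  rw [map_smul] at this
  exact smul_right_injective V hεne this

theorem completion (Φ : V →ₗ[F] V →ₗ[F] F) (h2 : (2:F) ≠ 0) {ε : F} (hε : ε = 1 ∨ ε = -1)
    (hsym : ∀ x y, Φ x y = ε * Φ y x) (hnd : ∀ x, (∀ y, Φ x y = 0) → x = 0)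
    (c : V) (hcc : Φ c c = 0) (hc0 : c ≠ 0) :
    ∃ d : V, Φ d d = 0 ∧ Φ c d = 1 := by
  obtain ⟨z, hz⟩ : ∃ z, Φ c z ≠ 0 := by
    by_contra h
    push_neg at h
    exact hc0 (hnd c h)
  obtain ⟨z₁, hcz₁⟩ : ∃ z₁, Φ c z₁ = 1 :=
    ⟨(Φ c z)⁻¹ • z, by rw [map_smul, smul_eq_mul, inv_mul_cancel₀ hz]⟩
  refine ⟨z₁ - (Φ z₁ z₁ / 2) • c, ?_, ?_⟩
  · have hz₁c : Φ z₁ c = ε := by rw [hsym z₁ c, hcz₁, mul_one]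
    simp only [map_sub, map_smul, LinearMap.sub_apply, LinearMap.smul_apply, smul_eq_mul,
      hcz₁, hz₁c, hcc]
    rcases hε with h1 | h1
    · rw [h1]
      field_simp
      try ring
    · rw [alt_of_neg Φ h2 hsym h1 z₁, h1]; ring
  · rw [map_sub, map_smul, hcz₁, smul_eq_mul, hcc]
    ring

theorem transport1 (Φ : V →ₗ[F] V →ₗ[F] F) (h2 : (2:F) ≠ 0) {ε : F} (hε : ε = 1 ∨ ε = -1)
    (hsym : ∀ x y, Φ x y = ε * Φ y x) (hnd : ∀ x, (∀ y, Φ x y = 0) → x = 0)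
    (a b a' b' : V) (haa : Φ a a = 0) (hbb : Φ b b = 0) (hab : Φ a b = 1)
    (ha'a' : Φ a' a' = 0) (hb'b' : Φ b' b' = 0) (ha'b' : Φ a' b' = 1)
    (hs : Φ a' a ≠ 0) :
    ∃ ρ : V ≃ₗ[F] V, (∀ x y, Φ (ρ x) (ρ y) = Φ x y) ∧ ρ a' = a ∧ ρ b' = b := by
  have hε2 : ε * ε = 1 := by rcases hε with h | h <;> rw [h] <;> ring
  set s : F := Φ a' a with hsdef
  set bt : V := s⁻¹ • a with hbt
  have hbtbt : Φ bt bt = 0 := by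
    simp only [hbt, map_smul, LinearMap.smul_apply, smul_eq_mul, haa]; ring
  have ha'bt : Φ a' bt = 1 := by
    rw [hbt, map_smul, smul_eq_mul, ← hsdef, inv_mul_cancel₀ hs]
  obtain ⟨g₁, hg₁iso, hg₁a, hg₁b⟩ :=
    share_first Φ h2 hε hsym hnd a' b' bt ha'a' hb'b' hbtbt ha'b' ha'bt
  obtain ⟨g₂, hg₂iso, hg₂p, hg₂q⟩ := swap_pair Φ h2 hε hsym hnd a' bt ha'a' hbtbt ha'bt
  have hεa' : Φ (ε • a') (ε • a') = 0 := by
    simp only [map_smul, LinearMap.smul_apply, smul_eq_mul, ha'a']; ring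
  have hsb : Φ (s • b) (s • b) = 0 := by
    simp only [map_smul, LinearMap.smul_apply, smul_eq_mul, hbb]; ring
  have hbta' : Φ bt a' = ε := by
    simp only [hbt, map_smul, LinearMap.smul_apply, smul_eq_mul]
    rw [hsym a a', ← hsdef]
    field_simp
  have hbtεa' : Φ bt (ε • a') = 1 := by
    rw [map_smul, smul_eq_mul, hbta']
    exact hε2
  have hbtsb : Φ bt (s • b) = 1 := by
    rw [map_smul, smul_eq_mul, hbt, map_smul, LinearMap.smul_apply, smul_eq_mul, hab]
    field_simp
  obtain ⟨g₃, hg₃iso, hg₃a, hg₃b⟩ :=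
    share_first Φ h2 hε hsym hnd bt (ε • a') (s • b) hbtbt hεa' hsb hbtεa' hbtsb
  obtain ⟨g₄, hg₄iso, hg₄p, hg₄q⟩ :=
    scale_pair Φ h2 hε hsym hnd bt (s • b) hbtbt hsb hbtsb s hs
  refine ⟨((g₁.trans g₂).trans g₃).trans g₄, ?_, ?_, ?_⟩
  · intro x y
    simp only [LinearEquiv.trans_apply]
    rw [hg₄iso, hg₃iso, hg₂iso, hg₁iso]
  · simp only [LinearEquiv.trans_apply, hg₁a, hg₂p, hg₃a, hg₄p]
    rw [hbt, smul_smul, mul_inv_cancel₀ hs, one_smul]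
  · simp only [LinearEquiv.trans_apply, hg₁b, hg₂q, hg₃b, hg₄q]
    rw [smul_smul, inv_mul_cancel₀ hs, one_smul]

theorem pair_trans (Φ : V →ₗ[F] V →ₗ[F] F) (h2 : (2:F) ≠ 0) {ε : F} (hε : ε = 1 ∨ ε = -1)
    (hsym : ∀ x y, Φ x y = ε * Φ y x) (hnd : ∀ x, (∀ y, Φ x y = 0) → x = 0)
    (a b a' b' : V) (haa : Φ a a = 0) (hbb : Φ b b = 0) (hab : Φ a b = 1)
    (ha'a' : Φ a' a' = 0) (hb'b' : Φ b' b' = 0) (ha'b' : Φ a' b' = 1) :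
    ∃ ρ : V ≃ₗ[F] V, (∀ x y, Φ (ρ x) (ρ y) = Φ x y) ∧ ρ a' = a ∧ ρ b' = b := by
  have hεne : ε ≠ 0 := by rcases hε with h | h <;> rw [h] <;> norm_num
  by_cases hs : Φ a' a ≠ 0
  · exact transport1 Φ h2 hε hsym hnd a b a' b' haa hbb hab ha'a' hb'b' ha'b' hs
  push_neg at hs
  -- find intermediate isotropic c with Φ a' c ≠ 0 and Φ c a ≠ 0
  obtain ⟨c, hcc, hc1, hc2⟩ : ∃ c : V, Φ c c = 0 ∧ Φ a' c ≠ 0 ∧ Φ c a ≠ 0 := by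
    by_cases h1 : Φ a' b ≠ 0
    · refine ⟨b, hbb, h1, ?_⟩
      rw [hsym b a, hab, mul_one]
      exact hεne
    by_cases h2' : Φ b' a ≠ 0
    · exact ⟨b', hb'b', by rw [ha'b']; norm_num, h2'⟩
    push_neg at h1 h2'
    have hba' : Φ b a' = 0 := by rw [hsym b a', h1, mul_zero]
    have hb'a' : Φ b' a' = ε := by rw [hsym b' a', ha'b', mul_one]
    have hbb'2 : Φ b b' = ε * Φ b' b := hsym b b'
    refine ⟨b' + b - (Φ b' b) • a', ?_, ?_, ?_⟩
    · simp only [map_add, map_sub, map_smul, LinearMap.add_apply, LinearMap.sub_apply,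
        LinearMap.smul_apply, smul_eq_mul, hbb, hb'b', hba', hb'a', ha'a', ha'b', h1, hbb'2]
      ring
    · simp only [map_add, map_sub, map_smul, smul_eq_mul, ha'b', h1, ha'a']
      norm_num
    · simp only [map_add, map_sub, map_smul, LinearMap.add_apply, LinearMap.sub_apply,
        LinearMap.smul_apply, smul_eq_mul, h2', hs]
      rw [hsym b a, hab]
      simpa using hεne
  have hc0 : c ≠ 0 := by
    intro h
    rw [h] at hc1
    simp at hc1
  obtain ⟨d, hdd, hcd⟩ := completion Φ h2 hε hsym hnd c hcc hc0
  obtain ⟨ρ₁, hρ₁iso, hρ₁a, hρ₁b⟩ :=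
    transport1 Φ h2 hε hsym hnd c d a' b' hcc hdd hcd ha'a' hb'b' ha'b' hc1
  obtain ⟨ρ₂, hρ₂iso, hρ₂a, hρ₂b⟩ :=
    transport1 Φ h2 hε hsym hnd a b c d haa hbb hab hcc hdd hcd hc2
  refine ⟨ρ₁.trans ρ₂, ?_, ?_, ?_⟩
  · intro x y
    simp only [LinearEquiv.trans_apply]
    rw [hρ₂iso, hρ₁iso]
  · simp only [LinearEquiv.trans_apply, hρ₁a, hρ₂a]
  · simp only [LinearEquiv.trans_apply, hρ₁b, hρ₂b]

end Witt3
section Witt4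

variable {F : Type*} [Field F] {V : Type*} [AddCommGroup V] [Module F V]
variable [FiniteDimensional F V]

theorem pi_surj (Φ : V →ₗ[F] V →ₗ[F] F) (hnd : ∀ x, (∀ y, Φ x y = 0) → x = 0)
    {n : ℕ} (v : Fin n → V) (hv : LinearIndependent F v) (d : Fin n → F) :
    ∃ z : V, ∀ i, Φ (v i) z = d i := by
  set T : V →ₗ[F] (Fin n → F) := LinearMap.pi (fun i => Φ (v i)) with hTdef
  have hrange : LinearMap.range T = ⊤ := by
    by_contra hne
    obtain ⟨g, hg0, hgmap⟩ := Submodule.exists_dual_map_eq_bot_of_lt_top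
      (lt_top_iff_ne_top.2 hne) inferInstance
    set cvec : Fin n → F := fun i => g (fun j => if i = j then 1 else 0) with hcvec
    have hgeq : ∀ x : Fin n → F, g x = ∑ i, x i * cvec i := by
      intro x
      rw [LinearMap.pi_apply_eq_sum_univ g x]
      simp [hcvec, smul_eq_mul]
    have hgz : ∀ z : V, g (T z) = 0 := by
      intro z
      have : g (T z) ∈ Submodule.map g (LinearMap.range T) :=
        Submodule.mem_map_of_mem (LinearMap.mem_range_self T z)
      rw [hgmap] at this
      simpa using this
    have hczero : ∀ i, cvec i = 0 := by
      have hcomb : (∑ i, cvec i • v i) = 0 := by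
        apply hnd
        intro y
        have h1 : Φ (∑ i, cvec i • v i) y = ∑ i, cvec i * Φ (v i) y := by
          rw [map_sum, LinearMap.sum_apply]
          congr 1
          ext i
          rw [map_smul, LinearMap.smul_apply, smul_eq_mul]
        rw [h1]
        have h2 := hgz y
        rw [hgeq] at h2
        rw [← h2]
        congr 1
        ext i
        rw [hTdef]
        simp [LinearMap.pi_apply, mul_comm]
      have := linearIndependent_iff'.1 hv Finset.univ cvec hcomb
      exact fun i => this i (Finset.mem_univ i)
    apply hg0
    refine LinearMap.ext fun x => ?_
    rw [hgeq]
    simp [hczero]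
  obtain ⟨z, hz⟩ := (LinearMap.range_eq_top.1 hrange) d
  refine ⟨z, fun i => ?_⟩
  have hTz : T z i = d i := by rw [hz]
  rwa [hTdef, LinearMap.pi_apply] at hTz

end Witt4
universe uV

theorem witt_nondeg {F : Type*} [Field F] (h2 : (2:F) ≠ 0) {ε : F} (hε : ε = 1 ∨ ε = -1) :
    ∀ (n : ℕ) (V : Type uV) (_ : AddCommGroup V) (_ : Module F V)
      (_ : FiniteDimensional F V) (Φ : V →ₗ[F] V →ₗ[F] F),
      (∀ x, (∀ y, Φ x y = 0) → x = 0) →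
      (∀ x y, Φ x y = ε * Φ y x) →
      ∀ (v w : Fin n → V), (∀ i j, Φ (v i) (v j) = Φ (w i) (w j)) →
      (∀ c : Fin n → F, (∀ i, Φ (v i) (∑ j, c j • v j) = 0) → ∀ j, c j = 0) →
      ∃ h : V ≃ₗ[F] V, (∀ x y, Φ (h x) (h y) = Φ x y) ∧ ∀ i, h (v i) = w i := by
  intro n
  induction n using Nat.strong_induction_on with
  | _ n IH =>
  intro V _ _ _ Φ hnd hsym v w hG hvnd
  have hε2 : ε * ε = 1 := by rcases hε with h | h <;> rw [h] <;> ring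
  by_cases hn0 : n = 0
  · subst hn0
    exact ⟨LinearEquiv.refl F V, by simp, fun i => i.elim0⟩
  obtain ⟨m, rfl⟩ : ∃ m, n = m + 1 :=
    ⟨n - 1, (Nat.succ_pred_eq_of_pos (Nat.pos_of_ne_zero hn0)).symm⟩
  by_cases hA : ∃ i, Φ (v i) (v i) ≠ 0
  -- ================= CASE A : an anisotropic diagonal entry =================
  · obtain ⟨i₀, hi₀⟩ := hA
    obtain ⟨ρ, hρiso, hρv⟩ := two_reflections Φ h2 hε hsym hnd (v i₀) (w i₀) hi₀ (hG i₀ i₀)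
    have hρsymm := symm_isometry Φ ρ hρiso
    set w' : Fin (m+1) → V := fun i => ρ.symm (w i) with hw'def
    have hG' : ∀ i j, Φ (v i) (v j) = Φ (w' i) (w' j) := by
      intro i j
      simp only [hw'def]
      rw [hρsymm, hG]
    have hw'i₀ : w' i₀ = v i₀ := by
      simp only [hw'def]
      rw [← hρv, LinearEquiv.symm_apply_apply]
    set S : Submodule F V := LinearMap.ker (Φ (v i₀)) with hSdef
    have hmem : ∀ z : V, z - (Φ (v i₀) z / Φ (v i₀) (v i₀)) • (v i₀) ∈ S := by
      intro z
      rw [hSdef, LinearMap.mem_ker, map_sub, map_smul, smul_eq_mul, div_mul_cancel₀ _ hi₀,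
        sub_self]
    have hSker : ∀ x : ↥S, Φ (v i₀) (x : V) = 0 := fun x => LinearMap.mem_ker.1 x.2
    have hSker' : ∀ x : ↥S, Φ (x : V) (v i₀) = 0 := fun x => by
      rw [hsym ((x : V)) (v i₀), hSker x, mul_zero]
    set ΦS : ↥S →ₗ[F] ↥S →ₗ[F] F := (Φ.domRestrict S).compl₂ S.subtype with hΦSdef
    have hΦSapp : ∀ (x y : ↥S), ΦS x y = Φ (x : V) (y : V) := by
      intro x y
      simp [hΦSdef]
    have hsymS : ∀ x y : ↥S, ΦS x y = ε * ΦS y x := fun x y => by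
      rw [hΦSapp, hΦSapp]; exact hsym _ _
    have hndS : ∀ x : ↥S, (∀ y : ↥S, ΦS x y = 0) → x = 0 := by
      intro x hx
      have hx1 : (x : V) = 0 := by
        apply hnd
        intro z
        have h1 : Φ (x : V) (z - (Φ (v i₀) z / Φ (v i₀) (v i₀)) • (v i₀)) = 0 := by
          have := hx ⟨_, hmem z⟩
          rwa [hΦSapp] at this
        have h2 : Φ (x : V) ((Φ (v i₀) z / Φ (v i₀) (v i₀)) • (v i₀)) = 0 := by
          rw [map_smul, smul_eq_mul, hSker' x, mul_zero]
        rw [map_sub, h2, sub_zero] at h1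
        exact h1
      exact Subtype.ext hx1
    set cf : Fin m → F := fun j => Φ (v i₀) (v (i₀.succAbove j)) / Φ (v i₀) (v i₀) with hcf
    set vt : Fin m → ↥S := fun j => ⟨v (i₀.succAbove j) - cf j • v i₀, hmem _⟩ with hvt
    have hw'pair : ∀ k, Φ (v i₀) (w' k) = Φ (v i₀) (v k) := by
      intro k
      conv_lhs => rw [← hw'i₀]
      rw [← hG' i₀ k]
    have hw'pair' : ∀ k, Φ (w' k) (v i₀) = Φ (v k) (v i₀) := fun k => by
      rw [hsym (w' k) (v i₀), hsym (v k) (v i₀), hw'pair]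
    have hwtmem : ∀ j : Fin m, w' (i₀.succAbove j) - cf j • v i₀ ∈ S := by
      intro j
      rw [hSdef, LinearMap.mem_ker, map_sub, map_smul, smul_eq_mul, hw'pair]
      simp only [hcf]
      rw [div_mul_cancel₀ _ hi₀, sub_self]
    set wt : Fin m → ↥S := fun j => ⟨w' (i₀.succAbove j) - cf j • v i₀, hwtmem j⟩ with hwt
    have expand : ∀ (x y : V) (cx cy : F), Φ (x - cx • v i₀) (y - cy • v i₀)
        = Φ x y - cy * Φ x (v i₀) - cx * Φ (v i₀) y + cx * cy * Φ (v i₀) (v i₀) := by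
      intro x y cx cy
      simp only [map_sub, map_smul, LinearMap.sub_apply, LinearMap.smul_apply, smul_eq_mul]
      ring
    have hGt : ∀ i j, ΦS (vt i) (vt j) = ΦS (wt i) (wt j) := by
      intro i j
      rw [hΦSapp, hΦSapp]
      simp only [hvt, hwt]
      rw [expand, expand, hG' (i₀.succAbove i) (i₀.succAbove j), hw'pair, hw'pair']
    have hvndt : ∀ c : Fin m → F, (∀ i, ΦS (vt i) (∑ j, c j • vt j) = 0) → ∀ j, c j = 0 := by
      intro c hc
      have hXmem : (↑(∑ j, c j • vt j) : V) ∈ S := (∑ j, c j • vt j).2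
      have hXv : (↑(∑ j, c j • vt j) : V) = ∑ j, c j • (v (i₀.succAbove j) - cf j • v i₀) := by
        simp only [hvt]
        push_cast
        rfl
      have hc'zero : ∀ j, (i₀.insertNth (α := fun _ => F) (-(∑ j, c j * cf j)) c) j = 0 := by
        apply hvnd
        intro i
        have hsum : (∑ k, (i₀.insertNth (α := fun _ => F) (-(∑ j, c j * cf j)) c) k • v k)
            = (↑(∑ j, c j • vt j) : V) := by
          rw [Fin.sum_univ_succAbove (fun k => (i₀.insertNth (α := fun _ => F) (-(∑ j, c j * cf j)) c) k • v k) i₀]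
          simp only [Fin.insertNth_apply_same, Fin.insertNth_apply_succAbove]
          rw [hXv]
          simp only [smul_sub, Finset.sum_sub_distrib, smul_smul]
          rw [← Finset.sum_smul]
          module
        rw [hsum]
        refine Fin.succAboveCases (α := fun i => Φ (v i) (↑(∑ j, c j • vt j) : V) = 0)
          i₀ ?_ (fun j => ?_) i
        · exact LinearMap.mem_ker.1 hXmem
        · beta_reduce
          have hv_decomp : v (i₀.succAbove j) = (vt j : V) + cf j • v i₀ := by
            simp only [hvt]
            abel
          rw [hv_decomp, map_add, LinearMap.add_apply]
          have h1 : Φ (vt j : V) (↑(∑ j, c j • vt j) : V) = 0 := by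
            rw [← hΦSapp]; exact hc j
          rw [h1, map_smul, LinearMap.smul_apply, smul_eq_mul, LinearMap.mem_ker.1 hXmem]
          ring
      intro j
      have := hc'zero (i₀.succAbove j)
      rwa [Fin.insertNth_apply_succAbove] at this
    obtain ⟨h₁, hh₁iso, hh₁v⟩ := IH m (Nat.lt_succ_self m) ↥S inferInstance inferInstance
      inferInstance ΦS hndS hsymS vt wt hGt hvndt
    set Q : V →ₗ[F] V := (Φ (v i₀) (v i₀))⁻¹ • ((Φ (v i₀)).smulRight (v i₀)) with hQdef
    have hQapp : ∀ z, Q z = (Φ (v i₀) z / Φ (v i₀) (v i₀)) • v i₀ := by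
      intro z
      simp only [hQdef, LinearMap.smul_apply, LinearMap.smulRight_apply, smul_smul,
        div_eq_inv_mul]
    set D : V →ₗ[F] V := LinearMap.id - Q with hDdef
    have hPmem : ∀ z, D z ∈ S := fun z => by
      simp only [hDdef, LinearMap.sub_apply, LinearMap.id_apply, hQapp]
      exact hmem z
    set P : V →ₗ[F] ↥S := LinearMap.codRestrict S D hPmem with hPdef
    have hPapp : ∀ z, (P z : V) = z - Q z := fun z => by
      simp only [hPdef, LinearMap.codRestrict_apply, hDdef, LinearMap.sub_apply,
        LinearMap.id_apply]
    set T : V →ₗ[F] V := Q + S.subtype.comp (h₁.toLinearMap.comp P) with hTdef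
    have hTapp : ∀ z, T z = Q z + (h₁ (P z) : V) := fun z => by
      simp only [hTdef, LinearMap.add_apply, LinearMap.comp_apply, Submodule.subtype_apply,
        LinearEquiv.coe_coe]
    have hQS : ∀ (y : V) (x : ↥S), Φ (Q y) (x : V) = 0 := by
      intro y x
      rw [hQapp, map_smul, LinearMap.smul_apply, smul_eq_mul, hSker x, mul_zero]
    have hSQ : ∀ (x : ↥S) (y : V), Φ (x : V) (Q y) = 0 := by
      intro x y
      rw [hQapp, map_smul, smul_eq_mul, hSker' x, mul_zero]
    have hTiso : ∀ z z', Φ (T z) (T z') = Φ z z' := by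
      intro z z'
      rw [hTapp, hTapp]
      have hup : Φ (h₁ (P z) : V) (h₁ (P z') : V) = Φ ((P z) : V) ((P z') : V) := by
        have := hh₁iso (P z) (P z')
        rwa [hΦSapp, hΦSapp] at this
      have hdz : z = Q z + ((P z) : V) := by rw [hPapp]; abel
      have hdz' : z' = Q z' + ((P z') : V) := by rw [hPapp]; abel
      conv_rhs => rw [hdz, hdz']
      simp only [map_add, LinearMap.add_apply]
      rw [hup, hQS z (h₁ (P z')), hSQ (h₁ (P z)) z', hQS z (P z'), hSQ (P z) z']
    have hTv : ∀ i, T (v i) = w' i := by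
      intro i
      refine Fin.succAboveCases (α := fun i => T (v i) = w' i) i₀ ?_ (fun j => ?_) i
      · beta_reduce
        rw [hTapp]
        have h1 : Q (v i₀) = v i₀ := by rw [hQapp, div_self hi₀, one_smul]
        have hP0 : P (v i₀) = 0 := by
          apply Subtype.ext
          rw [hPapp, h1, sub_self, Submodule.coe_zero]
        rw [h1, hP0, map_zero, Submodule.coe_zero, add_zero, hw'i₀]
      · beta_reduce
        rw [hTapp]
        have h1 : Q (v (i₀.succAbove j)) = cf j • v i₀ := by
          rw [hQapp]
          try simp only [hcf]
        have hPj : P (v (i₀.succAbove j)) = vt j := by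
          apply Subtype.ext
          rw [hPapp, h1]
          try simp only [hvt]
        rw [h1, hPj, hh₁v j]
        simp only [hwt]
        abel
    obtain ⟨HE, hHE1, hHE2⟩ := mk_isometry Φ hnd T hTiso
    refine ⟨HE.trans ρ, ?_, ?_⟩
    · intro x y
      simp only [LinearEquiv.trans_apply]
      rw [hρiso, hHE1]
    · intro i
      simp only [LinearEquiv.trans_apply]
      rw [hHE2, hTv i]
      simp only [hw'def]
      exact ρ.apply_symm_apply (w i)
  -- ================= CASE B : all diagonal entries zero =================
  · push_neg at hA
    have hεne : ε ≠ 0 := by rcases hε with h | h <;> rw [h] <;> norm_num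
    obtain ⟨j₀, hj₀⟩ : ∃ j, Φ (v j) (v 0) ≠ 0 := by
      by_contra hno
      push_neg at hno
      have h0 := hvnd (fun k => if k = 0 then 1 else 0) ?_ 0
      · simp at h0
      · intro i
        have hsum0 : (∑ j, (fun k => if k = 0 then (1:F) else 0) j • v j) = v 0 := by
          rw [Finset.sum_eq_single 0]
          · simp
          · intro b _ hb
            simp [hb]
          · simp
        rw [hsum0]
        exact hno i
    have hj₀ne : j₀ ≠ (0 : Fin (m+1)) := by
      intro h
      rw [h] at hj₀
      exact hj₀ (hA 0)
    have hsne : Φ (v 0) (v j₀) ≠ 0 := by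
      rw [hsym (v 0) (v j₀)]
      exact mul_ne_zero hεne hj₀
    obtain ⟨m', rfl⟩ : ∃ m', m = m' + 1 := by
      rcases m with _ | m'
      · exact absurd (Fin.ext (Nat.lt_one_iff.1 j₀.isLt)) hj₀ne
      · exact ⟨m', rfl⟩
    have hj₀pos : (0 : Fin (m' + 2)) < j₀ := Fin.pos_of_ne_zero hj₀ne
    have hzero : j₀.succAbove 0 = 0 := by
      rw [Fin.succAbove_of_castSucc_lt _ _ (by simpa using hj₀pos)]
      simp
    have h10 : Φ (v j₀) (v 0) = ε * Φ (v 0) (v j₀) := hsym (v j₀) (v 0)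
    -- hyperbolic pairs and global isometry ρ
    have hqq : Φ ((Φ (v 0) (v j₀))⁻¹ • v j₀) ((Φ (v 0) (v j₀))⁻¹ • v j₀) = 0 := by
      simp only [map_smul, LinearMap.smul_apply, smul_eq_mul, hA j₀]
      ring
    have hpq : Φ (v 0) ((Φ (v 0) (v j₀))⁻¹ • v j₀) = 1 := by
      rw [map_smul, smul_eq_mul, inv_mul_cancel₀ hsne]
    have hq'q' : Φ ((Φ (v 0) (v j₀))⁻¹ • w j₀) ((Φ (v 0) (v j₀))⁻¹ • w j₀) = 0 := by
      simp only [map_smul, LinearMap.smul_apply, smul_eq_mul, ← hG j₀ j₀, hA j₀]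
      ring
    have hp'q' : Φ (w 0) ((Φ (v 0) (v j₀))⁻¹ • w j₀) = 1 := by
      rw [map_smul, smul_eq_mul, ← hG 0 j₀, inv_mul_cancel₀ hsne]
    obtain ⟨ρ, hρiso, hρ0, hρ1⟩ := pair_trans Φ h2 hε hsym hnd (w 0)
      ((Φ (v 0) (v j₀))⁻¹ • w j₀) (v 0) ((Φ (v 0) (v j₀))⁻¹ • v j₀)
      (by rw [← hG 0 0]; exact hA 0) hq'q' hp'q' (hA 0) hqq hpq
    have hρv0 : ρ (v 0) = w 0 := hρ0
    have hρvj₀ : ρ (v j₀) = w j₀ := by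
      have h1 : ρ ((Φ (v 0) (v j₀))⁻¹ • v j₀) = (Φ (v 0) (v j₀))⁻¹ • w j₀ := hρ1
      rw [map_smul] at h1
      have := congrArg (fun z => (Φ (v 0) (v j₀)) • z) h1
      simpa [smul_smul, mul_inv_cancel₀ hsne] using this
    have hρsymm := symm_isometry Φ ρ hρiso
    set w' : Fin (m'+2) → V := fun i => ρ.symm (w i) with hw'def
    have hG' : ∀ i j, Φ (v i) (v j) = Φ (w' i) (w' j) := by
      intro i j
      simp only [hw'def]
      rw [hρsymm, hG]
    have hw'0 : w' 0 = v 0 := by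
      simp only [hw'def]
      rw [← hρv0, LinearEquiv.symm_apply_apply]
    have hw'j₀ : w' j₀ = v j₀ := by
      simp only [hw'def]
      rw [← hρvj₀, LinearEquiv.symm_apply_apply]
    -- the orthogonal complement of the hyperbolic plane
    set S : Submodule F V := LinearMap.ker (Φ (v 0)) ⊓ LinearMap.ker (Φ (v j₀)) with hSdef
    have hcoef1 : ∀ z : V, Φ (v 0) (z - (ε * Φ (v j₀) z / Φ (v 0) (v j₀)) • v 0
        - (Φ (v 0) z / Φ (v 0) (v j₀)) • v j₀) = 0 := by
      intro z
      simp only [map_sub, map_smul, smul_eq_mul, hA 0]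
      rw [div_mul_cancel₀ _ hsne]
      ring
    have hcoef2 : ∀ z : V, Φ (v j₀) (z - (ε * Φ (v j₀) z / Φ (v 0) (v j₀)) • v 0
        - (Φ (v 0) z / Φ (v 0) (v j₀)) • v j₀) = 0 := by
      intro z
      simp only [map_sub, map_smul, smul_eq_mul, hA j₀, h10]
      field_simp
      rcases hε with h | h <;> rw [h] <;> ring
    have hmem : ∀ z : V, z - (ε * Φ (v j₀) z / Φ (v 0) (v j₀)) • v 0
        - (Φ (v 0) z / Φ (v 0) (v j₀)) • v j₀ ∈ S := by
      intro z
      rw [hSdef, Submodule.mem_inf]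
      exact ⟨LinearMap.mem_ker.2 (hcoef1 z), LinearMap.mem_ker.2 (hcoef2 z)⟩
    have hSker0 : ∀ x : ↥S, Φ (v 0) (x : V) = 0 := fun x =>
      LinearMap.mem_ker.1 (Submodule.mem_inf.1 x.2).1
    have hSker1 : ∀ x : ↥S, Φ (v j₀) (x : V) = 0 := fun x =>
      LinearMap.mem_ker.1 (Submodule.mem_inf.1 x.2).2
    have hSker0' : ∀ x : ↥S, Φ (x : V) (v 0) = 0 := fun x => by
      rw [hsym ((x : V)) (v 0), hSker0 x, mul_zero]
    have hSker1' : ∀ x : ↥S, Φ (x : V) (v j₀) = 0 := fun x => by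
      rw [hsym ((x : V)) (v j₀), hSker1 x, mul_zero]
    set ΦS : ↥S →ₗ[F] ↥S →ₗ[F] F := (Φ.domRestrict S).compl₂ S.subtype with hΦSdef
    have hΦSapp : ∀ (x y : ↥S), ΦS x y = Φ (x : V) (y : V) := by
      intro x y
      simp [hΦSdef]
    have hsymS : ∀ x y : ↥S, ΦS x y = ε * ΦS y x := fun x y => by
      rw [hΦSapp, hΦSapp]; exact hsym _ _
    have hndS : ∀ x : ↥S, (∀ y : ↥S, ΦS x y = 0) → x = 0 := by
      intro x hx
      have hx1 : (x : V) = 0 := by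
        apply hnd
        intro z
        have h1 : Φ (x : V) (z - (ε * Φ (v j₀) z / Φ (v 0) (v j₀)) • v 0
            - (Φ (v 0) z / Φ (v 0) (v j₀)) • v j₀) = 0 := by
          have := hx ⟨_, hmem z⟩
          rwa [hΦSapp] at this
        rw [map_sub, map_sub, map_smul, map_smul, smul_eq_mul, smul_eq_mul,
          hSker0' x, hSker1' x, mul_zero, mul_zero, sub_zero, sub_zero] at h1
        exact h1
      exact Subtype.ext hx1
    -- the reduced tuples
    set cA : Fin m' → F := fun k => ε * Φ (v j₀) (v (j₀.succAbove k.succ)) / Φ (v 0) (v j₀)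
      with hcA
    set cB : Fin m' → F := fun k => Φ (v 0) (v (j₀.succAbove k.succ)) / Φ (v 0) (v j₀) with hcB
    set vt : Fin m' → ↥S := fun k =>
      ⟨v (j₀.succAbove k.succ) - cA k • v 0 - cB k • v j₀, hmem _⟩ with hvt
    have hw'pA : ∀ k, Φ (v 0) (w' k) = Φ (v 0) (v k) := by
      intro k
      conv_lhs => rw [← hw'0]
      rw [← hG' 0 k]
    have hw'pB : ∀ k, Φ (v j₀) (w' k) = Φ (v j₀) (v k) := by
      intro k
      conv_lhs => rw [← hw'j₀]
      rw [← hG' j₀ k]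
    have hw'pA' : ∀ k, Φ (w' k) (v 0) = Φ (v k) (v 0) := fun k => by
      rw [hsym (w' k) (v 0), hsym (v k) (v 0), hw'pA]
    have hw'pB' : ∀ k, Φ (w' k) (v j₀) = Φ (v k) (v j₀) := fun k => by
      rw [hsym (w' k) (v j₀), hsym (v k) (v j₀), hw'pB]
    have hwtmem : ∀ k : Fin m', w' (j₀.succAbove k.succ) - cA k • v 0 - cB k • v j₀ ∈ S := by
      intro k
      rw [hSdef, Submodule.mem_inf]
      constructor
      · rw [LinearMap.mem_ker, map_sub, map_sub, map_smul, map_smul, smul_eq_mul, smul_eq_mul,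
          hw'pA]
        have := hcoef1 (v (j₀.succAbove k.succ))
        rw [map_sub, map_sub, map_smul, map_smul, smul_eq_mul, smul_eq_mul] at this
        exact this
      · rw [LinearMap.mem_ker, map_sub, map_sub, map_smul, map_smul, smul_eq_mul, smul_eq_mul,
          hw'pB]
        have := hcoef2 (v (j₀.succAbove k.succ))
        rw [map_sub, map_sub, map_smul, map_smul, smul_eq_mul, smul_eq_mul] at this
        exact this
    set wt : Fin m' → ↥S := fun k =>
      ⟨w' (j₀.succAbove k.succ) - cA k • v 0 - cB k • v j₀, hwtmem k⟩ with hwt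
    have expand2 : ∀ (x y : V) (ca cb da db : F),
        Φ (x - ca • v 0 - cb • v j₀) (y - da • v 0 - db • v j₀)
        = Φ x y - da * Φ x (v 0) - db * Φ x (v j₀) - ca * Φ (v 0) y
          + ca * da * Φ (v 0) (v 0) + ca * db * Φ (v 0) (v j₀) - cb * Φ (v j₀) y
          + cb * da * Φ (v j₀) (v 0) + cb * db * Φ (v j₀) (v j₀) := by
      intro x y ca cb da db
      simp only [map_sub, map_smul, LinearMap.sub_apply, LinearMap.smul_apply, smul_eq_mul]
      ring
    have hGt : ∀ i j, ΦS (vt i) (vt j) = ΦS (wt i) (wt j) := by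
      intro i j
      rw [hΦSapp, hΦSapp]
      simp only [hvt, hwt]
      rw [expand2, expand2, hG' (j₀.succAbove i.succ) (j₀.succAbove j.succ),
        hw'pA (j₀.succAbove j.succ), hw'pB (j₀.succAbove j.succ),
        hw'pA' (j₀.succAbove i.succ), hw'pB' (j₀.succAbove i.succ)]
    have hvndt : ∀ c : Fin m' → F, (∀ i, ΦS (vt i) (∑ j, c j • vt j) = 0) → ∀ j, c j = 0 := by
      intro c hc
      have hXmem : (↑(∑ j, c j • vt j) : V) ∈ S := (∑ j, c j • vt j).2
      have hXv : (↑(∑ j, c j • vt j) : V)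
          = ∑ j, c j • (v (j₀.succAbove j.succ) - cA j • v 0 - cB j • v j₀) := by
        simp only [hvt]
        push_cast
        rfl
      have hc'zero : ∀ j, (j₀.insertNth (α := fun _ => F) (-(∑ k, c k * cB k))
          (Fin.cons (-(∑ k, c k * cA k)) c)) j = 0 := by
        apply hvnd
        intro i
        have hsum : (∑ k, (j₀.insertNth (α := fun _ => F) (-(∑ k, c k * cB k))
            (Fin.cons (-(∑ k, c k * cA k)) c)) k • v k) = (↑(∑ j, c j • vt j) : V) := by
          rw [Fin.sum_univ_succAbove (fun k => (j₀.insertNth (α := fun _ => F)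
            (-(∑ k, c k * cB k)) (Fin.cons (-(∑ k, c k * cA k)) c)) k • v k) j₀]
          simp only [Fin.insertNth_apply_same, Fin.insertNth_apply_succAbove]
          rw [Fin.sum_univ_succ]
          simp only [Fin.cons_zero, Fin.cons_succ, hzero]
          rw [hXv]
          simp only [smul_sub, Finset.sum_sub_distrib, smul_smul]
          rw [← Finset.sum_smul, ← Finset.sum_smul]
          module
        rw [hsum]
        refine Fin.succAboveCases
          (α := fun i => Φ (v i) (↑(∑ j, c j • vt j) : V) = 0) j₀ ?_ (fun l => ?_) i
        · exact LinearMap.mem_ker.1 (Submodule.mem_inf.1 hXmem).2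
        · refine Fin.cases ?_ (fun k => ?_) l
          · beta_reduce
            rw [hzero]
            exact LinearMap.mem_ker.1 (Submodule.mem_inf.1 hXmem).1
          · beta_reduce
            have hv_decomp : v (j₀.succAbove k.succ)
                = (vt k : V) + cA k • v 0 + cB k • v j₀ := by
              simp only [hvt]
              abel
            rw [hv_decomp, map_add, map_add, LinearMap.add_apply, LinearMap.add_apply]
            have h1 : Φ (vt k : V) (↑(∑ j, c j • vt j) : V) = 0 := by
              rw [← hΦSapp]; exact hc k
            rw [h1, map_smul, map_smul, LinearMap.smul_apply, LinearMap.smul_apply,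
              smul_eq_mul, smul_eq_mul, LinearMap.mem_ker.1 (Submodule.mem_inf.1 hXmem).1,
              LinearMap.mem_ker.1 (Submodule.mem_inf.1 hXmem).2]
            ring
      intro j
      have := hc'zero (j₀.succAbove j.succ)
      rwa [Fin.insertNth_apply_succAbove, Fin.cons_succ] at this
    obtain ⟨h₁, hh₁iso, hh₁v⟩ := IH m' (by omega) ↥S inferInstance inferInstance
      inferInstance ΦS hndS hsymS vt wt hGt hvndt
    set Q : V →ₗ[F] V := (ε * (Φ (v 0) (v j₀))⁻¹) • ((Φ (v j₀)).smulRight (v 0))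
      + (Φ (v 0) (v j₀))⁻¹ • ((Φ (v 0)).smulRight (v j₀)) with hQdef
    have hQapp : ∀ z, Q z = (ε * Φ (v j₀) z / Φ (v 0) (v j₀)) • v 0
        + (Φ (v 0) z / Φ (v 0) (v j₀)) • v j₀ := by
      intro z
      simp only [hQdef, LinearMap.add_apply, LinearMap.smul_apply, LinearMap.smulRight_apply,
        smul_smul]
      module
    set D : V →ₗ[F] V := LinearMap.id - Q with hDdef
    have hPmem : ∀ z, D z ∈ S := fun z => by
      simp only [hDdef, LinearMap.sub_apply, LinearMap.id_apply, hQapp]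
      rw [sub_add_eq_sub_sub]
      exact hmem z
    set P : V →ₗ[F] ↥S := LinearMap.codRestrict S D hPmem with hPdef
    have hPapp : ∀ z, (P z : V) = z - Q z := fun z => by
      simp only [hPdef, LinearMap.codRestrict_apply, hDdef, LinearMap.sub_apply,
        LinearMap.id_apply]
    set T : V →ₗ[F] V := Q + S.subtype.comp (h₁.toLinearMap.comp P) with hTdef
    have hTapp : ∀ z, T z = Q z + (h₁ (P z) : V) := fun z => by
      simp only [hTdef, LinearMap.add_apply, LinearMap.comp_apply, Submodule.subtype_apply,
        LinearEquiv.coe_coe]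
    have hQS : ∀ (y : V) (x : ↥S), Φ (Q y) (x : V) = 0 := by
      intro y x
      rw [hQapp, map_add, LinearMap.add_apply, map_smul, map_smul, LinearMap.smul_apply,
        LinearMap.smul_apply, smul_eq_mul, smul_eq_mul, hSker0 x, hSker1 x]
      ring
    have hSQ : ∀ (x : ↥S) (y : V), Φ (x : V) (Q y) = 0 := by
      intro x y
      rw [hQapp, map_add, map_smul, map_smul, smul_eq_mul, smul_eq_mul,
        hSker0' x, hSker1' x]
      ring
    have hTiso : ∀ z z', Φ (T z) (T z') = Φ z z' := by
      intro z z'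
      rw [hTapp, hTapp]
      have hup : Φ (h₁ (P z) : V) (h₁ (P z') : V) = Φ ((P z) : V) ((P z') : V) := by
        have := hh₁iso (P z) (P z')
        rwa [hΦSapp, hΦSapp] at this
      have hdz : z = Q z + ((P z) : V) := by rw [hPapp]; abel
      have hdz' : z' = Q z' + ((P z') : V) := by rw [hPapp]; abel
      conv_rhs => rw [hdz, hdz']
      simp only [map_add, LinearMap.add_apply]
      rw [hup, hQS z (h₁ (P z')), hSQ (h₁ (P z)) z', hQS z (P z'), hSQ (P z) z']
    have hQ0 : Q (v 0) = v 0 := by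
      rw [hQapp, hA 0, h10]
      have hco : ε * (ε * Φ (v 0) (v j₀)) / Φ (v 0) (v j₀) = 1 := by
        field_simp
        rcases hε with h | h <;> rw [h] <;> ring
      rw [hco]
      simp
    have hQj₀ : Q (v j₀) = v j₀ := by
      rw [hQapp, hA j₀, div_self hsne]
      simp
    have hTv : ∀ i, T (v i) = w' i := by
      intro i
      refine Fin.succAboveCases (α := fun i => T (v i) = w' i) j₀ ?_ (fun l => ?_) i
      · beta_reduce
        rw [hTapp]
        have hP0 : P (v j₀) = 0 := by
          apply Subtype.ext
          rw [hPapp, hQj₀, sub_self, Submodule.coe_zero]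
        rw [hQj₀, hP0, map_zero, Submodule.coe_zero, add_zero, hw'j₀]
      · refine Fin.cases ?_ (fun k => ?_) l
        · beta_reduce
          rw [hzero, hTapp]
          have hP0 : P (v 0) = 0 := by
            apply Subtype.ext
            rw [hPapp, hQ0, sub_self, Submodule.coe_zero]
          rw [hQ0, hP0, map_zero, Submodule.coe_zero, add_zero, hw'0]
        · beta_reduce
          rw [hTapp]
          have h1 : Q (v (j₀.succAbove k.succ)) = cA k • v 0 + cB k • v j₀ := by
            rw [hQapp]
            try simp only [hcA, hcB]
          have hPj : P (v (j₀.succAbove k.succ)) = vt k := by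
            apply Subtype.ext
            rw [hPapp, h1, sub_add_eq_sub_sub]
            try simp only [hvt]
          rw [h1, hPj, hh₁v k]
          simp only [hwt]
          abel
    obtain ⟨HE, hHE1, hHE2⟩ := mk_isometry Φ hnd T hTiso
    refine ⟨HE.trans ρ, ?_, ?_⟩
    · intro x y
      simp only [LinearEquiv.trans_apply]
      rw [hρiso, hHE1]
    · intro i
      simp only [LinearEquiv.trans_apply]
      rw [hHE2, hTv i]
      simp only [hw'def]
      exact ρ.apply_symm_apply (w i)
section Witt5

variable {F : Type*} [Field F] {V : Type uV} [AddCommGroup V] [Module F V]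
variable [FiniteDimensional F V]

/-- Witt extension theorem, tuple form: two tuples with equal Gram matrices are related
by an isometry of the whole space. -/
theorem witt_tuple (Φ : V →ₗ[F] V →ₗ[F] F) (h2 : (2:F) ≠ 0) {ε : F} (hε : ε = 1 ∨ ε = -1)
    (hsym : ∀ x y, Φ x y = ε * Φ y x) (hnd : ∀ x, (∀ y, Φ x y = 0) → x = 0) :
    ∀ (k n : ℕ), Module.finrank F V ≤ n + k → ∀ (v w : Fin n → V), LinearIndependent F v →
      LinearIndependent F w → (∀ i j, Φ (v i) (v j) = Φ (w i) (w j)) →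
      ∃ h : V ≃ₗ[F] V, (∀ x y, Φ (h x) (h y) = Φ x y) ∧ ∀ i, h (v i) = w i := by
  have hε2 : ε * ε = 1 := by rcases hε with h | h <;> rw [h] <;> ring
  have hflip : ∀ x y : V, Φ x y = 0 → Φ y x = 0 := fun x y h => by
    rw [hsym y x, h, mul_zero]
  have hspan_ker : ∀ {n : ℕ} (v : Fin n → V) (r : V), (∀ i, Φ r (v i) = 0) →
      ∀ x ∈ Submodule.span F (Set.range v), Φ r x = 0 := by
    intro n v r hr x hx
    have hle : Submodule.span F (Set.range v) ≤ LinearMap.ker (Φ r) := by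
      rw [Submodule.span_le]
      rintro _ ⟨i, rfl⟩
      exact LinearMap.mem_ker.2 (hr i)
    exact LinearMap.mem_ker.1 (hle hx)
  intro k
  induction k with
  | zero =>
    intro n hle v w hv hw hG
    have hcard : n = Module.finrank F V := le_antisymm
      (by simpa using hv.fintype_card_le_finrank) (by simpa using hle)
    have hspan : Submodule.span F (Set.range v) = ⊤ :=
      hv.span_eq_top_of_card_eq_finrank' (by simpa using hcard)
    refine witt_nondeg h2 hε n V inferInstance inferInstance inferInstance Φ hnd hsym v w hG ?_
    intro c hc
    have hr0 : (∑ j, c j • v j) = 0 := by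
      apply hnd
      intro y
      have hy : y ∈ Submodule.span F (Set.range v) := by rw [hspan]; exact Submodule.mem_top
      exact hspan_ker v _ (fun i => hflip _ _ (hc i)) y hy
    have := linearIndependent_iff'.1 hv Finset.univ c hr0
    exact fun j => this j (Finset.mem_univ j)
  | succ k IHk =>
    intro n hle v w hv hw hG
    by_cases hcnd : ∀ c : Fin n → F, (∀ i, Φ (v i) (∑ j, c j • v j) = 0) → ∀ j, c j = 0
    · exact witt_nondeg h2 hε n V inferInstance inferInstance inferInstance Φ hnd hsym v w hG hcnd
    · push_neg at hcnd
      obtain ⟨c, hcrad, j₁, hcj₁⟩ := hcnd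
      -- expansion helpers
      have hexp2 : ∀ (u : Fin n → V) (x : V), Φ x (∑ j, c j • u j) = ∑ j, c j * Φ x (u j) := by
        intro u x
        rw [map_sum]
        congr 1
        ext j
        rw [map_smul, smul_eq_mul]
      have hexp1 : ∀ (u : Fin n → V) (x : V), Φ (∑ j, c j • u j) x = ∑ j, c j * Φ (u j) x := by
        intro u x
        rw [map_sum, LinearMap.sum_apply]
        congr 1
        ext j
        rw [map_smul, LinearMap.smul_apply, smul_eq_mul]
      have hrw : ∀ i, Φ (w i) (∑ j, c j • w j) = 0 := by
        intro i
        rw [hexp2]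
        have := hcrad i
        rw [hexp2] at this
        rw [← this]
        congr 1
        ext j
        rw [hG]
      set d : Fin n → F := fun i => if i = j₁ then (c j₁)⁻¹ else 0 with hd
      obtain ⟨zv, hzv⟩ := pi_surj Φ hnd v hv d
      obtain ⟨zw, hzw⟩ := pi_surj Φ hnd w hw d
      have hsumcd : (∑ i, c i * d i) = 1 := by
        rw [Finset.sum_eq_single j₁]
        · rw [hd]
          simp [mul_inv_cancel₀ hcj₁]
        · intro b _ hb
          rw [hd]
          simp [hb]
        · simp
      -- key pairings with the radical vectors
      have hrzv : Φ (∑ j, c j • v j) zv = 1 := by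
        rw [hexp1]
        rw [← hsumcd]
        congr 1
        ext i
        rw [hzv]
      have hrzw : Φ (∑ j, c j • w j) zw = 1 := by
        rw [hexp1]
        rw [← hsumcd]
        congr 1
        ext i
        rw [hzw]
      have hrr_v : Φ (∑ j, c j • v j) (∑ j, c j • v j) = 0 := by
        rw [hexp1]
        apply Finset.sum_eq_zero
        intro i _
        rw [hcrad i, mul_zero]
      have hrr_w : Φ (∑ j, c j • w j) (∑ j, c j • w j) = 0 := by
        rw [hexp1]
        apply Finset.sum_eq_zero
        intro i _
        rw [hrw i, mul_zero]
      -- the corrected vectors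
      have hmain : ∀ (u : Fin n → V) (z : V), (∀ i, Φ (u i) (∑ j, c j • u j) = 0) →
          (∀ i, Φ (u i) z = d i) → Φ (∑ j, c j • u j) z = 1 →
          Φ (∑ j, c j • u j) (∑ j, c j • u j) = 0 →
          (∀ i, Φ (u i) (z - (Φ z z / 2) • (∑ j, c j • u j)) = d i) ∧
          Φ (z - (Φ z z / 2) • (∑ j, c j • u j)) (z - (Φ z z / 2) • (∑ j, c j • u j)) = 0 ∧
          Φ (∑ j, c j • u j) (z - (Φ z z / 2) • (∑ j, c j • u j)) = 1 := by
        intro u z hurad huz hrz hrr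
        have hzr : Φ z (∑ j, c j • u j) = ε := by rw [hsym, hrz, mul_one]
        refine ⟨?_, ?_, ?_⟩
        · intro i
          simp only [map_sub, map_smul, smul_eq_mul, hurad i, huz i, mul_zero, sub_zero]
        · simp only [map_sub, map_smul, LinearMap.sub_apply, LinearMap.smul_apply,
            smul_eq_mul, hrz, hzr, hrr]
          rcases hε with h | h
          · rw [h]
            field_simp
            try ring
          · rw [alt_of_neg Φ h2 hsym h z, h]
            ring
        · simp only [map_sub, map_smul, smul_eq_mul, hrz, hrr, mul_zero, sub_zero]
      obtain ⟨hv1, hv2, hv3⟩ := hmain v zv hcrad hzv hrzv hrr_v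
      obtain ⟨hw1, hw2, hw3⟩ := hmain w zw hrw hzw hrzw hrr_w
      set zv' : V := zv - (Φ zv zv / 2) • (∑ j, c j • v j) with hzv'
      set zw' : V := zw - (Φ zw zw / 2) • (∑ j, c j • w j) with hzw'
      have hv1' : ∀ i, Φ (v i) zv' = d i := hv1
      have hw1' : ∀ i, Φ (w i) zw' = d i := hw1
      -- linear independence of the extended tuples
      have hnotmem_v : zv' ∉ Submodule.span F (Set.range v) := by
        intro hmem
        have h0 : Φ (∑ j, c j • v j) zv' = 0 :=
          hspan_ker v _ (fun i => by rw [hsym, hcrad i, mul_zero]) zv' hmem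
        rw [hv3] at h0
        exact one_ne_zero h0
      have hnotmem_w : zw' ∉ Submodule.span F (Set.range w) := by
        intro hmem
        have h0 : Φ (∑ j, c j • w j) zw' = 0 :=
          hspan_ker w _ (fun i => by rw [hsym, hrw i, mul_zero]) zw' hmem
        rw [hw3] at h0
        exact one_ne_zero h0
      have hvv : LinearIndependent F (Fin.cons zv' v : Fin (n+1) → V) :=
        linearIndependent_fin_cons.2 ⟨hv, hnotmem_v⟩
      have hww : LinearIndependent F (Fin.cons zw' w : Fin (n+1) → V) :=
        linearIndependent_fin_cons.2 ⟨hw, hnotmem_w⟩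
      -- Gram equality for the extended tuples
      have hGG : ∀ i j, Φ ((Fin.cons zv' v : Fin (n+1) → V) i)
          ((Fin.cons zv' v : Fin (n+1) → V) j)
          = Φ ((Fin.cons zw' w : Fin (n+1) → V) i) ((Fin.cons zw' w : Fin (n+1) → V) j) := by
        intro i j
        refine Fin.cases ?_ (fun i' => ?_) i <;> [skip; skip] <;>
          refine Fin.cases ?_ (fun j' => ?_) j
        · simp only [Fin.cons_zero]
          rw [hv2, hw2]
        · simp only [Fin.cons_zero, Fin.cons_succ]
          rw [hsym zv' (v j'), hsym zw' (w j'), hv1' j', hw1' j']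
        · simp only [Fin.cons_zero, Fin.cons_succ]
          rw [hv1' i', hw1' i']
        · simp only [Fin.cons_succ]
          exact hG i' j'
      have hle' : Module.finrank F V ≤ (n + 1) + k := by omega
      obtain ⟨h, hiso, hvals⟩ := IHk (n+1) hle' (Fin.cons zv' v) (Fin.cons zw' w) hvv hww hGG
      refine ⟨h, hiso, fun i => ?_⟩
      have := hvals i.succ
      simpa [Fin.cons_succ] using this

end Witt5
/-- If `ξ₁, ξ₂ : X → W` are surjections such that `(ξ₁, η)` and `(ξ₂, η)` both satisfy the
defining relation `η + η* + ξᵢ ξᵢ* = 0` (with `η` invertible), then there is `h ∈ H` with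
`Norm(ξ₁, η) = h⁻¹ ∘ Norm(ξ₂, η) ∘ h`, where `Norm(ξ,η) = 1 + ξ* η⁻¹ ξ`. -/
theorem norms_conjugate
    (F : Type*) [Field F] (hchar : (2 : F) ≠ 0)
    (W W' X : Type*)
    [AddCommGroup W] [Module F W] [FiniteDimensional F W]
    [AddCommGroup W'] [Module F W'] [FiniteDimensional F W']
    [AddCommGroup X] [Module F X] [FiniteDimensional F X]
    (ε : F) (hε : ε = 1 ∨ ε = -1)
    (Bp : W' →ₗ[F] W →ₗ[F] F)
    (hBp1 : ∀ w' : W', (∀ w : W, Bp w' w = 0) → w' = 0)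
    (hBp2 : ∀ w : W, (∀ w' : W', Bp w' w = 0) → w = 0)
    (Φ : X →ₗ[F] X →ₗ[F] F)
    (hΦnd : ∀ x : X, (∀ y : X, Φ x y = 0) → x = 0)
    (hΦε : ∀ x y : X, Φ x y = ε * Φ y x)
    (ξ₁ ξ₂ : X →ₗ[F] W)
    (hξ₁surj : Function.Surjective ξ₁) (hξ₂surj : Function.Surjective ξ₂)
    (ξ1s ξ2s : W' →ₗ[F] X)
    (hξ1s : ∀ (w' : W') (x : X), Φ (ξ1s w') x = Bp w' (ξ₁ x))
    (hξ2s : ∀ (w' : W') (x : X), Φ (ξ2s w') x = Bp w' (ξ₂ x))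
    (η : W' ≃ₗ[F] W) (ηs : W' →ₗ[F] W)
    (hηs : ∀ w₁' w₂' : W', ε * Bp w₂' (ηs w₁') = Bp w₁' (η w₂'))
    (hrel₁ : ∀ w' : W', η w' + ηs w' + ξ₁ (ξ1s w') = 0)
    (hrel₂ : ∀ w' : W', η w' + ηs w' + ξ₂ (ξ2s w') = 0) :
    ∃ h : X ≃ₗ[F] X, (∀ x y : X, Φ (h x) (h y) = Φ x y) ∧
      ∀ x : X, x + ξ1s (η.symm (ξ₁ x)) = h.symm (h x + ξ2s (η.symm (ξ₂ (h x)))) := by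
  classical
  -- injectivity of the adjoints
  have hinj1 : LinearMap.ker ξ1s = ⊥ := by
    rw [LinearMap.ker_eq_bot']
    intro w' hw'
    apply hBp1
    intro u
    obtain ⟨x, rfl⟩ := hξ₁surj u
    rw [← hξ1s, hw', map_zero, LinearMap.zero_apply]
  have hinj2 : LinearMap.ker ξ2s = ⊥ := by
    rw [LinearMap.ker_eq_bot']
    intro w' hw'
    apply hBp1
    intro u
    obtain ⟨x, rfl⟩ := hξ₂surj u
    rw [← hξ2s, hw', map_zero, LinearMap.zero_apply]
  -- equal Gram data
  have hξcomp : ∀ y : W', ξ₁ (ξ1s y) = ξ₂ (ξ2s y) := by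
    intro y
    have h1 := hrel₁ y
    have h2 := hrel₂ y
    have e1 : ξ₁ (ξ1s y) = 0 - (η y + ηs y) := by
      rw [← h1]; abel
    have e2 : ξ₂ (ξ2s y) = 0 - (η y + ηs y) := by
      rw [← h2]; abel
    rw [e1, e2]
  have hGram : ∀ x y : W', Φ (ξ1s x) (ξ1s y) = Φ (ξ2s x) (ξ2s y) := by
    intro x y
    rw [hξ1s, hξ2s, hξcomp y]
  -- tuples from a basis of W'
  set b := Module.finBasis F W' with hb
  set v : Fin (Module.finrank F W') → X := fun i => ξ1s (b i) with hv
  set w : Fin (Module.finrank F W') → X := fun i => ξ2s (b i) with hw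
  have hvli : LinearIndependent F v := b.linearIndependent.map' ξ1s hinj1
  have hwli : LinearIndependent F w := b.linearIndependent.map' ξ2s hinj2
  have hGvw : ∀ i j, Φ (v i) (v j) = Φ (w i) (w j) := fun i j => hGram (b i) (b j)
  obtain ⟨h, hiso, hvals⟩ := witt_tuple Φ hchar hε hΦε hΦnd (Module.finrank F X)
    (Module.finrank F W') (Nat.le_add_left _ _) v w hvli hwli hGvw
  have hcomm : ∀ y : W', h (ξ1s y) = ξ2s y := by
    have : (h : X →ₗ[F] X).comp ξ1s = ξ2s := by
      apply b.ext
      intro i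
      simpa using hvals i
    intro y
    have := LinearMap.congr_fun this y
    simpa using this
  have hintertwine : ∀ x : X, ξ₂ (h x) = ξ₁ x := by
    intro x
    have hsub : ∀ w' : W', Bp w' (ξ₂ (h x) - ξ₁ x) = 0 := by
      intro w'
      rw [map_sub, ← hξ2s, ← hξ1s, ← hcomm w', hiso, sub_self]
    have := hBp2 _ hsub
    rwa [sub_eq_zero] at this
  refine ⟨h, hiso, fun x => ?_⟩
  rw [hintertwine x, ← hcomm (η.symm (ξ₁ x)), ← map_add, LinearEquiv.symm_apply_apply]
end

section
/- Let T ≅ (F̄^×)^r be a split maximal torus of a classical group H = Isom(X, Φ), realized as diagonal elements diag(t₁,…,t_r,…,t_r^{-1},t₁^{-1}) (with possibly a fixed central block of 1's). Fix an even integer k ≤ dim X, and let T_k = {γ ∈ T : rank(γ − 1; X) ≤ k}. Then the irreducible components of the variety T_k are exactly the subtori S_σ = {(a_i) ∈ T : a_i = 1 for i ∉ σ} for subsets σ ⊆ {1,…,r} with |σ| = k/2; in particular every torus contained in T_k has dimension at most k/2, and any two subtori of T_k of dimension k/2 are conjugate by the Weyl group of T. -/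
/-- The diagonal action of the split maximal torus `T ≅ (Kˣ)^r` of a classical group on
`X = K^r × K^m × K^r`, by `diag(t₁,…,t_r)` on the first block, trivially on the central
block (of size `m ≤ 1`), and by `diag(t₁⁻¹,…,t_r⁻¹)` on the last block. -/
def torusAct (K : Type*) [Field K] (r m : ℕ) (t : Fin r → Kˣ) :
    ((Fin r → K) × (Fin m → K) × (Fin r → K)) →ₗ[K]
      ((Fin r → K) × (Fin m → K) × (Fin r → K)) where
  toFun p := (fun i => (t i : K) * p.1 i, p.2.1, fun i => (((t i)⁻¹ : Kˣ) : K) * p.2.2 i)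
  map_add' p q := by
    refine Prod.ext ?_ (Prod.ext ?_ ?_) <;> funext i <;> simp <;> ring
  map_smul' c p := by
    refine Prod.ext ?_ (Prod.ext ?_ ?_) <;> funext i <;> simp <;> ring

/-- A monomial homomorphism `(Kˣ)^d → (Kˣ)^r` attached to an integer matrix `M`; injective
such homomorphisms model `d`-dimensional subtori of the torus `T = (Kˣ)^r`. -/
def monomialHom (K : Type*) [Field K] (r d : ℕ) (M : Fin r → Fin d → ℤ)
    (s : Fin d → Kˣ) : Fin r → Kˣ :=
  fun i => ∏ j, s j ^ M i j

def splitEquiv (K : Type*) [Field K] (r m : ℕ) :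
    ((Fin r ⊕ (Fin m ⊕ Fin r)) → K) ≃ₗ[K] ((Fin r → K) × (Fin m → K) × (Fin r → K)) where
  toFun x := (fun i => x (Sum.inl i), fun i => x (Sum.inr (Sum.inl i)),
    fun i => x (Sum.inr (Sum.inr i)))
  invFun p := Sum.elim p.1 (Sum.elim p.2.1 p.2.2)
  map_add' := by intros; rfl
  map_smul' := by intros; rfl
  left_inv x := by funext i; rcases i with i | i | i <;> rfl
  right_inv p := rfl

@[simp] lemma splitEquiv_apply (K : Type*) [Field K] (r m : ℕ) (x : (Fin r ⊕ (Fin m ⊕ Fin r)) → K) :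
    splitEquiv K r m x = (fun i => x (Sum.inl i), fun i => x (Sum.inr (Sum.inl i)),
      fun i => x (Sum.inr (Sum.inr i))) := rfl

lemma torus_rank_eq {K : Type*} [Field K] (r m : ℕ) (t : Fin r → Kˣ) :
    LinearMap.rank (torusAct K r m t - LinearMap.id)
      = 2 * (Nat.card {i // t i ≠ 1} : Cardinal) := by
  classical
  set w : Fin r → K := fun i => (t i : K) - 1 with hw
  set w' : Fin r → K := fun i => (((t i)⁻¹ : Kˣ) : K) - 1 with hw'
  set W : (Fin r ⊕ (Fin m ⊕ Fin r)) → K := Sum.elim w (Sum.elim (fun _ => 0) w') with hW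
  set e := splitEquiv K r m with he
  set f : ((Fin r → K) × (Fin m → K) × (Fin r → K)) →ₗ[K]
      ((Fin r → K) × (Fin m → K) × (Fin r → K)) := torusAct K r m t - LinearMap.id with hfdef
  have key : ∀ x, f (e x) = e (Matrix.toLin' (Matrix.diagonal W) x) := by
    intro x
    refine Prod.ext ?_ (Prod.ext ?_ ?_) <;> funext i <;>
      simp [hfdef, torusAct, he, splitEquiv_apply, hW, hw, hw', Matrix.toLin'_apply,
        Matrix.mulVec_diagonal] <;> ring
  have hf : f = e.toLinearMap ∘ₗ Matrix.toLin' (Matrix.diagonal W) ∘ₗ e.symm.toLinearMap := by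
    apply LinearMap.ext; intro p
    have h := key (e.symm p)
    rw [LinearEquiv.apply_symm_apply] at h
    simpa using h
  have h1 : LinearMap.rank (e.toLinearMap ∘ₗ Matrix.toLin' (Matrix.diagonal W) ∘ₗ e.symm.toLinearMap)
      = LinearMap.rank (Matrix.toLin' (Matrix.diagonal W)) := by
    unfold LinearMap.rank
    rw [LinearMap.range_comp, LinearEquiv.rank_map_eq,
      LinearMap.range_comp_of_range_eq_top _ e.symm.range]
  have hcard : Fintype.card {i // W i ≠ 0} = 2 * Nat.card {i // t i ≠ 1} := by
    rw [Nat.card_eq_fintype_card]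
    rw [Fintype.card_congr (Equiv.subtypeSum), Fintype.card_sum,
      Fintype.card_congr (Equiv.subtypeSum (p := fun c => W (Sum.inr c) ≠ 0)), Fintype.card_sum]
    have c1 : Fintype.card {i : Fin r // W (Sum.inl i) ≠ 0} = Fintype.card {i // t i ≠ 1} :=
      Fintype.card_congr (Equiv.subtypeEquivRight (fun i => by
        simp [hW, hw, sub_eq_zero, Units.val_eq_one]))
    have c2 : Fintype.card {i : Fin m // W (Sum.inr (Sum.inl i)) ≠ 0} = 0 := by
      simp [hW]
    have c3 : Fintype.card {i : Fin r // W (Sum.inr (Sum.inr i)) ≠ 0}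
        = Fintype.card {i // t i ≠ 1} :=
      Fintype.card_congr (Equiv.subtypeEquivRight (fun i => by
        simp [hW, hw', sub_eq_zero, Units.val_eq_one, inv_eq_one]))
    omega
  rw [hf, h1, LinearMap.rank_diagonal, hcard]
  push_cast
  ring

lemma zpow_sum' {G : Type*} [CommGroup G] (u : G) {ι : Type*} (s : Finset ι) (c : ι → ℤ) :
    u ^ (∑ j ∈ s, c j) = ∏ j ∈ s, u ^ c j := by
  induction s using Finset.cons_induction with
  | empty => simp
  | cons a s ha ih => rw [Finset.sum_cons, Finset.prod_cons, zpow_add, ih]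

lemma exists_unit_order (K : Type*) [Field K] [IsAlgClosed K] (b : ℕ) :
    ∃ (N : ℕ) (u : Kˣ), b < N ∧ ∀ m : ℤ, u ^ m = 1 ↔ (N : ℤ) ∣ m := by
  obtain ⟨N, hNge, hNp⟩ := Nat.exists_infinite_primes (max (b + 1) (ringChar K + 1))
  have hb : b + 1 ≤ N := le_trans (le_max_left _ _) hNge
  have hchar : ringChar K + 1 ≤ N := le_trans (le_max_right _ _) hNge
  have hNpos : 0 < N := hNp.pos
  have hNK : ((N : ℕ) : K) ≠ 0 := by
    intro h
    have hdvd : ringChar K ∣ N := (ringChar.spec K N).mp h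
    rcases hNp.eq_one_or_self_of_dvd _ hdvd with h1 | h2
    · have h0 : ((ringChar K : ℕ) : K) = 0 := ringChar.spec K (ringChar K) |>.mpr dvd_rfl
      rw [h1] at h0
      simp at h0
    · omega
  haveI : NeZero ((N : ℕ) : K) := ⟨hNK⟩
  obtain ⟨ζ, hζ⟩ : ∃ ζ : K, IsPrimitiveRoot ζ N := by
    obtain ⟨x, hx⟩ := IsAlgClosed.exists_aeval_eq_zero K (Polynomial.cyclotomic N K)
      (Polynomial.degree_cyclotomic_pos N K hNpos).ne'
    refine ⟨x, ?_⟩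
    rwa [Polynomial.coe_aeval_eq_eval, ← Polynomial.IsRoot.def,
      Polynomial.isRoot_cyclotomic_iff] at hx
  refine ⟨N, (hζ.isUnit hNpos.ne').unit, by omega, fun mm => ?_⟩
  have hcoe : (((hζ.isUnit hNpos.ne').unit : Kˣ) : K) = ζ := IsUnit.unit_spec _
  rw [← Units.val_eq_one, Units.val_zpow_eq_zpow_val, hcoe, hζ.zpow_eq_one_iff_dvd]

lemma two_mul_cast_le_iff (a b : ℕ) :
    (2 * (a : Cardinal) ≤ (b : Cardinal)) ↔ 2 * a ≤ b := by
  rw [show ((2 : Cardinal) * (a : Cardinal)) = ((2 * a : ℕ) : Cardinal) by push_cast; ring,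
    Nat.cast_le]

/-- Let `T ≅ (K̄ˣ)^r` be a split maximal torus of a classical group `H = Isom(X, Φ)`,
acting diagonally on `X` (with a possible fixed central block of size `m ≤ 1`).  Fix an
even `k ≤ dim X` and let `T_k = {γ ∈ T : rank(γ - 1; X) ≤ k}`.  Then: (1) `T_k` is the
union of its irreducible components `S_σ = {t : t_i = 1 for i ∉ σ}` over subsets `σ` of
cardinality `k/2`; (2) every (sub)torus contained in `T_k` has dimension at most `k/2`;
and (3) any two subtori `S_σ, S_σ'` of dimension `k/2` are conjugate by the Weyl group of
`T` (in particular by a permutation of the coordinates). -/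
theorem torus_Tk_components
    (K : Type*) [Field K] [IsAlgClosed K] (hchar : (2 : K) ≠ 0)
    (r m k : ℕ) (hm : m ≤ 1) (hk : Even k) (hkX : k ≤ 2 * r + m) :
    ({t : Fin r → Kˣ |
        LinearMap.rank (torusAct K r m t - LinearMap.id) ≤ (k : Cardinal)} =
      ⋃ σ ∈ {σ : Finset (Fin r) | σ.card = k / 2},
        {t : Fin r → Kˣ | ∀ i ∉ σ, t i = 1}) ∧
    (∀ (d : ℕ) (M : Fin r → Fin d → ℤ),
        Function.Injective (monomialHom K r d M) →
        (∀ s : Fin d → Kˣ,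
          LinearMap.rank (torusAct K r m (monomialHom K r d M s) - LinearMap.id)
            ≤ (k : Cardinal)) →
        d ≤ k / 2) ∧
    (∀ σ σ' : Finset (Fin r), σ.card = k / 2 → σ'.card = k / 2 →
        ∃ π : Equiv.Perm (Fin r),
          ∀ t : Fin r → Kˣ, (∀ i ∉ σ, t i = 1) ↔ (∀ i ∉ σ', t (π i) = 1)) := by
  classical
  obtain ⟨c, hc⟩ := hk
  have hcr : c ≤ r := by omega
  have hk2 : k / 2 = c := by omega
  refine ⟨?_, ?_, ?_⟩
  · -- Part 1
    ext t
    simp only [Set.mem_setOf_eq, Set.mem_iUnion, exists_prop]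
    rw [torus_rank_eq, two_mul_cast_le_iff]
    rw [Nat.card_eq_fintype_card, Fintype.card_subtype]
    constructor
    · intro hle
      obtain ⟨σ, hFσ, hσ⟩ := Finset.exists_superset_card_eq (n := c)
        (s := Finset.univ.filter (fun i => t i ≠ 1)) (by omega) (by simpa using hcr)
      refine ⟨σ, by omega, fun i hi => ?_⟩
      by_contra hne
      exact hi (hFσ (Finset.mem_filter.mpr ⟨Finset.mem_univ _, hne⟩))
    · rintro ⟨σ, hσcard, hσ⟩
      have hsub : Finset.univ.filter (fun i => t i ≠ 1) ⊆ σ := by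
        intro i hi
        by_contra hne
        exact (Finset.mem_filter.mp hi).2 (hσ i hne)
      have := Finset.card_le_card hsub
      omega
  · -- Part 2
    intro d M hMinj hrk
    have hker : ∀ v : Fin d → ℤ, (∀ i, ∑ j, M i j * v j = 0) → v = 0 := by
      intro v hv
      by_contra hv0
      obtain ⟨j₀, hj₀⟩ : ∃ j, v j ≠ 0 := by
        by_contra h; push_neg at h; exact hv0 (funext h)
      obtain ⟨N, u, hN, hu⟩ := exists_unit_order K ((v j₀).natAbs)
      have hs : monomialHom K r d M (fun j => u ^ v j) = monomialHom K r d M (fun _ => 1) := by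
        funext i
        simp only [monomialHom, one_zpow, Finset.prod_const_one]
        calc ∏ j, (u ^ v j) ^ M i j = ∏ j, u ^ (v j * M i j) := by
              refine Finset.prod_congr rfl fun j _ => ?_
              rw [← zpow_mul]
          _ = u ^ (∑ j, v j * M i j) := (zpow_sum' u _ _).symm
          _ = 1 := by
              have h0 : ∑ j, v j * M i j = 0 := by
                rw [← hv i]; exact Finset.sum_congr rfl fun j _ => mul_comm _ _
              rw [h0, zpow_zero]
      have heq : u ^ v j₀ = 1 := congrFun (hMinj hs) j₀
      have hdvd := (hu _).mp heq
      have habs := Int.le_of_dvd (abs_pos.mpr hj₀) ((dvd_abs _ _).mpr hdvd)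
      rw [Int.abs_eq_natAbs] at habs
      omega
    set R := Finset.univ.filter (fun i => M i ≠ 0) with hR
    have hdR : d ≤ R.card := by
      by_contra hlt
      push_neg at hlt
      set φ : (Fin d → ℤ) →ₗ[ℤ] ({i // i ∈ R} → ℤ) :=
        Matrix.mulVecLin (Matrix.of fun (i : {i // i ∈ R}) j => M i.1 j) with hφ
      have hnotinj : ¬ Function.Injective φ := by
        intro hinj
        have h1 := LinearMap.rank_le_of_injective φ hinj
        rw [rank_fin_fun, rank_fun'] at h1
        have h2 : d ≤ Fintype.card {i // i ∈ R} := by exact_mod_cast h1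
        rw [Fintype.card_coe] at h2
        omega
      rw [← LinearMap.ker_eq_bot] at hnotinj
      obtain ⟨v, hvmem, hvne⟩ := Submodule.exists_mem_ne_zero_of_ne_bot hnotinj
      refine hvne (hker v ?_)
      intro i
      by_cases hiR : i ∈ R
      · have h3 := congrFun (LinearMap.mem_ker.mp hvmem) ⟨i, hiR⟩
        simpa [hφ, Matrix.mulVecLin_apply, Matrix.mulVec, dotProduct] using h3
      · have h4 : M i = 0 := by simpa [hR] using hiR
        simp [h4]
    have hBex : ∃ B : ℤ, ∀ i ∈ R, ∑ j, M i j * B ^ (j : ℕ) ≠ 0 := by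
      set P : Fin r → Polynomial ℤ := fun i => ∑ j, Polynomial.C (M i j) * Polynomial.X ^ (j : ℕ)
        with hP
      have hPcoeff : ∀ i (j : Fin d), (P i).coeff j = M i j := by
        intro i j
        rw [hP]
        simp only [Polynomial.finset_sum_coeff]
        rw [Finset.sum_eq_single j]
        · simp
        · intro b _ hbj
          rw [Polynomial.coeff_C_mul, Polynomial.coeff_X_pow,
            if_neg (Fin.val_injective.ne (Ne.symm hbj)), mul_zero]
        · simp
      have hPne : ∀ i ∈ R, P i ≠ 0 := by
        intro i hiR hP0
        have h5 : M i ≠ 0 := by simpa [hR] using hiR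
        refine h5 (funext fun j => ?_)
        have h6 := hPcoeff i j
        rw [hP0] at h6
        simpa using h6.symm
      have hfin : Set.Finite (⋃ i ∈ R, {x : ℤ | (P i).IsRoot x}) :=
        Set.Finite.biUnion R.finite_toSet (fun i hi => Polynomial.finite_setOf_isRoot (hPne i hi))
      obtain ⟨B, hB⟩ := (hfin.infinite_compl).nonempty
      refine ⟨B, fun i hi h0 => ?_⟩
      apply hB
      refine Set.mem_iUnion₂.mpr ⟨i, hi, ?_⟩
      show (P i).IsRoot B
      rw [Polynomial.IsRoot.def, hP]
      simp only [Polynomial.eval_finset_sum, Polynomial.eval_mul, Polynomial.eval_C,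
        Polynomial.eval_pow, Polynomial.eval_X]
      exact h0
    obtain ⟨B, hB⟩ := hBex
    set b := R.sup (fun i => (∑ j, M i j * B ^ (j : ℕ)).natAbs) with hb
    obtain ⟨N, u, hN, hu⟩ := exists_unit_order K b
    set s : Fin d → Kˣ := fun j => u ^ (B ^ (j : ℕ)) with hs
    have hsub : ∀ i ∈ R, monomialHom K r d M s i ≠ 1 := by
      intro i hi heq
      have h7 : monomialHom K r d M s i = u ^ (∑ j, M i j * B ^ (j : ℕ)) := by
        rw [monomialHom, zpow_sum' u]
        refine Finset.prod_congr rfl fun j _ => ?_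
        rw [mul_comm, zpow_mul]
      rw [h7] at heq
      have hdvd := (hu _).mp heq
      have hvne := hB i hi
      have habs := Int.le_of_dvd (abs_pos.mpr hvne) ((dvd_abs _ _).mpr hdvd)
      rw [Int.abs_eq_natAbs] at habs
      have hle : (∑ j, M i j * B ^ (j : ℕ)).natAbs ≤ b := hb ▸ Finset.le_sup (f := fun i => (∑ j, M i j * B ^ (j : ℕ)).natAbs) hi
      omega
    have hcard : R.card ≤ Nat.card {i // monomialHom K r d M s i ≠ 1} := by
      rw [Nat.card_eq_fintype_card, Fintype.card_subtype]
      apply Finset.card_le_card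
      intro i hi
      exact Finset.mem_filter.mpr ⟨Finset.mem_univ _, hsub i (by simpa [hR] using hi)⟩
    have hrs := hrk s
    rw [torus_rank_eq, two_mul_cast_le_iff] at hrs
    omega
  · -- Part 3
    intro σ σ' hσ hσ'
    have hcards : Fintype.card {x // x ∈ σ'} = Fintype.card {x // x ∈ σ} := by
      simp only [Fintype.card_coe]
      rw [hσ, hσ']
    have hcompl : Fintype.card {x // ¬ x ∈ σ'} = Fintype.card {x // ¬ x ∈ σ} := by
      rw [Fintype.card_subtype_compl, Fintype.card_subtype_compl, hcards]
    set e : {x // x ∈ σ'} ≃ {x // x ∈ σ} := Fintype.equivOfCardEq hcards with he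
    set f : {x // ¬ x ∈ σ'} ≃ {x // ¬ x ∈ σ} := Fintype.equivOfCardEq hcompl with hfe
    set π := Equiv.subtypeCongr e f with hπ
    have happ : ∀ (i : Fin r) (hi : ¬ i ∈ σ'), π i = (f ⟨i, hi⟩ : Fin r) := by
      intro i hi
      simp [hπ, Equiv.subtypeCongr, hi]
    refine ⟨π, fun t => ⟨fun h1 i hi => ?_, fun h2 j hj => ?_⟩⟩
    · rw [happ i hi]
      exact h1 _ (f ⟨i, hi⟩).2
    · set i := f.symm ⟨j, hj⟩ with hi
      have hji : π (i : Fin r) = j := by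
        rw [happ _ i.2]
        simp [hi]
      have ht := h2 (i : Fin r) i.2
      rw [hji] at ht
      exact ht
end

section
/- Under the identification of a split maximal torus T of H with (F̄^×)^r acting diagonally on X, if S is a subtorus of T contained in H_k = {h : rank(h−1;X) ≤ k} with dim S = k/2, then the common fixed point space X^S has dimension dim X − k. -/
lemma prod_zpow_eq' {ι : Type*} {K : Type*} [Field K] (u : Kˣ) (s : Finset ι) (f : ι → ℤ) :
    ∏ j ∈ s, u ^ f j = u ^ (∑ j ∈ s, f j) := by
  induction s using Finset.cons_induction with
  | empty => simp
  | cons a s ha ih => simp [Finset.prod_cons, Finset.sum_cons, ih, zpow_add]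

/-- In an algebraically closed field of characteristic ≠ 2, there is a unit `u` with
`u ^ n ≠ 1` for all the finitely many nonzero integers `f i`. -/
lemma exists_unit_pow_ne_one {K : Type*} [Field K] [IsAlgClosed K] (hchar : (2 : K) ≠ 0)
    {ι : Type*} [Fintype ι] (f : ι → ℤ) :
    ∃ u : Kˣ, ∀ i, f i ≠ 0 → u ^ f i ≠ 1 := by
  set A : ℕ := ∑ i, (f i).natAbs with hA
  have h2 : (((2 ^ (A + 1) : ℕ)) : K) ≠ 0 := by
    push_cast
    exact pow_ne_zero _ hchar
  have : NeZero (((2 ^ (A + 1) : ℕ)) : K) := ⟨h2⟩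
  obtain ⟨ζ, hζ⟩ := HasEnoughRootsOfUnity.exists_primitiveRoot K (2 ^ (A + 1))
  have hpos : 0 < 2 ^ (A + 1) := Nat.pow_pos (by norm_num)
  have hu : IsUnit ζ := hζ.isUnit hpos.ne'
  refine ⟨hu.unit, fun i hi h1 => ?_⟩
  have hz : ζ ^ f i = 1 := by
    have := congrArg Units.val h1
    rwa [Units.val_zpow_eq_zpow_val, hu.unit_spec, Units.val_one] at this
  have hdvd : ((2 ^ (A + 1) : ℕ) : ℤ) ∣ f i := (hζ.zpow_eq_one_iff_dvd _).mp hz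
  have hle : (2 ^ (A + 1) : ℕ) ≤ (f i).natAbs := by
    have h' : (2 ^ (A + 1) : ℕ) ∣ (f i).natAbs := by
      have h2 := Int.natAbs_dvd_natAbs.mpr hdvd
      rwa [Int.natAbs_natCast] at h2
    exact Nat.le_of_dvd (Int.natAbs_pos.mpr hi) h'
  have hub : (f i).natAbs ≤ A := by
    rw [hA]
    exact Finset.single_le_sum (f := fun j => (f j).natAbs) (fun j _ => Nat.zero_le _)
      (Finset.mem_univ i)
  have hAA : A < 2 ^ (A + 1) := lt_of_lt_of_le (Nat.lt_two_pow_self (n := A)) (Nat.pow_le_pow_right (by norm_num) (by omega))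
  omega

/-- Base-B digits lemma. -/
lemma digits_zero (B : ℤ) (hB : 1 < B) :
    ∀ (n : ℕ) (c : ℕ → ℤ), (∀ j, |c j| < B) →
      (∑ j ∈ Finset.range n, c j * B ^ j = 0) → ∀ j < n, c j = 0 := by
  intro n
  induction n with
  | zero => intro c _ _ j hj; omega
  | succ n ih =>
    intro c hc hsum j hj
    rw [Finset.sum_range_succ'] at hsum
    have hdvdsum : B ∣ ∑ j ∈ Finset.range n, c (j + 1) * B ^ (j + 1) :=
      Finset.dvd_sum fun j _ => Dvd.dvd.mul_left (dvd_pow_self B (Nat.succ_ne_zero j)) _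
    have h0 : c 0 = 0 := by
      have hd : B ∣ c 0 := by
        have : c 0 * B ^ 0 = -(∑ j ∈ Finset.range n, c (j + 1) * B ^ (j + 1)) := by linarith
        simp only [pow_zero, mul_one] at this
        rw [this]
        exact dvd_neg.mpr hdvdsum
      exact Int.eq_zero_of_abs_lt_dvd hd (hc 0)
    have hsum' : ∑ j ∈ Finset.range n, c (j + 1) * B ^ j = 0 := by
      have hB0 : B ≠ 0 := by omega
      have h1 : B * (∑ j ∈ Finset.range n, c (j + 1) * B ^ j) = 0 := by
        rw [Finset.mul_sum]
        rw [h0] at hsum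
        simp only [pow_zero, mul_one, zero_mul, add_zero] at hsum
        rw [← hsum]
        apply Finset.sum_congr rfl
        intro x _
        ring
      rcases mul_eq_zero.mp h1 with h | h
      · exact absurd h hB0
      · exact h
    rcases j with _ | j
    · exact h0
    · exact ih (fun j => c (j + 1)) (fun j => hc _) hsum' j (by omega)

/-- The submodule of `X` of points fixed in coordinates where `Q` fails. -/
def coordSub (K : Type*) [Field K] (r m : ℕ) (Q : Fin r → Prop) :
    Submodule K ((Fin r → K) × (Fin m → K) × (Fin r → K)) where
  carrier := {p | ∀ i, ¬ Q i → p.1 i = 0 ∧ p.2.2 i = 0}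
  add_mem' := by
    intro a b ha hb i hi
    obtain ⟨ha1, ha2⟩ := ha i hi
    obtain ⟨hb1, hb2⟩ := hb i hi
    constructor <;> simp [ha1, ha2, hb1, hb2]
  zero_mem' := by intro i hi; simp
  smul_mem' := by
    intro c p hp i hi
    obtain ⟨h1, h2⟩ := hp i hi
    constructor <;> simp [h1, h2]

lemma mem_coordSub {K : Type*} [Field K] {r m : ℕ} {Q : Fin r → Prop}
    {p : (Fin r → K) × (Fin m → K) × (Fin r → K)} :
    p ∈ coordSub K r m Q ↔ ∀ i, ¬ Q i → p.1 i = 0 ∧ p.2.2 i = 0 := Iff.rfl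

noncomputable def coordSubEquiv (K : Type*) [Field K] (r m : ℕ) (Q : Fin r → Prop)
    [DecidablePred Q] :
    coordSub K r m Q ≃ₗ[K] ({i // Q i} → K) × (Fin m → K) × ({i // Q i} → K) where
  toFun p := (fun a => p.1.1 a.1, p.1.2.1, fun a => p.1.2.2 a.1)
  map_add' p q := rfl
  map_smul' c p := rfl
  invFun g := ⟨(fun i => if h : Q i then g.1 ⟨i, h⟩ else 0, g.2.1,
      fun i => if h : Q i then g.2.2 ⟨i, h⟩ else 0), by
    intro i hi
    simp [hi]⟩
  left_inv p := by
    apply Subtype.ext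
    refine Prod.ext ?_ (Prod.ext rfl ?_) <;> funext i
    · by_cases h : Q i
      · simp [h]
      · simp [h, (p.2 i h).1]
    · by_cases h : Q i
      · simp [h]
      · simp [h, (p.2 i h).2]
  right_inv g := by
    refine Prod.ext ?_ (Prod.ext rfl ?_) <;> funext a <;> simp [a.2]

lemma finrank_coordSub (K : Type*) [Field K] (r m : ℕ) (Q : Fin r → Prop) :
    Module.finrank K (coordSub K r m Q) =
      Nat.card {i // Q i} + (m + Nat.card {i // Q i}) := by
  classical
  rw [(coordSubEquiv K r m Q).finrank_eq]
  simp [Module.finrank_prod, Module.finrank_pi, Nat.card_eq_fintype_card]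

lemma mem_ker_torusAct_iff {K : Type*} [Field K] {r m : ℕ} (t : Fin r → Kˣ)
    (p : (Fin r → K) × (Fin m → K) × (Fin r → K)) :
    p ∈ LinearMap.ker (torusAct K r m t - LinearMap.id) ↔
      ∀ i, t i ≠ 1 → p.1 i = 0 ∧ p.2.2 i = 0 := by
  rw [LinearMap.mem_ker, LinearMap.sub_apply, LinearMap.id_apply, sub_eq_zero]
  simp only [torusAct, LinearMap.coe_mk, AddHom.coe_mk, Prod.ext_iff, funext_iff]
  constructor
  · rintro ⟨h1, -, h3⟩ i hi
    have hne : (t i : K) - 1 ≠ 0 := by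
      intro h
      exact hi (Units.val_eq_one.mp (sub_eq_zero.mp h))
    have hne' : ((((t i)⁻¹ : Kˣ)) : K) - 1 ≠ 0 := by
      intro h
      apply hi
      rw [← inv_eq_one]
      exact Units.val_eq_one.mp (sub_eq_zero.mp h)
    constructor
    · have h' : ((t i : K) - 1) * p.1 i = 0 := by linear_combination h1 i
      rcases mul_eq_zero.mp h' with h | h
      · exact absurd h hne
      · exact h
    · have h' : (((((t i)⁻¹ : Kˣ)) : K) - 1) * p.2.2 i = 0 := by linear_combination h3 i
      rcases mul_eq_zero.mp h' with h | h
      · exact absurd h hne'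
      · exact h
  · intro h
    refine ⟨fun i => ?_, trivial, fun i => ?_⟩
    · by_cases hti : t i = 1
      · simp [hti]
      · simp [(h i hti).1]
    · by_cases hti : t i = 1
      · simp [hti]
      · simp [(h i hti).2]


lemma ker_torusAct (K : Type*) [Field K] (r m : ℕ) (t : Fin r → Kˣ) :
    LinearMap.ker (torusAct K r m t - LinearMap.id) =
      coordSub K r m (fun i => t i = 1) := by
  ext p
  rw [mem_ker_torusAct_iff, mem_coordSub]

lemma finrank_range_torusAct (K : Type*) [Field K] (r m : ℕ) (t : Fin r → Kˣ) :
    Module.finrank K (LinearMap.range (torusAct K r m t - LinearMap.id)) =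
      2 * Nat.card {i // t i ≠ 1} := by
  classical
  have h := LinearMap.finrank_range_add_finrank_ker (torusAct K r m t - LinearMap.id)
  rw [ker_torusAct, finrank_coordSub] at h
  simp only [Module.finrank_prod, Module.finrank_pi, Fintype.card_fin] at h
  have hc : Nat.card {i // t i = 1} + Nat.card {i // t i ≠ 1} = r := by
    rw [Nat.card_eq_fintype_card, Nat.card_eq_fintype_card, Fintype.card_subtype_compl, Fintype.card_fin]
    have := Fintype.card_subtype_le (fun i : Fin r => t i = 1)
    rw [Fintype.card_fin] at this
    omega
  omega

lemma rank_torusAct (K : Type*) [Field K] (r m : ℕ) (t : Fin r → Kˣ) :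
    LinearMap.rank (torusAct K r m t - LinearMap.id) =
      ((2 * Nat.card {i // t i ≠ 1} : ℕ) : Cardinal) := by
  rw [LinearMap.rank, ← Module.finrank_eq_rank, finrank_range_torusAct]

lemma iInf_ker_monomial (K : Type*) [Field K] [IsAlgClosed K] (hchar : (2 : K) ≠ 0)
    (r m d : ℕ) (M : Fin r → Fin d → ℤ) :
    (⨅ s : Fin d → Kˣ,
        LinearMap.ker (torusAct K r m (monomialHom K r d M s) - LinearMap.id)) =
      coordSub K r m (fun i => M i = 0) := by
  classical
  apply le_antisymm
  · intro p hp
    rw [Submodule.mem_iInf] at hp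
    rw [mem_coordSub]
    intro i hi
    obtain ⟨j0, hj0⟩ : ∃ j, M i j ≠ 0 := by
      by_contra h
      push_neg at h
      exact hi (funext h)
    obtain ⟨u, hu⟩ := exists_unit_pow_ne_one hchar (fun _ : Unit => M i j0)
    set s : Fin d → Kˣ := fun j => if j = j0 then u else 1 with hs
    have hχ : monomialHom K r d M s i = u ^ M i j0 := by
      rw [monomialHom, Finset.prod_eq_single j0]
      · simp [hs]
      · intro j _ hj
        simp [hs, hj]
      · intro h
        exact absurd (Finset.mem_univ j0) h
    exact (mem_ker_torusAct_iff _ p).mp (hp s) i (by rw [hχ]; exact hu () hj0)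
  · intro p hp
    rw [Submodule.mem_iInf]
    intro s
    rw [mem_ker_torusAct_iff]
    intro i hi
    refine (mem_coordSub.mp hp) i (fun hMi => hi ?_)
    simp [monomialHom, hMi]

/-- If `S` is a subtorus of the split maximal torus `T ≅ (K̄ˣ)^r` contained in
`H_k = {h : rank(h - 1; X) ≤ k}` with `dim S = k/2`, then the common fixed point space
`X^S` has dimension `dim X − k`. -/
theorem fixed_space_of_k_maximal_torus
    (K : Type*) [Field K] [IsAlgClosed K] (hchar : (2 : K) ≠ 0)
    (r m k : ℕ) (hm : m ≤ 1) (hk : Even k) (hkX : k ≤ 2 * r + m)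
    (d : ℕ) (hd : d = k / 2) (M : Fin r → Fin d → ℤ)
    (hinj : Function.Injective (monomialHom K r d M))
    (hsub : ∀ s : Fin d → Kˣ,
      LinearMap.rank (torusAct K r m (monomialHom K r d M s) - LinearMap.id)
        ≤ (k : Cardinal)) :
    Module.finrank K
        ↥(⨅ s : Fin d → Kˣ,
            LinearMap.ker (torusAct K r m (monomialHom K r d M s) - LinearMap.id)) =
      2 * r + m - k := by
  classical
  have hk2 : k = 2 * d := by
    have := Nat.even_iff.mp hk
    omega
  have hcard : ∀ s : Fin d → Kˣ,
      2 * Nat.card {i // monomialHom K r d M s i ≠ 1} ≤ k := by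
    intro s
    have h := hsub s
    rw [rank_torusAct] at h
    exact_mod_cast h
  set N := Nat.card {i // M i ≠ 0} with hN
  have hupper : N ≤ d := by
    set B : ℕ := 2 + ∑ i, ∑ j, (M i j).natAbs with hB
    have h2B : 2 ≤ B := Nat.le_add_right 2 _
    have h1B : (1 : ℤ) < (B : ℤ) := by exact_mod_cast (by omega : 1 < B)
    have hbound : ∀ i j, |M i j| < (B : ℤ) := by
      intro i j
      have h1 : (M i j).natAbs ≤ ∑ i, ∑ j, (M i j).natAbs :=
        le_trans
          (Finset.single_le_sum (f := fun j => (M i j).natAbs)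
            (fun _ _ => Nat.zero_le _) (Finset.mem_univ j))
          (Finset.single_le_sum (f := fun i => ∑ j, (M i j).natAbs)
            (fun _ _ => Nat.zero_le _) (Finset.mem_univ i))
      rw [Int.abs_eq_natAbs]
      exact_mod_cast (by omega : (M i j).natAbs < B)
    have hNZ : ∀ i : Fin r, M i ≠ 0 → (∑ j, M i j * (B : ℤ) ^ (j : ℕ)) ≠ 0 := by
      intro i hMi hsum0
      obtain ⟨j1, hj1⟩ : ∃ j, M i j ≠ 0 := by
        by_contra h
        push_neg at h
        exact hMi (funext h)
      set c : ℕ → ℤ := fun j => if h : j < d then M i ⟨j, h⟩ else 0 with hc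
      have hbd : ∀ j, |c j| < (B : ℤ) := by
        intro j
        by_cases h : j < d
        · simpa [hc, h] using hbound i ⟨j, h⟩
        · simp only [hc, h, dif_neg, not_false_iff, abs_zero]
          exact lt_trans zero_lt_one h1B
      have hrange : ∑ j ∈ Finset.range d, c j * (B : ℤ) ^ j = 0 := by
        rw [Finset.sum_range, ← hsum0]
        apply Finset.sum_congr rfl
        intro j _
        simp [hc, j.isLt]
      have hz := digits_zero (B : ℤ) h1B d c hbd hrange j1.1 j1.2
      rw [hc] at hz
      simp only [j1.isLt, dif_pos, Fin.eta] at hz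
      exact hj1 hz
    obtain ⟨u, hu⟩ := exists_unit_pow_ne_one hchar
      (fun i : Fin r => ∑ j, M i j * (B : ℤ) ^ (j : ℕ))
    set s : Fin d → Kˣ := fun j => u ^ ((B : ℤ) ^ (j : ℕ)) with hs
    have hχs : ∀ i, M i ≠ 0 → monomialHom K r d M s i ≠ 1 := by
      intro i hMi
      have heval : monomialHom K r d M s i = u ^ (∑ j, M i j * (B : ℤ) ^ (j : ℕ)) := by
        rw [monomialHom]
        have h2 : ∀ j : Fin d, s j ^ M i j = u ^ ((B : ℤ) ^ (j : ℕ) * M i j) := by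
          intro j
          rw [hs, ← zpow_mul]
        rw [Finset.prod_congr rfl (fun j _ => h2 j), prod_zpow_eq']
        congr 1
        exact Finset.sum_congr rfl (fun j _ => mul_comm _ _)
      rw [heval]
      exact hu i (hNZ i hMi)
    have hmono : N ≤ Nat.card {i // monomialHom K r d M s i ≠ 1} := by
      rw [hN, Nat.card_eq_fintype_card, Nat.card_eq_fintype_card]
      exact Fintype.card_subtype_mono _ _ (fun i hi => hχs i hi)
    have := hcard s
    omega
  have hlower : d ≤ N := by
    by_cases hli : LinearIndependent ℤ (fun j : Fin d => (fun i : {i // M i ≠ 0} => M i.1 j))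
    · have h1 := hli.fintype_card_le_finrank
      rwa [Module.finrank_pi, Fintype.card_fin, ← Nat.card_eq_fintype_card] at h1
    · exfalso
      obtain ⟨g, hg0, j0, hgj⟩ := Fintype.not_linearIndependent_iff.mp hli
      have hrel : ∀ i : Fin r, ∑ j, g j * M i j = 0 := by
        intro i
        by_cases hMi : M i = 0
        · simp [hMi]
        · have h2 := congrFun hg0 ⟨i, hMi⟩
          simpa using h2
      obtain ⟨u, hu⟩ := exists_unit_pow_ne_one hchar g
      have heq : monomialHom K r d M (fun j => u ^ g j) = monomialHom K r d M 1 := by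
        funext i
        rw [monomialHom, monomialHom]
        have h2 : ∀ j : Fin d, (u ^ g j) ^ M i j = u ^ (g j * M i j) := by
          intro j
          rw [← zpow_mul]
        rw [Finset.prod_congr rfl (fun j _ => h2 j), prod_zpow_eq', hrel i]
        simp
      have h3 := congrFun (hinj heq) j0
      simp only [Pi.one_apply] at h3
      exact hu j0 hgj h3
  have hNd : N = d := le_antisymm hupper hlower
  rw [iInf_ker_monomial K hchar r m d M, finrank_coordSub]
  have hle : Nat.card {i // M i = 0} ≤ r := by
    rw [Nat.card_eq_fintype_card]
    have := Fintype.card_subtype_le (fun i : Fin r => M i = 0)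
    rwa [Fintype.card_fin] at this
  have hcompl : N = r - Nat.card {i // M i = 0} := by
    rw [hN, Nat.card_eq_fintype_card, Nat.card_eq_fintype_card,
      Fintype.card_subtype_compl, Fintype.card_fin]
  omega
end

section
/- Let ξ : X → W be surjective with nondegenerate kernel E, υ = (ξξ*)^{-1} : W → W', ξ⁺ = ξ*υ, and define Ξ : End(X) → End(W) by Ξ(A) = ξAξ⁺. Then: (a) ξ⁺ξ = P_{E^⊥}, the orthogonal projection onto E^⊥; (b) if A, B ∈ End(X) and A or B commutes with P_E, then Ξ(AB) = Ξ(A)Ξ(B); (c) Ξ restricted to the subgroup M_E = H^{E^⊥}·H^E of isometries preserving E is a group homomorphism to GL(W) with kernel H^{E^⊥}, and Ξ restricted to H^E is injective. -/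
/-- Let `ξ : X → W` be surjective with nondegenerate kernel `E`, `υ = (ξ ξ*)⁻¹ : W → W'`,
`ξ⁺ = ξ* υ`, and `Ξ(A) = ξ A ξ⁺`.  Let `P_E, P_{E^⊥}` be the orthogonal projections of
`X` onto `E` and `E^⊥`.  Then: (a) `ξ⁺ ξ = P_{E^⊥}`; (b) if `A` or `B` commutes with
`P_E`, then `Ξ(A B) = Ξ(A) Ξ(B)`; (c) `Ξ` restricted to the stabilizer `M_E` of `E` in
`H = Isom(X, Φ)` is a group homomorphism into `GL(W)` whose kernel is `H^{E^⊥}` (the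
isometries fixing `E^⊥` pointwise), and `Ξ` restricted to `H^E` is injective. -/
theorem Xi_properties
    (F : Type*) [Field F] (hchar : (2 : F) ≠ 0)
    (W W' X : Type*)
    [AddCommGroup W] [Module F W] [FiniteDimensional F W]
    [AddCommGroup W'] [Module F W'] [FiniteDimensional F W']
    [AddCommGroup X] [Module F X] [FiniteDimensional F X]
    (ε : F) (hε : ε = 1 ∨ ε = -1)
    (Bp : W' →ₗ[F] W →ₗ[F] F)
    (hBp1 : ∀ w' : W', (∀ w : W, Bp w' w = 0) → w' = 0)
    (hBp2 : ∀ w : W, (∀ w' : W', Bp w' w = 0) → w = 0)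
    (Φ : X →ₗ[F] X →ₗ[F] F)
    (hΦnd : ∀ x : X, (∀ y : X, Φ x y = 0) → x = 0)
    (hΦε : ∀ x y : X, Φ x y = ε * Φ y x)
    (ξ : X →ₗ[F] W) (hξsurj : Function.Surjective ξ)
    (hEnd : ∀ x ∈ LinearMap.ker ξ, (∀ y ∈ LinearMap.ker ξ, Φ x y = 0) → x = 0)
    (ξs : W' →ₗ[F] X)
    (hξs : ∀ (w' : W') (x : X), Φ (ξs w') x = Bp w' (ξ x))
    -- υ is the inverse of ξ ξ* :
    (υ : W →ₗ[F] W')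
    (hυ1 : ∀ w : W, ξ (ξs (υ w)) = w) (hυ2 : ∀ w' : W', υ (ξ (ξs w')) = w')
    -- the orthogonal projections onto E = ker ξ and E^⊥ :
    (PE PEo : X →ₗ[F] X)
    (hPsum : PE + PEo = LinearMap.id)
    (hPE1 : ∀ x : X, PE x ∈ LinearMap.ker ξ)
    (hPE2 : ∀ x ∈ LinearMap.ker ξ, PE x = x)
    (hPEo : ∀ x : X, ∀ y ∈ LinearMap.ker ξ, Φ (PEo x) y = 0) :
    -- (a) ξ⁺ ξ = P_{E^⊥}
    (∀ x : X, ξs (υ (ξ x)) = PEo x) ∧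
    -- (b) Ξ is multiplicative on operators commuting with P_E
    (∀ A B : X →ₗ[F] X, (A ∘ₗ PE = PE ∘ₗ A ∨ B ∘ₗ PE = PE ∘ₗ B) →
      ξ ∘ₗ (A ∘ₗ B) ∘ₗ (ξs ∘ₗ υ) =
        (ξ ∘ₗ A ∘ₗ (ξs ∘ₗ υ)) ∘ₗ (ξ ∘ₗ B ∘ₗ (ξs ∘ₗ υ))) ∧
    -- (c) Ξ is a homomorphism on M_E ...
    (∀ h₁ h₂ : X ≃ₗ[F] X,
      (∀ x y : X, Φ (h₁ x) (h₁ y) = Φ x y) → (∀ x y : X, Φ (h₂ x) (h₂ y) = Φ x y) →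
      (∀ e ∈ LinearMap.ker ξ, h₁ e ∈ LinearMap.ker ξ) →
      (∀ e ∈ LinearMap.ker ξ, h₂ e ∈ LinearMap.ker ξ) →
      ξ ∘ₗ ((h₁.toLinearMap ∘ₗ h₂.toLinearMap) ∘ₗ (ξs ∘ₗ υ)) =
        (ξ ∘ₗ h₁.toLinearMap ∘ₗ (ξs ∘ₗ υ)) ∘ₗ (ξ ∘ₗ h₂.toLinearMap ∘ₗ (ξs ∘ₗ υ))) ∧
    -- ... with kernel H^{E^⊥} ...
    (∀ h : X ≃ₗ[F] X,
      (∀ x y : X, Φ (h x) (h y) = Φ x y) →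
      (∀ e ∈ LinearMap.ker ξ, h e ∈ LinearMap.ker ξ) →
      (ξ ∘ₗ h.toLinearMap ∘ₗ (ξs ∘ₗ υ) = LinearMap.id ↔
        ∀ x : X, (∀ y ∈ LinearMap.ker ξ, Φ x y = 0) → h x = x)) ∧
    -- ... and Ξ is injective on H^E
    (∀ h₁ h₂ : X ≃ₗ[F] X,
      (∀ x y : X, Φ (h₁ x) (h₁ y) = Φ x y) → (∀ x y : X, Φ (h₂ x) (h₂ y) = Φ x y) →
      (∀ e ∈ LinearMap.ker ξ, h₁ e = e) → (∀ e ∈ LinearMap.ker ξ, h₂ e = e) →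
      ξ ∘ₗ h₁.toLinearMap ∘ₗ (ξs ∘ₗ υ) = ξ ∘ₗ h₂.toLinearMap ∘ₗ (ξs ∘ₗ υ) →
      h₁ = h₂) := by
  -- E = ker ξ. Key nondegeneracy: hEnd.
  have hsum : ∀ x : X, PE x + PEo x = x := fun x => LinearMap.congr_fun hPsum x
  have hξPE : ∀ x : X, ξ (PE x) = 0 := fun x => LinearMap.mem_ker.mp (hPE1 x)
  have hξsperp : ∀ (w' : W') (e : X), e ∈ LinearMap.ker ξ → Φ (ξs w') e = 0 := by
    intro w' e he
    rw [hξs, LinearMap.mem_ker.mp he, map_zero]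
  -- (a)
  have ha : ∀ x : X, ξs (υ (ξ x)) = PEo x := by
    intro x
    have hd1 : ξs (υ (ξ x)) - PEo x ∈ LinearMap.ker ξ := by
      rw [LinearMap.mem_ker, map_sub, hυ1]
      have := congrArg ξ (hsum x)
      rw [map_add, hξPE, zero_add] at this
      rw [this, sub_self]
    have hd2 : ∀ e ∈ LinearMap.ker ξ, Φ (ξs (υ (ξ x)) - PEo x) e = 0 := by
      intro e he
      rw [map_sub, LinearMap.sub_apply, hξsperp _ _ he, hPEo _ _ he, sub_self]
    have := hEnd _ hd1 hd2
    exact sub_eq_zero.mp this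
  -- PE kills ξ⁺
  have hPEξp : ∀ w : W, PE (ξs (υ w)) = 0 := by
    intro w
    refine hEnd _ (hPE1 _) ?_
    intro e he
    have h1 : Φ (ξs (υ w)) e = 0 := hξsperp _ _ he
    have h2 : Φ (PEo (ξs (υ w))) e = 0 := hPEo _ _ he
    have := hsum (ξs (υ w))
    have : Φ (PE (ξs (υ w))) e + Φ (PEo (ξs (υ w))) e = Φ (ξs (υ w)) e := by
      rw [← LinearMap.add_apply, ← map_add, this]
    rw [h1, h2, add_zero] at this
    exact this
  -- (b)
  have hb : ∀ A B : X →ₗ[F] X, (A ∘ₗ PE = PE ∘ₗ A ∨ B ∘ₗ PE = PE ∘ₗ B) →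
      ξ ∘ₗ (A ∘ₗ B) ∘ₗ (ξs ∘ₗ υ) =
        (ξ ∘ₗ A ∘ₗ (ξs ∘ₗ υ)) ∘ₗ (ξ ∘ₗ B ∘ₗ (ξs ∘ₗ υ)) := by
    intro A B hcomm
    apply LinearMap.ext
    intro w
    simp only [LinearMap.comp_apply]
    rw [ha]
    set z := B (ξs (υ w)) with hz
    -- goal: ξ (A z) = ξ (A (PEo z)); suffices ξ (A (PE z)) = 0
    have hkey : ξ (A (PE z)) = 0 := by
      rcases hcomm with hA | hB
      · have := LinearMap.congr_fun hA z
        simp only [LinearMap.comp_apply] at this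
        rw [this, hξPE]
      · have := LinearMap.congr_fun hB (ξs (υ w))
        simp only [LinearMap.comp_apply] at this
        rw [hz, ← this, hPEξp, map_zero, map_zero, map_zero]
    have hzd : z = PE z + PEo z := (hsum z).symm
    calc ξ (A z) = ξ (A (PE z + PEo z)) := by rw [← hzd]
      _ = ξ (A (PE z)) + ξ (A (PEo z)) := by rw [map_add, map_add]
      _ = ξ (A (PEo z)) := by rw [hkey, zero_add]
  -- isometries preserving E: the inverse also preserves E
  have hinv : ∀ h : X ≃ₗ[F] X, (∀ e ∈ LinearMap.ker ξ, h e ∈ LinearMap.ker ξ) →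
      ∀ e ∈ LinearMap.ker ξ, h.symm e ∈ LinearMap.ker ξ := by
    intro h hE
    have hle : (LinearMap.ker ξ).map h.toLinearMap ≤ LinearMap.ker ξ := by
      rintro _ ⟨e, he, rfl⟩; exact hE e he
    have hfr : Module.finrank F ((LinearMap.ker ξ).map h.toLinearMap) =
        Module.finrank F (LinearMap.ker ξ) := LinearEquiv.finrank_map_eq h _
    have heq : (LinearMap.ker ξ).map h.toLinearMap = LinearMap.ker ξ :=
      Submodule.eq_of_le_of_finrank_le hle (le_of_eq hfr.symm)
    intro e he
    rw [← heq] at he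
    rcases he with ⟨e', he', hee'⟩
    have : h.symm e = e' := by rw [← hee']; exact h.symm_apply_apply e'
    rw [this]; exact he'
  -- isometries preserving E commute with PE
  have hcommPE : ∀ h : X ≃ₗ[F] X, (∀ x y : X, Φ (h x) (h y) = Φ x y) →
      (∀ e ∈ LinearMap.ker ξ, h e ∈ LinearMap.ker ξ) →
      ∀ x : X, PE (h x) = h (PE x) := by
    intro h hiso hE x
    have hd1 : PE (h x) - h (PE x) ∈ LinearMap.ker ξ := by
      exact Submodule.sub_mem _ (hPE1 _) (hE _ (hPE1 x))
    have hd2 : ∀ e ∈ LinearMap.ker ξ, Φ (PE (h x) - h (PE x)) e = 0 := by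
      intro e he
      have h1 : Φ (PE (h x)) e = Φ (h x) e := by
        have := hsum (h x)
        have h2 : Φ (PE (h x)) e + Φ (PEo (h x)) e = Φ (h x) e := by
          rw [← LinearMap.add_apply, ← map_add, this]
        rw [hPEo _ _ he, add_zero] at h2; exact h2
      have hsymm : h (h.symm e) = e := h.apply_symm_apply e
      have h3 : Φ (h (PE x)) e = Φ (PE x) (h.symm e) := by
        rw [← hsymm, hiso, hsymm]
      have hsinker := hinv h hE e he
      have h4 : Φ (PE x) (h.symm e) = Φ x (h.symm e) := by
        have h5 : Φ (PE x) (h.symm e) + Φ (PEo x) (h.symm e) = Φ x (h.symm e) := by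
          rw [← LinearMap.add_apply, ← map_add, hsum]
        rw [hPEo _ _ hsinker, add_zero] at h5; exact h5
      have h6 : Φ (h x) e = Φ x (h.symm e) := by
        conv_lhs => rw [← hsymm]
        exact hiso x (h.symm e)
      rw [map_sub, LinearMap.sub_apply, h1, h6, h3, h4, sub_self]
    exact sub_eq_zero.mp (hEnd _ hd1 hd2)
  refine ⟨ha, hb, ?_, ?_, ?_⟩
  · -- (c) homomorphism
    intro h₁ h₂ hi₁ hi₂ hE₁ hE₂
    apply hb
    right
    apply LinearMap.ext
    intro x
    simp only [LinearMap.comp_apply, LinearEquiv.coe_coe]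
    exact (hcommPE h₂ hi₂ hE₂ x).symm
  · -- (c) kernel
    intro h hiso hE
    constructor
    · intro hΞ x hx
      -- x ⊥ E, so PE x = 0 and x = PEo x = ξ⁺ ξ x
      have hPEx : PE x = 0 := by
        refine hEnd _ (hPE1 x) ?_
        intro e he
        have h5 : Φ (PE x) e + Φ (PEo x) e = Φ x e := by
          rw [← LinearMap.add_apply, ← map_add, hsum]
        rw [hPEo _ _ he, add_zero, hx e he] at h5; exact h5
      have hxeq : x = ξs (υ (ξ x)) := by
        rw [ha]
        have := hsum x; rw [hPEx, zero_add] at this; exact this.symm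
      have hΞx := LinearMap.congr_fun hΞ (ξ x)
      simp only [LinearMap.comp_apply, LinearMap.id_apply, LinearEquiv.coe_coe] at hΞx
      -- hΞx : ξ (h (ξs (υ (ξ x)))) = ξ x
      have hξhx : ξ (h x) = ξ x := by rw [← hxeq] at hΞx; exact hΞx
      have hPEohx : PEo (h x) = x := by
        rw [← ha, hξhx, ha]
        have := hsum x; rw [hPEx, zero_add] at this; exact this
      have hPEhx : PE (h x) = 0 := by
        rw [hcommPE h hiso hE, hPEx, map_zero]
      have := hsum (h x)
      rw [hPEhx, zero_add, hPEohx] at this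
      exact this.symm
    · intro hfix
      apply LinearMap.ext
      intro w
      simp only [LinearMap.comp_apply, LinearMap.id_apply, LinearEquiv.coe_coe]
      have : h (ξs (υ w)) = ξs (υ w) := hfix _ (fun y hy => hξsperp _ _ hy)
      rw [this, hυ1]
  · -- (c) injectivity on H^E
    intro h₁ h₂ hi₁ hi₂ hf₁ hf₂ hΞeq
    apply LinearEquiv.toLinearMap_injective
    apply LinearMap.ext
    intro x
    simp only [LinearEquiv.coe_coe]
    have hfe : ∀ (h : X ≃ₗ[F] X), (∀ x y : X, Φ (h x) (h y) = Φ x y) →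
        (∀ e ∈ LinearMap.ker ξ, h e = e) →
        ∀ e ∈ LinearMap.ker ξ, Φ (h (PEo x)) e = 0 := by
      intro h hiso hf e he
      calc Φ (h (PEo x)) e = Φ (h (PEo x)) (h e) := by rw [hf e he]
        _ = Φ (PEo x) e := hiso _ _
        _ = 0 := hPEo _ _ he
    have hd1 : h₁ (PEo x) - h₂ (PEo x) ∈ LinearMap.ker ξ := by
      rw [LinearMap.mem_ker, map_sub]
      have := LinearMap.congr_fun hΞeq (ξ x)
      simp only [LinearMap.comp_apply, LinearEquiv.coe_coe] at this
      rw [ha] at this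
      rw [this, sub_self]
    have hd2 : ∀ e ∈ LinearMap.ker ξ, Φ (h₁ (PEo x) - h₂ (PEo x)) e = 0 := by
      intro e he
      rw [map_sub, LinearMap.sub_apply, hfe h₁ hi₁ hf₁ e he, hfe h₂ hi₂ hf₂ e he,
        sub_self]
    have heq : h₁ (PEo x) = h₂ (PEo x) := sub_eq_zero.mp (hEnd _ hd1 hd2)
    calc h₁ x = h₁ (PE x + PEo x) := by rw [hsum]
      _ = h₁ (PE x) + h₁ (PEo x) := map_add _ _ _
      _ = PE x + h₂ (PEo x) := by rw [hf₁ _ (hPE1 x), heq]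
      _ = h₂ (PE x) + h₂ (PEo x) := by rw [hf₂ _ (hPE1 x)]
      _ = h₂ (PE x + PEo x) := (map_add _ _ _).symm
      _ = h₂ x := by rw [hsum]
end

section
/- In the setting above, define the bilinear form Ψ_W on W by Ψ_W(w₁, w₂) = Φ(ξ⁺w₁, ξ⁺w₂), and the antiautomorphism τ on End(W) by τ(A) = υ^{-1} A* υ. Then: (a) Ψ_W(w₁, w₂) = Φ(w₁, υw₂) and Ψ_W is nondegenerate; (b) Ψ_W(gw₁, w₂) = Ψ_W(w₁, τ(g)w₂) for all g ∈ End(W); (c) τ(Ξ(A)) = Ξ(A*) for all A ∈ End(X); (d) the fixed point group of the involution θ(g) = τ(g)^{-1} on GL(W) equals Isom(W, Ψ_W). -/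
/-- Define `Ψ_W(w₁, w₂) = Φ(ξ⁺ w₁, ξ⁺ w₂)` on `W` and the antiautomorphism
`τ(A) = υ⁻¹ A* υ` of `End(W)`.  Then: (a) `Ψ_W(w₁, w₂) = Φ(w₁, υ w₂)` and `Ψ_W` is
nondegenerate; (b) `Ψ_W(g w₁, w₂) = Ψ_W(w₁, τ(g) w₂)`; (c) `τ(Ξ(A)) = Ξ(A*)`; (d) the
fixed points of the involution `θ(g) = τ(g)⁻¹` on `GL(W)` are exactly `Isom(W, Ψ_W)`.
Here `ξ⁺ = ξ* υ`, `υ = (ξ ξ*)⁻¹`, `Ξ(A) = ξ A ξ⁺`, adjoints on `W` are taken via the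
pairing `Bp`, and `Φ(w, w') = ε Bp w' w`. -/
theorem twisted_form_and_involution
    (F : Type*) [Field F] (hchar : (2 : F) ≠ 0)
    (W W' X : Type*)
    [AddCommGroup W] [Module F W] [FiniteDimensional F W]
    [AddCommGroup W'] [Module F W'] [FiniteDimensional F W']
    [AddCommGroup X] [Module F X] [FiniteDimensional F X]
    (ε : F) (hε : ε = 1 ∨ ε = -1)
    (Bp : W' →ₗ[F] W →ₗ[F] F)
    (hBp1 : ∀ w' : W', (∀ w : W, Bp w' w = 0) → w' = 0)
    (hBp2 : ∀ w : W, (∀ w' : W', Bp w' w = 0) → w = 0)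
    (Φ : X →ₗ[F] X →ₗ[F] F)
    (hΦnd : ∀ x : X, (∀ y : X, Φ x y = 0) → x = 0)
    (hΦε : ∀ x y : X, Φ x y = ε * Φ y x)
    (ξ : X →ₗ[F] W) (hξsurj : Function.Surjective ξ)
    (hEnd : ∀ x ∈ LinearMap.ker ξ, (∀ y ∈ LinearMap.ker ξ, Φ x y = 0) → x = 0)
    (ξs : W' →ₗ[F] X)
    (hξs : ∀ (w' : W') (x : X), Φ (ξs w') x = Bp w' (ξ x))
    (υ : W →ₗ[F] W')
    (hυ1 : ∀ w : W, ξ (ξs (υ w)) = w) (hυ2 : ∀ w' : W', υ (ξ (ξs w')) = w') :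
    -- (a)
    ((∀ w₁ w₂ : W, Φ (ξs (υ w₁)) (ξs (υ w₂)) = ε * Bp (υ w₂) w₁) ∧
      (∀ w₁ : W, (∀ w₂ : W, Φ (ξs (υ w₁)) (ξs (υ w₂)) = 0) → w₁ = 0)) ∧
    -- (b)  Ψ_W(g w₁, w₂) = Ψ_W(w₁, τ(g) w₂)
    (∀ (g : W →ₗ[F] W) (gs : W' →ₗ[F] W'),
      (∀ (w' : W') (w : W), Bp (gs w') w = Bp w' (g w)) →
      ∀ w₁ w₂ : W,
        Φ (ξs (υ (g w₁))) (ξs (υ w₂)) =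
          Φ (ξs (υ w₁)) (ξs (υ (ξ (ξs (gs (υ w₂))))))) ∧
    -- (c)  τ(Ξ(A)) = Ξ(A*)
    (∀ (A As : X →ₗ[F] X), (∀ x y : X, Φ (A x) y = Φ x (As y)) →
      ∀ ΞAs : W' →ₗ[F] W',
        (∀ (w' : W') (w : W), Bp (ΞAs w') w = Bp w' (ξ (A (ξs (υ w))))) →
        ∀ w : W, ξ (ξs (ΞAs (υ w))) = ξ (As (ξs (υ w)))) ∧
    -- (d)  θ(g) = g  ↔  g ∈ Isom(W, Ψ_W)
    (∀ (g : W ≃ₗ[F] W) (gs : W' →ₗ[F] W'),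
      (∀ (w' : W') (w : W), Bp (gs w') w = Bp w' (g w)) →
      ((∀ w : W, ξ (ξs (gs (υ (g w)))) = w) ↔
        ∀ w₁ w₂ : W, Φ (ξs (υ (g w₁))) (ξs (υ (g w₂))) = Φ (ξs (υ w₁)) (ξs (υ w₂)))) := by
  have hε2 : ε * ε = 1 := by rcases hε with h | h <;> simp [h]
  have hΨ : ∀ a b : W, Φ (ξs (υ a)) (ξs (υ b)) = Bp (υ a) b := by
    intro a b; rw [hξs, hυ1]
  have hΨsym : ∀ a b : W, Bp (υ a) b = ε * Bp (υ b) a := by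
    intro a b; rw [← hΨ, hΦε, hΨ]
  have hυsurj : Function.Surjective υ := fun w' => ⟨ξ (ξs w'), hυ2 w'⟩
  have hndW : ∀ w : W, (∀ v : W, Bp (υ v) w = 0) → w = 0 := by
    intro w h
    apply hBp2
    intro w'
    obtain ⟨v, rfl⟩ := hυsurj w'
    exact h v
  refine ⟨⟨?_, ?_⟩, ?_, ?_, ?_⟩
  · intro w₁ w₂; rw [hΨ, hΨsym]
  · intro w₁ h
    have h0 : υ w₁ = 0 := by
      apply hBp1
      intro w
      have := h w
      rwa [hΨ] at this
    have := hυ1 w₁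
    rw [h0] at this
    simpa using this.symm
  · intro g gs hgs w₁ w₂
    rw [hΨ, hΨ, hΨsym (g w₁) w₂, ← hgs, hΨsym w₁, hυ2]
  · intro A As hA ΞAs hΞ w
    have key : ∀ w' : W', Bp w' (ξ (ξs (ΞAs (υ w)))) = Bp w' (ξ (As (ξs (υ w)))) := by
      intro w'
      rw [← hξs, ← hξs, ← hA, hΦε (ξs w'), hξs, hΞ, hυ2, ← hξs,
        hΦε (ξs (υ w)), ← mul_assoc, hε2, one_mul]
    have hsub : (∀ w' : W', Bp w' (ξ (ξs (ΞAs (υ w))) - ξ (As (ξs (υ w)))) = 0) := by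
      intro w'; rw [map_sub, key, sub_self]
    exact sub_eq_zero.mp (hBp2 _ hsub)
  · intro g gs hgs
    constructor
    · intro h w₁ w₂
      have key : ∀ w : W, gs (υ (g w)) = υ w := by
        intro w
        have := congrArg υ (h w)
        rwa [hυ2] at this
      rw [hΨ, hΨ, ← hgs, key]
    · intro h w
      have h' : ∀ w₁ w₂ : W, Bp (υ (g w₁)) (g w₂) = Bp (υ w₁) w₂ := by
        intro w₁ w₂
        have := h w₁ w₂
        rwa [hΨ, hΨ] at this
      have key : ∀ v : W, Bp (υ v) (ξ (ξs (gs (υ (g w)))) - w) = 0 := by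
        intro v
        rw [map_sub, hΨsym v, hυ2, hgs, h', ← hΨsym, sub_self]
      exact sub_eq_zero.mp (hndW _ key)
end

section
/- Let A ∈ End(X) commute with the projection P_E and suppose A restricted to E^⊥ is invertible. Then Ξ(A) = ξAξ⁺ is invertible in End(W), with inverse Ξ(B) where B|_{E^⊥} = (A|_{E^⊥})^{-1} and B|_E = 0. -/
/-- Let `A ∈ End(X)` commute with the projection `P_E` and suppose `A` restricted to `E^⊥`
is invertible, with inverse encoded by `Binv` (`Binv ∘ A = A ∘ Binv = id` on `E^⊥`, and
`Binv = 0` on `E`).  Then `Ξ(A) = ξ A ξ⁺` is invertible in `End(W)` with inverse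
`Ξ(Binv)`.  Here `ξ⁺ = ξs ∘ υ`, `ξ⁺ ξ = P_{E^⊥}`, `P_E + P_{E^⊥} = 1`. -/
theorem Xi_invertible
    (F : Type*) [Field F] (hchar : (2 : F) ≠ 0)
    (W W' X : Type*)
    [AddCommGroup W] [Module F W] [FiniteDimensional F W]
    [AddCommGroup W'] [Module F W'] [FiniteDimensional F W']
    [AddCommGroup X] [Module F X] [FiniteDimensional F X]
    (Φ : X →ₗ[F] X →ₗ[F] F)
    (ξ : X →ₗ[F] W) (hξsurj : Function.Surjective ξ)
    (ξs : W' →ₗ[F] X)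
    (υ : W →ₗ[F] W')
    (hυ1 : ∀ w : W, ξ (ξs (υ w)) = w) (hυ2 : ∀ w' : W', υ (ξ (ξs w')) = w')
    (PE PEo : X →ₗ[F] X)
    (hPsum : PE + PEo = LinearMap.id)
    (hPE1 : ∀ x : X, PE x ∈ LinearMap.ker ξ)
    (hPE2 : ∀ x ∈ LinearMap.ker ξ, PE x = x)
    (hPEo : ∀ x : X, ∀ y ∈ LinearMap.ker ξ, Φ (PEo x) y = 0)
    (hproj : ∀ x : X, ξs (υ (ξ x)) = PEo x)
    (A : X →ₗ[F] X) (hcomm : A ∘ₗ PE = PE ∘ₗ A)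
    (Binv : X →ₗ[F] X)
    (hB0 : ∀ x : X, Binv x = Binv (PEo x))
    (hB1 : ∀ x : X, Binv (A (PEo x)) = PEo x)
    (hB2 : ∀ x : X, A (Binv (PEo x)) = PEo x) :
    (ξ ∘ₗ A ∘ₗ (ξs ∘ₗ υ)) ∘ₗ (ξ ∘ₗ Binv ∘ₗ (ξs ∘ₗ υ)) = LinearMap.id ∧
      (ξ ∘ₗ Binv ∘ₗ (ξs ∘ₗ υ)) ∘ₗ (ξ ∘ₗ A ∘ₗ (ξs ∘ₗ υ)) = LinearMap.id ∧
      Function.Bijective (ξ ∘ₗ A ∘ₗ (ξs ∘ₗ υ)) := by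
  have hξPE : ∀ x : X, ξ (PE x) = 0 := fun x => hPE1 x
  have hPEo_eq : ∀ x : X, PEo x = x - PE x := by
    intro x
    have := congrArg (fun f : X →ₗ[F] X => f x) hPsum
    simp only [LinearMap.add_apply, LinearMap.id_apply] at this
    exact eq_sub_of_add_eq' this
  have hξPEo : ∀ x : X, ξ (PEo x) = ξ x := by
    intro x; rw [hPEo_eq, map_sub, hξPE, sub_zero]
  have hAPE : ∀ x : X, A (PE x) = PE (A x) := by
    intro x
    exact congrArg (fun f : X →ₗ[F] X => f x) hcomm
  have key1 : ∀ w : W, ξ (A (ξs (υ (ξ (Binv (ξs (υ w))))))) = w := by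
    intro w
    rw [hproj (Binv (ξs (υ w))), hB0 (ξs (υ w))]
    set x := ξs (υ w) with hx
    rw [hPEo_eq (Binv (PEo x)), map_sub, map_sub, hAPE, hξPE, sub_zero,
      hB2, hξPEo, hx, hυ1]
  have key2 : ∀ w : W, ξ (Binv (ξs (υ (ξ (A (ξs (υ w))))))) = w := by
    intro w
    rw [hproj (A (ξs (υ w)))]
    set x := ξs (υ w) with hx
    have : PEo (A x) = A (PEo x) := by
      rw [hPEo_eq (A x), hPEo_eq x, map_sub, hAPE]
    rw [this, hB1, hξPEo, hx, hυ1]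
  refine ⟨?_, ?_, ?_⟩
  · ext w
    simpa using key1 w
  · ext w
    simpa using key2 w
  · constructor
    · intro a b hab
      have := congrArg (fun w => ξ (Binv (ξs (υ w)))) hab
      simpa [key2 a, key2 b] using this
    · intro w
      exact ⟨ξ (Binv (ξs (υ w))), key1 w⟩
end

section
/- Let h ∈ M_E (an isometry of X preserving E and E^⊥) with (h − 1)|_{E^⊥} invertible, and set h_G = (Ξ(h−1))^{-1} ∈ GL(W). Then: (a) 1 + h_G + τ(h_G) = 0; (b) h_G · θ(h_G) = −Ξ(h^{-1}), where θ(g) = τ(g)^{-1}. -/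
/-- Let `h ∈ M_E` (an isometry of `X` preserving `E` and `E^⊥`) with `(h − 1)|_{E^⊥}`
invertible, and let `h_G = (Ξ(h−1))⁻¹ ∈ GL(W)`.  Then (a) `1 + h_G + τ(h_G) = 0`, and
(b) `h_G · θ(h_G) = −Ξ(h⁻¹)` where `θ(g) = τ(g)⁻¹` — equivalently
`h_G = −Ξ(h⁻¹) ∘ τ(h_G)`.  Here `Ξ(A) = ξ A ξ⁺`, `ξ⁺ = ξs ∘ υ`, `τ(g) = υ⁻¹ g* υ`
with `g*` the adjoint of `g` via the pairing `Bp`. -/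
theorem gamma_G_properties
    (F : Type*) [Field F] (hchar : (2 : F) ≠ 0)
    (W W' X : Type*)
    [AddCommGroup W] [Module F W] [FiniteDimensional F W]
    [AddCommGroup W'] [Module F W'] [FiniteDimensional F W']
    [AddCommGroup X] [Module F X] [FiniteDimensional F X]
    (ε : F) (hε : ε = 1 ∨ ε = -1)
    (Bp : W' →ₗ[F] W →ₗ[F] F)
    (hBp1 : ∀ w' : W', (∀ w : W, Bp w' w = 0) → w' = 0)
    (hBp2 : ∀ w : W, (∀ w' : W', Bp w' w = 0) → w = 0)
    (Φ : X →ₗ[F] X →ₗ[F] F)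
    (hΦnd : ∀ x : X, (∀ y : X, Φ x y = 0) → x = 0)
    (hΦε : ∀ x y : X, Φ x y = ε * Φ y x)
    (ξ : X →ₗ[F] W) (hξsurj : Function.Surjective ξ)
    (hEnd : ∀ x ∈ LinearMap.ker ξ, (∀ y ∈ LinearMap.ker ξ, Φ x y = 0) → x = 0)
    (ξs : W' →ₗ[F] X)
    (hξs : ∀ (w' : W') (x : X), Φ (ξs w') x = Bp w' (ξ x))
    (υ : W →ₗ[F] W')
    (hυ1 : ∀ w : W, ξ (ξs (υ w)) = w) (hυ2 : ∀ w' : W', υ (ξ (ξs w')) = w')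
    -- h ∈ M_E : an isometry preserving E = ker ξ and E^⊥
    (h : X ≃ₗ[F] X)
    (hiso : ∀ x y : X, Φ (h x) (h y) = Φ x y)
    (hstabE : ∀ e ∈ LinearMap.ker ξ, h e ∈ LinearMap.ker ξ)
    (hstabEo : ∀ x : X, (∀ y ∈ LinearMap.ker ξ, Φ x y = 0) →
      ∀ y ∈ LinearMap.ker ξ, Φ (h x) y = 0)
    -- h_G = (Ξ(h − 1))⁻¹, encoding the invertibility of (h − 1)|_{E^⊥} :
    (hG : W ≃ₗ[F] W)
    (hhG1 : ∀ w : W, hG (ξ (h (ξs (υ w))) - w) = w)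
    (hhG2 : ∀ w : W, ξ (h (ξs (υ (hG w)))) - hG w = w)
    -- the adjoint of h_G with respect to the pairing Bp :
    (hGs : W' →ₗ[F] W')
    (hhGs : ∀ (w' : W') (w : W), Bp (hGs w') w = Bp w' (hG w)) :
    -- (a)  1 + h_G + τ(h_G) = 0
    (∀ w : W, w + hG w + ξ (ξs (hGs (υ w))) = 0) ∧
    -- (b)  h_G · θ(h_G) = −Ξ(h⁻¹), i.e. h_G = −Ξ(h⁻¹) ∘ τ(h_G)
    (∀ w : W, hG w = - ξ (h.symm (ξs (υ (ξ (ξs (hGs (υ w)))))))) := by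
  -- basic orthogonality facts
  have hPE : ∀ (w' : W') (e : X), ξ e = 0 → Φ (ξs w') e = 0 := by
    intro w' e he
    rw [hξs, he, map_zero]
  have hEP : ∀ (w' : W') (e : X), ξ e = 0 → Φ e (ξs w') = 0 := by
    intro w' e he
    rw [hΦε, hPE w' e he, mul_zero]
  have horth : ∀ (w' : W'), ∀ y ∈ LinearMap.ker ξ, Φ (ξs w') y = 0 := by
    intro w' y hy
    exact hPE w' y (LinearMap.mem_ker.mp hy)
  have hsymmker : ∀ e : X, ξ e = 0 → ξ (h.symm e) = 0 := by
    intro e he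
    apply hBp2
    intro w'
    rw [← hξs]
    calc Φ (ξs w') (h.symm e) = Φ (h (ξs w')) (h (h.symm e)) := (hiso _ _).symm
      _ = Φ (h (ξs w')) e := by rw [h.apply_symm_apply]
      _ = 0 := hstabEo (ξs w') (horth w') e (LinearMap.mem_ker.mpr he)
  have hB : ∀ v w : W, Bp (υ v) w = Φ (ξs (υ v)) (ξs (υ w)) := by
    intro v w
    rw [hξs, hυ1]
  -- the main bilinear identity
  have hmain : ∀ v w : W,
      Φ (ξs (υ v)) (ξs (υ w)) + Φ (ξs (υ v)) (ξs (υ (hG w)))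
        + ε * Φ (ξs (υ w)) (ξs (υ (hG v))) = 0 := by
    intro v w
    set x := ξs (υ (hG v)) with hxdef
    set y := ξs (υ (hG w)) with hydef
    have hξx : ξ x = hG v := hυ1 _
    have hξy : ξ y = hG w := hυ1 _
    have hyv : ξ (h x - x) = v := by
      rw [map_sub, hξx]; exact hhG2 v
    have hyw : ξ (h y - y) = w := by
      rw [map_sub, hξy]; exact hhG2 w
    have he1 : ξ ((h x - x) - ξs (υ v)) = 0 := by
      rw [map_sub, hyv, hυ1, sub_self]
    have he2 : ξ ((h y - y) - ξs (υ w)) = 0 := by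
      rw [map_sub, hyw, hυ1, sub_self]
    -- h x - x and h y - y are (left-)orthogonal to the kernel
    have hyvE : ∀ e : X, ξ e = 0 → Φ (h x - x) e = 0 := by
      intro e he
      have h1 : Φ (h x) e = 0 :=
        hstabEo x (horth _) e (LinearMap.mem_ker.mpr he)
      have h2 : Φ x e = 0 := hPE _ _ he
      simp only [map_sub, LinearMap.sub_apply, h1, h2, sub_zero]
    have hywE : ∀ e : X, ξ e = 0 → Φ (h y - y) e = 0 := by
      intro e he
      have h1 : Φ (h y) e = 0 :=
        hstabEo y (horth _) e (LinearMap.mem_ker.mpr he)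
      have h2 : Φ y e = 0 := hPE _ _ he
      simp only [map_sub, LinearMap.sub_apply, h1, h2, sub_zero]
    -- h1 : pairing of (h-1)x with y
    have h1 : Φ (h x - x) y = Φ (ξs (υ v)) y := by
      have : Φ ((h x - x) - ξs (υ v)) y = 0 := by
        rw [hΦε, hPE _ _ he1, mul_zero]
      simp only [map_sub, LinearMap.sub_apply] at this ⊢
      linear_combination this
    have h2 : Φ x (h y - y) = Φ x (ξs (υ w)) := by
      have : Φ x ((h y - y) - ξs (υ w)) = 0 := hPE _ _ he2
      simp only [map_sub] at this ⊢
      linear_combination this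
    have h3 : Φ (h x - x) (h y - y) = Φ (ξs (υ v)) (ξs (υ w)) := by
      have ha : Φ ((h x - x) - ξs (υ v)) (h y - y) = 0 := by
        rw [hΦε, hywE _ he1, mul_zero]
      have hb : Φ (ξs (υ v)) ((h y - y) - ξs (υ w)) = 0 := hPE _ _ he2
      simp only [map_sub, LinearMap.sub_apply] at ha hb ⊢
      linear_combination ha + hb
    have hIso : Φ (h x - x) (h y - y) + Φ (h x - x) y + Φ x (h y - y) = 0 := by
      simp only [map_sub, LinearMap.sub_apply]
      linear_combination hiso x y
    linear_combination hIso - h3 - h1 - h2 - hΦε x (ξs (υ w))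
  -- part (a)
  have ha : ∀ w : W, w + hG w + ξ (ξs (hGs (υ w))) = 0 := by
    intro w
    apply hBp2
    intro w'
    rw [← hυ2 w']
    set v := ξ (ξs w') with hvdef
    have h4 : Bp (υ v) (ξ (ξs (hGs (υ w)))) = ε * Φ (ξs (υ w)) (ξs (υ (hG v))) := by
      rw [← hξs, hΦε, hξs, hυ1, hhGs, hB]
    simp only [map_add]
    rw [hB, hB, h4]
    exact hmain v w
  refine ⟨ha, ?_⟩
  intro w
  have key : ξ (ξs (hGs (υ w))) = -(w + hG w) :=
    eq_neg_of_add_eq_zero_right (ha w)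
  have hw : ξ (h (ξs (υ (hG w)))) = w + hG w := sub_eq_iff_eq_add.mp (hhG2 w)
  set y := ξs (υ (hG w)) with hydef
  rw [key, ← hw]
  set z := ξs (υ (ξ (h y))) with hzdef
  have hz : ξ (z - h y) = 0 := by rw [map_sub, hυ1, sub_self]
  have hcalc : ξ (h.symm z) = hG w := by
    calc ξ (h.symm z) = ξ (h.symm (h y + (z - h y))) := by rw [add_sub_cancel]
      _ = ξ y + ξ (h.symm (z - h y)) := by
          rw [map_add, h.symm_apply_apply, map_add]
      _ = hG w := by rw [hsymmker _ hz, add_zero, hυ1]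
  simp only [map_neg, neg_neg]
  exact hcalc.symm
end

section
/- Let h ∈ H^E (an isometry of X fixing E pointwise) with (h−1)|_{E^⊥} invertible. Set η(h) = (ξ(h−1)ξ⁺)^{-1} ξξ* : W' → W, and let ξ be as above. Then the pair (ξ, η(h)) satisfies η(h) + η(h)* + ξξ* = 0 (so n(ξ, η(h)) lies in the unipotent radical N), η(h) is invertible, and Norm(ξ, η(h)) = 1 + ξ* η(h)^{-1} ξ = h. In other words, h ↦ n(ξ, η(h)) is a section of the Norm map over such h. -/
/-- Section of the Norm map: let `h ∈ H^E` (an isometry of `X` fixing `E = ker ξ`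
pointwise) with `(h − 1)|_{E^⊥}` invertible, encoded by `h_G = (Ξ(h−1))⁻¹`.  Set
`η(h) = (ξ (h−1) ξ⁺)⁻¹ ξ ξ* = h_G ∘ (ξ ξ*) : W' → W`.  Then `(ξ, η(h))` satisfies
`η(h) + η(h)* + ξ ξ* = 0` (so `n(ξ, η(h)) ∈ N`), `η(h)` is invertible, and
`Norm(ξ, η(h)) = 1 + ξ* η(h)⁻¹ ξ = h`. -/
theorem section_of_norm
    (F : Type*) [Field F] (hchar : (2 : F) ≠ 0)
    (W W' X : Type*)
    [AddCommGroup W] [Module F W] [FiniteDimensional F W]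
    [AddCommGroup W'] [Module F W'] [FiniteDimensional F W']
    [AddCommGroup X] [Module F X] [FiniteDimensional F X]
    (ε : F) (hε : ε = 1 ∨ ε = -1)
    (Bp : W' →ₗ[F] W →ₗ[F] F)
    (hBp1 : ∀ w' : W', (∀ w : W, Bp w' w = 0) → w' = 0)
    (hBp2 : ∀ w : W, (∀ w' : W', Bp w' w = 0) → w = 0)
    (Φ : X →ₗ[F] X →ₗ[F] F)
    (hΦnd : ∀ x : X, (∀ y : X, Φ x y = 0) → x = 0)
    (hΦε : ∀ x y : X, Φ x y = ε * Φ y x)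
    (ξ : X →ₗ[F] W) (hξsurj : Function.Surjective ξ)
    (hEnd : ∀ x ∈ LinearMap.ker ξ, (∀ y ∈ LinearMap.ker ξ, Φ x y = 0) → x = 0)
    (ξs : W' →ₗ[F] X)
    (hξs : ∀ (w' : W') (x : X), Φ (ξs w') x = Bp w' (ξ x))
    (υ : W →ₗ[F] W')
    (hυ1 : ∀ w : W, ξ (ξs (υ w)) = w) (hυ2 : ∀ w' : W', υ (ξ (ξs w')) = w')
    -- h ∈ H^E with (h − 1)|_{E^⊥} invertible :
    (h : X ≃ₗ[F] X)
    (hiso : ∀ x y : X, Φ (h x) (h y) = Φ x y)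
    (hfixE : ∀ e ∈ LinearMap.ker ξ, h e = e)
    (hG : W ≃ₗ[F] W)
    (hhG1 : ∀ w : W, hG (ξ (h (ξs (υ w))) - w) = w)
    (hhG2 : ∀ w : W, ξ (h (ξs (υ (hG w)))) - hG w = w)
    -- the adjoint η(h)* of η(h) = h_G ∘ ξ ξ* :
    (ηs : W' →ₗ[F] W)
    (hηs : ∀ w₁' w₂' : W', ε * Bp w₂' (ηs w₁') = Bp w₁' (hG (ξ (ξs w₂')))) :
    -- n(ξ, η(h)) lies in the unipotent radical N :
    (∀ w' : W', hG (ξ (ξs w')) + ηs w' + ξ (ξs w') = 0) ∧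
    -- η(h) is invertible :
    Function.Bijective (fun w' : W' => hG (ξ (ξs w'))) ∧
    -- Norm(ξ, η(h)) = h :
    (∀ (x : X) (w' : W'), hG (ξ (ξs w')) = ξ x → x + ξs w' = h x) := by
  have hε2 : ε * ε = 1 := by rcases hε with h' | h' <;> norm_num [h']
  -- Part 3: Norm(ξ, η(h)) = h
  have part3 : ∀ (x : X) (w' : W'), hG (ξ (ξs w')) = ξ x → x + ξs w' = h x := by
    intro x w' hx
    set p := ξs (υ (ξ x)) with hp
    have h1 : ξ (h p) - ξ x = ξ (ξs w') := by
      have h2 := hhG2 (ξ (ξs w'))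
      rw [hx] at h2
      exact h2
    have hξp : ξ p = ξ x := hυ1 (ξ x)
    have hker : x - p ∈ LinearMap.ker ξ := by
      rw [LinearMap.mem_ker, map_sub, hξp, sub_self]
    have hfix : h (x - p) = x - p := hfixE _ hker
    have hs : h x = h p + (x - p) := by
      rw [← hfix, map_sub]; abel
    have hmz : h x - x - ξs w' ∈ LinearMap.ker ξ := by
      rw [LinearMap.mem_ker, map_sub, map_sub, hs, map_add, map_sub, hξp, ← h1]
      abel
    have hz : h x - x - ξs w' = 0 := by
      refine hEnd _ hmz ?_
      intro y hy
      have hy0 : ξ y = 0 := LinearMap.mem_ker.mp hy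
      have e1 : Φ (ξs w') y = 0 := by rw [hξs, hy0, map_zero]
      have e2 : Φ (h x) y = Φ x y := by
        conv_lhs => rw [← hfixE y hy]
        exact hiso x y
      simp only [map_sub, LinearMap.sub_apply, e1, e2, sub_self, sub_zero]
    have : h x = x + ξs w' := by rwa [sub_sub, sub_eq_zero] at hz
    exact this.symm
  refine ⟨?_, ?_, part3⟩
  · -- Part 1: η(h) + η(h)* + ξ ξ* = 0
    intro w'
    apply hBp2
    intro wa
    set x := ξs (υ (hG (ξ (ξs w')))) with hxdef
    have hxeq : hG (ξ (ξs w')) = ξ x := (hυ1 _).symm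
    have hx3 : x + ξs w' = h x := part3 x w' hxeq
    set xa := ξs (υ (hG (ξ (ξs wa)))) with hxadef
    have hxaeq : hG (ξ (ξs wa)) = ξ xa := (hυ1 _).symm
    have hxa3 : xa + ξs wa = h xa := part3 xa wa hxaeq
    have hiso1 : Φ (h xa) (h x) = Φ xa x := hiso xa x
    rw [← hxa3, ← hx3] at hiso1
    simp only [map_add, LinearMap.add_apply] at hiso1
    have key : Φ xa (ξs w') + Φ (ξs wa) x + Φ (ξs wa) (ξs w') = 0 := by
      linear_combination hiso1
    have e1 : Φ xa (ξs w') = Bp wa (ηs w') := by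
      rw [hΦε, hξs, ← hxaeq, ← hηs w' wa, ← mul_assoc, hε2, one_mul]
    have e2 : Φ (ξs wa) x = Bp wa (hG (ξ (ξs w'))) := by
      rw [hξs, ← hxeq]
    have e3 : Φ (ξs wa) (ξs w') = Bp wa (ξ (ξs w')) := hξs wa (ξs w')
    simp only [map_add]
    rw [← e1, ← e2, ← e3]
    linear_combination key
  · -- Part 2: η(h) is bijective
    constructor
    · intro a b hab
      simp only at hab
      have h1 := hG.injective hab
      have h2 := congrArg υ h1
      rwa [hυ2, hυ2] at h2
    · intro w
      exact ⟨υ (hG.symm w), by simp [hυ1]⟩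
end
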